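/- arXiv:2405.06878 — 5 statements merged into one kernel-verified Lean document; each statement's English description precedes it below -/
import Mathlib

section
/- Let T > 0, let c ∈ L∞((0,T)×Ω) and let u ∈ C¹([0,T]×[l₁,l₂]) satisfy u_t(t,x) ≥ d∫_Ω J(x−y)(u(t,y) − u(t,x))dy − q u_x(t,x) + c(t,x)u(t,x) for all (t,x) ∈ (0,T)×Ω, u(t,l₁) ≥ 0 for all t ∈ (0,T), and u(0,x) = u₀(x) ≥ 0 on [l₁,l₂]. Then u(t,x) ≥ 0 on [0,T]×[l₁,l₂]; moreover, if u₀ ≢ 0 on [l₁,l₂], then u(t,x) > 0 for all (t,x) ∈ (0,T]×(l₁,l₂]. -/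
open MeasureTheory

private lemma aux_deriv_nonpos_of_min {f : ℝ → ℝ} {f' a b x : ℝ}
    (hf : HasDerivWithinAt f f' (Set.Icc a b) x)
    (hmin : ∀ t ∈ Set.Icc a b, f x ≤ f t) (hax : a < x) (hxb : x ≤ b) : f' ≤ 0 := by
  have hne : (nhdsWithin x (Set.Ico a x)).NeBot := by
    rw [← mem_closure_iff_nhdsWithin_neBot, closure_Ico (ne_of_lt hax)]
    exact ⟨hax.le, le_refl x⟩
  have hsub : Set.Ico a x ⊆ Set.Icc a b \ {x} :=
    fun t ht => ⟨⟨ht.1, ht.2.le.trans hxb⟩, ne_of_lt ht.2⟩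
  have ht : Filter.Tendsto (slope f x) (nhdsWithin x (Set.Ico a x)) (nhds f') :=
    (hasDerivWithinAt_iff_tendsto_slope.1 hf).mono_left (nhdsWithin_mono x hsub)
  refine le_of_tendsto ht ?_
  filter_upwards [self_mem_nhdsWithin] with t htm
  have h1 : 0 ≤ f t - f x := sub_nonneg.2 (hmin t ⟨htm.1, htm.2.le.trans hxb⟩)
  have h2 : t - x < 0 := sub_neg.2 htm.2
  rw [slope_def_field]
  exact div_nonpos_of_nonneg_of_nonpos h1 h2.le

private lemma aux_nonneg_of_closure {α : Type*} [TopologicalSpace α] {f : α → ℝ} {s K : Set α}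
    (hc : ContinuousOn f K) (hsK : s ⊆ K) (h : ∀ p ∈ s, 0 ≤ f p) {p : α}
    (hpK : p ∈ K) (hp : p ∈ closure s) : 0 ≤ f p := by
  have hne : (nhdsWithin p s).NeBot := mem_closure_iff_nhdsWithin_neBot.1 hp
  have htend : Filter.Tendsto f (nhdsWithin p s) (nhds (f p)) := (hc p hpK).mono hsK
  refine ge_of_tendsto htend ?_
  filter_upwards [self_mem_nhdsWithin] with t htm using h t htm


set_option maxHeartbeats 8000000 in

/-- **Maximum principle for the nonlocal Neumann advection problem.**
If `u ∈ C¹([0,T]×[l₁,l₂])` satisfies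
`u_t ≥ d∫_Ω J(x−y)(u(t,y) − u(t,x))dy − q u_x + c(t,x)u` on `(0,T)×Ω`,
`u(t,l₁) ≥ 0` and `u(0,·) = u₀ ≥ 0`, then `u ≥ 0` on `[0,T]×[l₁,l₂]`;
moreover `u > 0` on `(0,T]×(l₁,l₂]` if `u₀ ≢ 0`. -/
theorem neumann_maximum_principle
    (l₁ l₂ d q T : ℝ) (J : ℝ → ℝ) (c u : ℝ → ℝ → ℝ) (u₀ : ℝ → ℝ)
    (hl : l₁ < l₂) (hd : 0 < d) (hq : 0 < q) (hT : 0 < T)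
    -- condition (J)
    (hJc : Continuous J) (hJnn : ∀ x, 0 ≤ J x) (hJ0 : 0 < J 0)
    (hJint : MeasureTheory.Integrable J) (hJ1 : (∫ x, J x) = 1)
    -- condition (J1)
    (hJsymm : ∀ x, J (-x) = J x) (hJbdd : ∃ C, ∀ x, J x ≤ C)
    -- c ∈ L∞((0,T)×Ω)
    (hc : ∃ C, ∀ t ∈ Set.Ioo 0 T, ∀ x ∈ Set.Ioo l₁ l₂, |c t x| ≤ C)
    -- u ∈ C¹([0,T]×[l₁,l₂])
    (hu : ContDiffOn ℝ 1 (fun p : ℝ × ℝ => u p.1 p.2) (Set.Icc 0 T ×ˢ Set.Icc l₁ l₂))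
    -- differential inequality
    (hineq : ∀ t ∈ Set.Ioo 0 T, ∀ x ∈ Set.Ioo l₁ l₂,
      deriv (fun s => u s x) t ≥
        d * (∫ y in Set.Ioo l₁ l₂, J (x - y) * (u t y - u t x))
          - q * deriv (fun y => u t y) x + c t x * u t x)
    -- boundary condition
    (hbd : ∀ t ∈ Set.Ioo 0 T, 0 ≤ u t l₁)
    -- initial condition
    (hinit : ∀ x ∈ Set.Icc l₁ l₂, u 0 x = u₀ x)
    (hu₀nn : ∀ x ∈ Set.Icc l₁ l₂, 0 ≤ u₀ x) :
    (∀ t ∈ Set.Icc 0 T, ∀ x ∈ Set.Icc l₁ l₂, 0 ≤ u t x) ∧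
      ((∃ x ∈ Set.Icc l₁ l₂, u₀ x ≠ 0) →
        ∀ t ∈ Set.Ioc 0 T, ∀ x ∈ Set.Ioc l₁ l₂, 0 < u t x) := by
    classical
  obtain ⟨C₀, hC₀⟩ := hc
  set C : ℝ := max C₀ 0 with hCdef
  have hCnn : 0 ≤ C := le_max_right _ _
  have hCb : ∀ t ∈ Set.Ioo 0 T, ∀ x ∈ Set.Ioo l₁ l₂, |c t x| ≤ C := fun t ht x hx =>
    (hC₀ t ht x hx).trans (le_max_left _ _)
  set K : Set (ℝ × ℝ) := Set.Icc 0 T ×ˢ Set.Icc l₁ l₂ with hKdef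
  set U : ℝ × ℝ → ℝ := fun p => u p.1 p.2 with hUdef
  have hKud : UniqueDiffOn ℝ K := (uniqueDiffOn_Icc hT).prod (uniqueDiffOn_Icc hl)
  have hUc : ContinuousOn U K := hu.continuousOn
  have hIK : Set.Ioo 0 T ×ˢ Set.Ioo l₁ l₂ = interior K := by
    rw [hKdef, interior_prod_eq, interior_Icc, interior_Icc]
  have hOK : Set.Ioo 0 T ×ˢ Set.Ioo l₁ l₂ ⊆ K := by
    rw [hKdef]; exact Set.prod_mono Set.Ioo_subset_Icc_self Set.Ioo_subset_Icc_self
  set D₁ : ℝ × ℝ → ℝ := fun p => fderivWithin ℝ U K p (1, 0) with hD₁def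
  set D₂ : ℝ × ℝ → ℝ := fun p => fderivWithin ℝ U K p (0, 1) with hD₂def
  have hD₁c : ContinuousOn D₁ K :=
    (hu.continuousOn_fderivWithin hKud le_rfl).clm_apply continuousOn_const
  have hD₂c : ContinuousOn D₂ K :=
    (hu.continuousOn_fderivWithin hKud le_rfl).clm_apply continuousOn_const
  have hdiffAt : ∀ t x, (t, x) ∈ Set.Ioo 0 T ×ˢ Set.Ioo l₁ l₂ →
      HasFDerivAt U (fderivWithin ℝ U K (t, x)) (t, x) := by
    intro t x hp
    have hmem : K ∈ nhds (t, x) := by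
      rw [hKdef]
      exact Filter.mem_of_superset (((isOpen_Ioo.prod isOpen_Ioo).mem_nhds hp)) hOK
    have hda : DifferentiableAt ℝ U (t, x) := (hu.contDiffAt hmem).differentiableAt one_ne_zero
    rw [hD₁def] at *
    rw [hda.fderivWithin (hKud _ (hOK hp))]
    exact hda.hasFDerivAt
  have hpart1 : ∀ t x, (t, x) ∈ Set.Ioo 0 T ×ˢ Set.Ioo l₁ l₂ →
      HasDerivAt (fun s => u s x) (D₁ (t, x)) t := by
    intro t x hp
    have h1 : HasDerivAt (fun s : ℝ => (s, x)) ((1:ℝ), (0:ℝ)) t :=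
      (hasDerivAt_id t).prodMk (hasDerivAt_const t x)
    exact (hdiffAt t x hp).comp_hasDerivAt t h1
  have hpart2 : ∀ t x, (t, x) ∈ Set.Ioo 0 T ×ˢ Set.Ioo l₁ l₂ →
      HasDerivAt (fun y => u t y) (D₂ (t, x)) x := by
    intro t x hp
    have h1 : HasDerivAt (fun y : ℝ => (t, y)) ((0:ℝ), (1:ℝ)) x :=
      (hasDerivAt_const x t).prodMk (hasDerivAt_id x)
    exact (hdiffAt t x hp).comp_hasDerivAt x h1
  have hineq' : ∀ t ∈ Set.Ioo 0 T, ∀ x ∈ Set.Ioo l₁ l₂,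
      d * (∫ y in Set.Ioo l₁ l₂, J (x - y) * (u t y - u t x)) - q * D₂ (t, x) + c t x * u t x
        ≤ D₁ (t, x) := by
    intro t ht x hx
    have h := hineq t ht x hx
    rwa [(hpart1 t x ⟨ht, hx⟩).deriv, (hpart2 t x ⟨ht, hx⟩).deriv] at h
  -- slice continuity and integrability
  have hslice : ∀ t ∈ Set.Icc 0 T, ContinuousOn (fun y => u t y) (Set.Icc l₁ l₂) := by
    intro t ht
    have : ContinuousOn (fun y : ℝ => U (t, y)) (Set.Icc l₁ l₂) :=
      hUc.comp (Continuous.continuousOn (by fun_prop)) (fun y hy => ⟨ht, hy⟩)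
    exact this
  have hintJu : ∀ t ∈ Set.Icc 0 T, ∀ x : ℝ,
      IntegrableOn (fun y => J (x - y) * u t y) (Set.Ioo l₁ l₂) := by
    intro t ht x
    have hcont : ContinuousOn (fun y => J (x - y) * u t y) (Set.Icc l₁ l₂) :=
      ((hJc.comp (continuous_const.sub continuous_id)).continuousOn).mul (hslice t ht)
    exact (hcont.integrableOn_Icc).mono_set Set.Ioo_subset_Icc_self
  -- the function W
  set W : ℝ → ℝ := fun x => ∫ y in Set.Ioo l₁ l₂, J (x - y) with hWdef
  have hii : ∀ a b : ℝ, IntervalIntegrable J volume a b := fun a b => hJint.intervalIntegrable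
  have hWc : Continuous W := by
    have hprim : Continuous fun b : ℝ => ∫ s in (0:ℝ)..b, J s :=
      intervalIntegral.continuous_primitive hii 0
    have hW : W = fun x => (∫ s in (0:ℝ)..(x - l₁), J s) - ∫ s in (0:ℝ)..(x - l₂), J s := by
      funext x
      have h1 : W x = ∫ y in l₁..l₂, J (x - y) := by
        rw [hWdef, intervalIntegral.integral_of_le hl.le, integral_Ioc_eq_integral_Ioo]
      rw [h1, intervalIntegral.integral_comp_sub_left J x,
        ← intervalIntegral.integral_interval_sub_left (hii _ _) (hii _ _)]
    rw [hW]
    exact (hprim.comp (continuous_id.sub continuous_const)).sub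
      (hprim.comp (continuous_id.sub continuous_const))
  have hWnn : ∀ x, 0 ≤ W x := fun x => setIntegral_nonneg measurableSet_Ioo (fun y _ => hJnn _)
  have hW1 : ∀ x, W x ≤ 1 := by
    intro x
    have hint : Integrable (fun y => J (x - y)) := by
      have := hJint.comp_sub_left x
      exact this
    have h1 : W x ≤ ∫ y, J (x - y) :=
      setIntegral_le_integral hint (Filter.Eventually.of_forall (fun y => hJnn _))
    have h2 : (∫ y, J (x - y)) = 1 := by rw [integral_sub_left_eq_self J volume x]; exact hJ1
    linarith
  have hsplit : ∀ t ∈ Set.Icc 0 T, ∀ x : ℝ,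
      (∫ y in Set.Ioo l₁ l₂, J (x - y) * (u t y - u t x))
        = (∫ y in Set.Ioo l₁ l₂, J (x - y) * u t y) - u t x * W x := by
    intro t ht x
    have h1 : IntegrableOn (fun y => J (x - y) * u t y) (Set.Ioo l₁ l₂) volume := hintJu t ht x
    have h2 : IntegrableOn (fun y => J (x - y) * u t x) (Set.Ioo l₁ l₂) volume := by
      have hcont : ContinuousOn (fun y => J (x - y) * u t x) (Set.Icc l₁ l₂) :=
        ((hJc.comp (continuous_const.sub continuous_id)).continuousOn).mul continuousOn_const
      exact (hcont.integrableOn_Icc).mono_set Set.Ioo_subset_Icc_self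
    have h3 : (∫ y in Set.Ioo l₁ l₂, J (x - y) * (u t y - u t x))
        = ∫ y in Set.Ioo l₁ l₂, (J (x - y) * u t y - J (x - y) * u t x) := by
      congr 1; funext y; ring
    rw [h3, integral_sub h1 h2, integral_mul_const]
    rw [hWdef]; ring
  have main1 : ∀ t ∈ Set.Icc 0 T, ∀ x ∈ Set.Icc l₁ l₂, 0 ≤ u t x := by
    by_contra hcon
    push_neg at hcon
    obtain ⟨t₁, ht₁, x₁, hx₁, hneg⟩ := hcon
    set k : ℝ := C + 1 with hkdef
    set v : ℝ × ℝ → ℝ := fun p => Real.exp (-k * p.1) * U p with hvdef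
    have hvc : ContinuousOn v K :=
      ((Real.continuous_exp.comp (continuous_const.mul continuous_fst)).continuousOn).mul hUc
    have hKcomp : IsCompact K := isCompact_Icc.prod isCompact_Icc
    have hKne : K.Nonempty := ⟨(0, l₁), ⟨⟨le_refl 0, hT.le⟩, ⟨le_refl l₁, hl.le⟩⟩⟩
    obtain ⟨p₀, hp₀K, hp₀min⟩ := hKcomp.exists_isMinOn hKne hvc
    obtain ⟨t₀, x₀⟩ := p₀
    obtain ⟨ht₀K', hx₀K'⟩ := hp₀K
    have ht₀K : t₀ ∈ Set.Icc 0 T := ht₀K'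
    have hx₀K : x₀ ∈ Set.Icc l₁ l₂ := hx₀K'
    set m : ℝ := v (t₀, x₀) with hmdef
    have hmin : ∀ s ∈ Set.Icc 0 T, ∀ y ∈ Set.Icc l₁ l₂, m ≤ v (s, y) :=
      fun s hs y hy => hp₀min (Set.mk_mem_prod hs hy)
    have hexp_cancel : ∀ s : ℝ, Real.exp (k * s) * Real.exp (-k * s) = 1 := by
      intro s; rw [← Real.exp_add]; ring_nf; exact Real.exp_zero
    have hm_neg : m < 0 := by
      have h := hmin t₁ ht₁ x₁ hx₁
      have : v (t₁, x₁) < 0 :=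
        mul_neg_of_pos_of_neg (Real.exp_pos _) hneg
      linarith
    have huge : ∀ s ∈ Set.Icc 0 T, ∀ y ∈ Set.Icc l₁ l₂, Real.exp (k * s) * m ≤ u s y := by
      intro s hs y hy
      have h := hmin s hs y hy
      have h2 := mul_le_mul_of_nonneg_left h (Real.exp_pos (k * s)).le
      have h3 : Real.exp (k * s) * v (s, y) = u s y := by
        rw [hvdef]
        show Real.exp (k * s) * (Real.exp (-k * s) * u s y) = u s y
        rw [← mul_assoc, hexp_cancel]; ring
      linarith
    have ht₀pos : 0 < t₀ := by
      rcases lt_or_eq_of_le ht₀K.1 with h | h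
      · exact h
      · exfalso
        have : m = u 0 x₀ := by
          rw [hmdef]
          show Real.exp (-k * t₀) * u t₀ x₀ = u 0 x₀
          rw [← h]; simp
        have h2 : 0 ≤ u 0 x₀ := by rw [hinit x₀ hx₀K]; exact hu₀nn x₀ hx₀K
        linarith
    have hbd' : ∀ s ∈ Set.Icc 0 T, 0 < s → 0 ≤ u s l₁ := by
      intro s hs hspos
      rcases lt_or_eq_of_le hs.2 with h | h
      · exact hbd s ⟨hspos, h⟩
      · -- s = T : take limits from Ioo 0 T
        have hcont : ContinuousWithinAt (fun r => u r l₁) (Set.Icc 0 T) s := by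
          have : ContinuousWithinAt (fun r : ℝ => U (r, l₁)) (Set.Icc 0 T) s :=
            (hUc.comp ((continuous_id.prodMk continuous_const).continuousOn)
              (fun r hr => ⟨hr, ⟨le_refl l₁, hl.le⟩⟩)) s hs
          exact this
        have hne : (nhdsWithin s (Set.Ioo 0 T)).NeBot := by
          rw [← mem_closure_iff_nhdsWithin_neBot, closure_Ioo (ne_of_lt hT)]
          exact hs
        refine ge_of_tendsto (hcont.mono Set.Ioo_subset_Icc_self) ?_
        filter_upwards [self_mem_nhdsWithin] with r hr using hbd r hr
    have hx₀pos : l₁ < x₀ := by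
      rcases lt_or_eq_of_le hx₀K.1 with h | h
      · exact h
      · exfalso
        have h2 : 0 ≤ u t₀ x₀ := by rw [← h]; exact hbd' t₀ ht₀K ht₀pos
        have h3 : m = Real.exp (-k * t₀) * u t₀ x₀ := by rw [hmdef, hvdef]
        nlinarith [Real.exp_pos (-k * t₀)]
    -- the auxiliary continuous function R
    set R : ℝ × ℝ → ℝ := fun p =>
      D₁ p + q * D₂ p - d * W p.2 * (Real.exp (k * p.1) * m - U p) + C * |U p| with hRdef
    have hRc : ContinuousOn R K := by
      refine ContinuousOn.add (ContinuousOn.sub (hD₁c.add (continuousOn_const.mul hD₂c)) ?_) ?_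
      · exact (continuousOn_const.mul ((hWc.comp continuous_snd).continuousOn)).mul
          (((Real.continuous_exp.comp (continuous_const.mul continuous_fst)).continuousOn).mul
            continuousOn_const |>.sub hUc)
      · exact continuousOn_const.mul hUc.abs
    have hRnn : ∀ p ∈ Set.Ioo 0 T ×ˢ Set.Ioo l₁ l₂, 0 ≤ R p := by
      rintro ⟨t, x⟩ ⟨ht, hx⟩
      have hI := hineq' t ht x hx
      have htI : t ∈ Set.Icc 0 T := Set.Ioo_subset_Icc_self ht
      rw [hsplit t htI x] at hI
      have hmono : Real.exp (k * t) * m * W x ≤ ∫ y in Set.Ioo l₁ l₂, J (x - y) * u t y := by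
        have h2 : IntegrableOn (fun y => J (x - y) * (Real.exp (k * t) * m)) (Set.Ioo l₁ l₂) := by
          have hcont : ContinuousOn (fun y => J (x - y) * (Real.exp (k * t) * m)) (Set.Icc l₁ l₂) :=
            ((hJc.comp (continuous_const.sub continuous_id)).continuousOn).mul continuousOn_const
          exact (hcont.integrableOn_Icc).mono_set Set.Ioo_subset_Icc_self
        have h3 : (∫ y in Set.Ioo l₁ l₂, J (x - y) * (Real.exp (k * t) * m))
            ≤ ∫ y in Set.Ioo l₁ l₂, J (x - y) * u t y := by
          refine setIntegral_mono_on h2 (hintJu t htI x) measurableSet_Ioo ?_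
          intro y hy
          exact mul_le_mul_of_nonneg_left
            (huge t htI y (Set.Ioo_subset_Icc_self hy)) (hJnn _)
        have h4 : (∫ y in Set.Ioo l₁ l₂, J (x - y) * (Real.exp (k * t) * m))
            = Real.exp (k * t) * m * W x := by
          rw [integral_mul_const, hWdef]; ring
        linarith
      have habs : -(C * |u t x|) ≤ c t x * u t x := by
        have h5 : |c t x * u t x| ≤ C * |u t x| := by
          rw [abs_mul]
          exact mul_le_mul_of_nonneg_right (hCb t ht x hx) (abs_nonneg _)
        have := neg_abs_le (c t x * u t x)
        linarith
      show 0 ≤ D₁ (t, x) + q * D₂ (t, x)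
        - d * W x * (Real.exp (k * t) * m - u t x) + C * |u t x|
      nlinarith [mul_le_mul_of_nonneg_left hmono hd.le]
    have hR₀ : 0 ≤ R (t₀, x₀) := by
      refine aux_nonneg_of_closure hRc hOK hRnn (Set.mk_mem_prod ht₀K hx₀K) ?_
      have : closure (Set.Ioo 0 T ×ˢ Set.Ioo l₁ l₂) = K := by
        rw [closure_prod_eq, closure_Ioo (ne_of_lt hT), closure_Ioo (ne_of_lt hl), hKdef]
      rw [this]
      exact Set.mk_mem_prod ht₀K hx₀K
    -- derivative bounds at the minimum point
    have hFW : HasFDerivWithinAt U (fderivWithin ℝ U K (t₀, x₀)) K (t₀, x₀) :=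
      ((hu.differentiableOn one_ne_zero) _ (Set.mk_mem_prod ht₀K hx₀K)).hasFDerivWithinAt
    have hUt : HasDerivWithinAt (fun s => u s x₀) (D₁ (t₀, x₀)) (Set.Icc 0 T) t₀ := by
      have hcurve : HasDerivWithinAt (fun s : ℝ => (s, x₀)) ((1:ℝ), (0:ℝ)) (Set.Icc 0 T) t₀ :=
        ((hasDerivAt_id t₀).prodMk (hasDerivAt_const t₀ x₀)).hasDerivWithinAt
      exact hFW.comp_hasDerivWithinAt t₀ hcurve (fun s hs => (⟨hs, hx₀K⟩ : (s, x₀) ∈ K))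
    have hUx : HasDerivWithinAt (fun y => u t₀ y) (D₂ (t₀, x₀)) (Set.Icc l₁ l₂) x₀ := by
      have hcurve : HasDerivWithinAt (fun y : ℝ => (t₀, y)) ((0:ℝ), (1:ℝ)) (Set.Icc l₁ l₂) x₀ :=
        ((hasDerivAt_const x₀ t₀).prodMk (hasDerivAt_id x₀)).hasDerivWithinAt
      exact hFW.comp_hasDerivWithinAt x₀ hcurve (fun y hy => ⟨ht₀K, hy⟩)
    have hExp : HasDerivWithinAt (fun s : ℝ => Real.exp (-k * s))
        (-k * Real.exp (-k * t₀)) (Set.Icc 0 T) t₀ := by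
      have h := (Real.hasDerivAt_exp (-k * t₀)).comp t₀ ((hasDerivAt_id t₀).const_mul (-k))
      have h2 : HasDerivAt (fun s : ℝ => Real.exp (-k * s)) (Real.exp (-k * t₀) * (-k * 1)) t₀ := h
      simpa [mul_comm] using h2.hasDerivWithinAt
    have hφ : HasDerivWithinAt (fun s => Real.exp (-k * s) * u s x₀)
        (-k * Real.exp (-k * t₀) * u t₀ x₀ + Real.exp (-k * t₀) * D₁ (t₀, x₀))
        (Set.Icc 0 T) t₀ := hExp.mul hUt
    have hD1le : D₁ (t₀, x₀) ≤ k * u t₀ x₀ := by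
      have h0 : -k * Real.exp (-k * t₀) * u t₀ x₀ + Real.exp (-k * t₀) * D₁ (t₀, x₀) ≤ 0 := by
        refine aux_deriv_nonpos_of_min hφ ?_ ht₀pos ht₀K.2
        intro s hs
        have := hmin s hs x₀ hx₀K
        exact this
      nlinarith [Real.exp_pos (-k * t₀)]
    have hD2le : D₂ (t₀, x₀) ≤ 0 := by
      refine aux_deriv_nonpos_of_min hUx ?_ hx₀pos hx₀K.2
      intro y hy
      have h := hmin t₀ ht₀K y hy
      have h2 := mul_le_mul_of_nonneg_left h (Real.exp_pos (k * t₀)).le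
      have he : ∀ z : ℝ, Real.exp (k * t₀) * (Real.exp (-k * t₀) * z) = z := by
        intro z; rw [← mul_assoc, hexp_cancel]; ring
      show u t₀ x₀ ≤ u t₀ y
      have h3 : Real.exp (k * t₀) * v (t₀, x₀) = u t₀ x₀ := he _
      have h4 : Real.exp (k * t₀) * v (t₀, y) = u t₀ y := he _
      rw [hmdef] at h2
      linarith
    -- contradiction
    have hu0 : u t₀ x₀ = Real.exp (k * t₀) * m := by
      have : Real.exp (k * t₀) * v (t₀, x₀) = u t₀ x₀ := by
        show Real.exp (k * t₀) * (Real.exp (-k * t₀) * u t₀ x₀) = u t₀ x₀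
        rw [← mul_assoc, hexp_cancel]; ring
      rw [hmdef]; linarith
    have hu0neg : u t₀ x₀ < 0 := by
      rw [hu0]; exact mul_neg_of_pos_of_neg (Real.exp_pos _) hm_neg
    have hRval : R (t₀, x₀)
        = D₁ (t₀, x₀) + q * D₂ (t₀, x₀) + C * |u t₀ x₀| := by
      show D₁ (t₀, x₀) + q * D₂ (t₀, x₀)
        - d * W x₀ * (Real.exp (k * t₀) * m - u t₀ x₀) + C * |u t₀ x₀| = _
      rw [hu0]; ring
    rw [hRval, abs_of_neg hu0neg] at hR₀
    have hqD2 : q * D₂ (t₀, x₀) ≤ 0 := mul_nonpos_of_nonneg_of_nonpos hq.le hD2le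
    have : (0:ℝ) < 0 := by
      have hk : k = C + 1 := hkdef
      nlinarith
    exact absurd this (lt_irrefl 0)
  refine ⟨main1, ?_⟩
  rintro ⟨xb, hxbI, hxb0⟩ t ht x hx
  -- decay constant
  set Kc : ℝ := d + C with hKcdef
  have hKcnn : 0 ≤ Kc := by rw [hKcdef]; linarith
  -- δ such that J ≥ J 0 / 2 on [-δ, δ]
  obtain ⟨δ, hδpos, hδJ⟩ : ∃ δ > 0, ∀ z : ℝ, |z| ≤ δ → J 0 / 2 ≤ J z := by
    have hev : ∀ᶠ z in nhds (0:ℝ), J 0 / 2 < J z :=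
      (hJc.tendsto 0).eventually (eventually_gt_nhds (by linarith))
    rw [Metric.eventually_nhds_iff] at hev
    obtain ⟨ε, hεpos, hε⟩ := hev
    refine ⟨ε / 2, by linarith, fun z hz => ?_⟩
    exact (hε (by rw [Real.dist_eq, sub_zero]; linarith)).le
  -- master monotonicity lemma along characteristics
  have hM : ∀ t₀ x₀ a b m' : ℝ, 0 ≤ a → a < b → b ≤ T → 0 ≤ m' →
      l₁ ≤ x₀ - q * (t₀ - a) → x₀ - q * (t₀ - b) ≤ l₂ →
      (∀ s ∈ Set.Ioo a b, x₀ - q * (t₀ - s) ∈ Set.Ioo l₁ l₂) →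
      (∀ s ∈ Set.Ioo a b, m' ≤ ∫ y in Set.Ioo l₁ l₂, J (x₀ - q * (t₀ - s) - y) * u s y) →
      Real.exp (Kc * a) * u a (x₀ - q * (t₀ - a)) + d * m' * (b - a)
        ≤ Real.exp (Kc * b) * u b (x₀ - q * (t₀ - b)) := by
    intro t₀ x₀ a b m' ha hab hbT hm' hla hbl hintio hphi
    set ℓ : ℝ → ℝ := fun s => x₀ - q * (t₀ - s) with hℓdef
    have hℓmono : ∀ s₁ s₂ : ℝ, s₁ ≤ s₂ → ℓ s₁ ≤ ℓ s₂ := by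
      intro s₁ s₂ h
      show x₀ - q * (t₀ - s₁) ≤ x₀ - q * (t₀ - s₂)
      nlinarith
    have hℓIcc : ∀ s ∈ Set.Icc a b, ℓ s ∈ Set.Icc l₁ l₂ := fun s hs =>
      ⟨le_trans hla (hℓmono a s hs.1), le_trans (hℓmono s b hs.2) hbl⟩
    set g : ℝ → ℝ := fun s => Real.exp (Kc * s) * u s (ℓ s) - d * m' * s with hgdef
    have hgc : ContinuousOn g (Set.Icc a b) := by
      refine ContinuousOn.sub (ContinuousOn.mul ?_ ?_) (Continuous.continuousOn (by fun_prop))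
      · exact (Real.continuous_exp.comp (continuous_const.mul continuous_id)).continuousOn
      · have hℓcont : Continuous ℓ :=
          continuous_const.sub (continuous_const.mul (continuous_const.sub continuous_id))
        have : ContinuousOn (fun s : ℝ => U (s, ℓ s)) (Set.Icc a b) := by
          refine hUc.comp ((continuous_id.prodMk hℓcont).continuousOn) ?_
          intro s hs
          exact ⟨⟨le_trans ha hs.1, le_trans hs.2 hbT⟩, hℓIcc s hs⟩
        exact this
    have hgderiv : ∀ s ∈ Set.Ioo a b, HasDerivAt g
        (Kc * Real.exp (Kc * s) * u s (ℓ s)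
          + Real.exp (Kc * s) * (D₁ (s, ℓ s) + q * D₂ (s, ℓ s)) - d * m') s := by
      intro s hs
      have hsT : s ∈ Set.Ioo 0 T := ⟨lt_of_le_of_lt ha hs.1, lt_of_lt_of_le hs.2 hbT⟩
      have hmem : (s, ℓ s) ∈ Set.Ioo 0 T ×ˢ Set.Ioo l₁ l₂ :=
        Set.mk_mem_prod hsT (hintio s hs)
      have hℓd : HasDerivAt ℓ q s := by
        have h2 : HasDerivAt (fun z : ℝ => q * z + (x₀ - q * t₀)) (q * 1) s :=
          ((hasDerivAt_id s).const_mul q).add_const _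
        have h3 : (fun z : ℝ => q * z + (x₀ - q * t₀)) = fun z : ℝ => x₀ - q * (t₀ - z) := by
          funext z; ring
        rw [h3] at h2
        simpa using h2
      have hcurve : HasDerivAt (fun z : ℝ => (z, ℓ z)) ((1:ℝ), q) s :=
        (hasDerivAt_id s).prodMk hℓd
      have hcomp : HasDerivAt (fun z => u z (ℓ z)) (fderivWithin ℝ U K (s, ℓ s) (1, q)) s :=
        by have := (hdiffAt s (ℓ s) hmem).comp_hasDerivAt s hcurve; exact this
      have hlin : fderivWithin ℝ U K (s, ℓ s) (1, q) = D₁ (s, ℓ s) + q * D₂ (s, ℓ s) := by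
        have h1 : ((1:ℝ), q) = ((1:ℝ), (0:ℝ)) + q • ((0:ℝ), (1:ℝ)) := by
          simp [Prod.ext_iff]
        rw [h1, ContinuousLinearMap.map_add, ContinuousLinearMap.map_smul, smul_eq_mul]
      rw [hlin] at hcomp
      have hexp : HasDerivAt (fun z : ℝ => Real.exp (Kc * z)) (Kc * Real.exp (Kc * s)) s := by
        have h := (Real.hasDerivAt_exp (Kc * s)).comp s ((hasDerivAt_id s).const_mul Kc)
        have h2 : HasDerivAt (fun z : ℝ => Real.exp (Kc * z)) (Real.exp (Kc * s) * (Kc * 1)) s := h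
        have h3 : Real.exp (Kc * s) * (Kc * 1) = Kc * Real.exp (Kc * s) := by ring
        rwa [h3] at h2
      have hlin2 : HasDerivAt (fun z : ℝ => d * m' * z) (d * m') s := by
        simpa using (hasDerivAt_id s).const_mul (d * m')
      exact (hexp.mul hcomp).sub hlin2
    have hgmono : MonotoneOn g (Set.Icc a b) := by
      refine monotoneOn_of_deriv_nonneg (convex_Icc a b) hgc ?_ ?_
      · intro s hs
        rw [interior_Icc] at hs
        exact ((hgderiv s hs).differentiableAt).differentiableWithinAt
      · intro s hs
        rw [interior_Icc] at hs
        rw [(hgderiv s hs).deriv]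
        have hsT : s ∈ Set.Ioo 0 T := ⟨lt_of_le_of_lt ha hs.1, lt_of_lt_of_le hs.2 hbT⟩
        have hxs := hintio s hs
        have hI := hineq' s hsT (ℓ s) hxs
        rw [hsplit s (Set.Ioo_subset_Icc_self hsT) (ℓ s)] at hI
        have hphis := hphi s hs
        have hu0 : 0 ≤ u s (ℓ s) :=
          main1 s (Set.Ioo_subset_Icc_self hsT) (ℓ s) (Set.Ioo_subset_Icc_self hxs)
        have hcC : -C ≤ c s (ℓ s) := by
          have := hCb s hsT (ℓ s) hxs
          have := neg_abs_le (c s (ℓ s))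
          linarith
        have hcu : -(C * u s (ℓ s)) ≤ c s (ℓ s) * u s (ℓ s) := by
          nlinarith [mul_le_mul_of_nonneg_right hcC hu0]
        have hWle : u s (ℓ s) * W (ℓ s) ≤ u s (ℓ s) := by
          nlinarith [hW1 (ℓ s), hWnn (ℓ s)]
        have hA : d * m' ≤ d * ∫ y in Set.Ioo l₁ l₂, J (ℓ s - y) * u s y :=
          mul_le_mul_of_nonneg_left hphis hd.le
        have hexp1 : 1 ≤ Real.exp (Kc * s) := Real.one_le_exp (by nlinarith [hs.1])
        have hsum : d * m' - Kc * u s (ℓ s) ≤ D₁ (s, ℓ s) + q * D₂ (s, ℓ s) := by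
          have hdW : d * (u s (ℓ s) * W (ℓ s)) ≤ d * u s (ℓ s) :=
            mul_le_mul_of_nonneg_left hWle hd.le
          rw [hKcdef]
          nlinarith
        nlinarith [mul_le_mul_of_nonneg_left hsum (Real.exp_pos (Kc * s)).le,
          mul_nonneg (mul_nonneg hd.le hm') (sub_nonneg.2 hexp1),
          mul_nonneg hKcnn hu0]
    have hfin := hgmono (Set.left_mem_Icc.2 hab.le) (Set.right_mem_Icc.2 hab.le) hab.le
    simp only [hgdef, hℓdef] at hfin
    linarith
  -- jump lemma: positivity spreads from a point within δ of the backward characteristic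
  have hL2 : ∀ t₀ x₀ τ y₀ : ℝ, 0 < τ → τ < t₀ → t₀ ≤ T → x₀ ≤ l₂ →
      l₁ ≤ x₀ - q * (t₀ - τ) →
      (∀ s ∈ Set.Ioo τ t₀, x₀ - q * (t₀ - s) ∈ Set.Ioo l₁ l₂) →
      y₀ ∈ Set.Ioo l₁ l₂ → |x₀ - q * (t₀ - τ) - y₀| < δ → 0 < u τ y₀ → 0 < u t₀ x₀ := by
    intro t₀ x₀ τ y₀ hτ hτt hT' hxl hlτ hio hy₀ hdist hpos
    set ε : ℝ := u τ y₀ / 2 with hεdef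
    have hεpos : 0 < ε := half_pos hpos
    have hτK : (τ, y₀) ∈ K :=
      Set.mk_mem_prod ⟨hτ.le, le_trans hτt.le hT'⟩ (Set.Ioo_subset_Icc_self hy₀)
    have hev : ∀ᶠ p in nhdsWithin (τ, y₀) K, ε < U p := by
      refine (hUc _ hτK).eventually (eventually_gt_nhds ?_)
      show ε < u τ y₀
      rw [hεdef]; linarith
    obtain ⟨r₀, hr₀pos, hr₀⟩ := Metric.mem_nhdsWithin_iff.1 hev
    set γ : ℝ := δ - |x₀ - q * (t₀ - τ) - y₀| with hγdef
    have hγpos : 0 < γ := by rw [hγdef]; linarith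
    set r : ℝ := min (min (r₀ / 2) ((t₀ - τ) / 2))
      (min (γ / (2 * (q + 1))) (min ((y₀ - l₁) / 2) ((l₂ - y₀) / 2))) with hrdef
    have hrpos : 0 < r := by
      refine lt_min (lt_min (by linarith) (by linarith)) (lt_min (by positivity)
        (lt_min (by linarith [hy₀.1]) (by linarith [hy₀.2])))
    have hr1 : r ≤ r₀ / 2 := le_trans (min_le_left _ _) (min_le_left _ _)
    have hr2 : r ≤ (t₀ - τ) / 2 := le_trans (min_le_left _ _) (min_le_right _ _)
    have hr3 : r ≤ γ / (2 * (q + 1)) := le_trans (min_le_right _ _) (min_le_left _ _)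
    have hr4 : r ≤ (y₀ - l₁) / 2 :=
      le_trans (min_le_right _ _) (le_trans (min_le_right _ _) (min_le_left _ _))
    have hr5 : r ≤ (l₂ - y₀) / 2 :=
      le_trans (min_le_right _ _) (le_trans (min_le_right _ _) (min_le_right _ _))
    have hrγ : (1 + q) * r ≤ γ / 2 := by
      have h := mul_le_mul_of_nonneg_left hr3 (by linarith : (0:ℝ) ≤ 1 + q)
      have h2 : (1 + q) * (γ / (2 * (q + 1))) = γ / 2 := by field_simp; ring
      linarith
    have hAabs := abs_lt.1 (lt_of_lt_of_le hdist (le_of_eq rfl))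
    have hAub : x₀ - q * (t₀ - τ) - y₀ ≤ δ - γ := le_of_abs_le (by rw [hγdef]; linarith)
    have hAlb : -(δ - γ) ≤ x₀ - q * (t₀ - τ) - y₀ := neg_le_of_abs_le (by rw [hγdef]; linarith)
    -- positivity rectangle
    have hrect : ∀ s ∈ Set.Icc τ (τ + r), ∀ y ∈ Set.Icc (y₀ - r) (y₀ + r), ε ≤ u s y := by
      intro s hs y hy
      have hyIcc : y ∈ Set.Icc l₁ l₂ :=
        ⟨by linarith [hy.1, hy₀.1], by linarith [hy.2, hy₀.2]⟩
      have hsmem : (s, y) ∈ K :=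
        Set.mk_mem_prod ⟨by linarith [hs.1], by linarith [hs.2]⟩ hyIcc
      have hdist2 : dist (s, y) (τ, y₀) < r₀ := by
        rw [Prod.dist_eq]
        refine max_lt ?_ ?_
        · rw [Real.dist_eq]
          have h8 : |s - τ| ≤ r := abs_le.2 ⟨by linarith [hs.1], by linarith [hs.2]⟩
          linarith
        · rw [Real.dist_eq]
          have h8 : |y - y₀| ≤ r := abs_le.2 ⟨by linarith [hy.1], by linarith [hy.2]⟩
          linarith
      exact (hr₀ ⟨Metric.mem_ball.2 hdist2, hsmem⟩).le
    have hsubIoo : Set.Icc (y₀ - r) (y₀ + r) ⊆ Set.Ioo l₁ l₂ := fun y hy =>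
      ⟨by linarith [hy.1, hy₀.1], by linarith [hy.2, hy₀.2]⟩
    -- lower bound on the nonlocal term on (τ, τ + r)
    have hphi1 : ∀ s ∈ Set.Ioo τ (τ + r),
        J 0 / 2 * ε * (2 * r) ≤ ∫ y in Set.Ioo l₁ l₂, J (x₀ - q * (t₀ - s) - y) * u s y := by
      intro s hs
      have hsIcc : s ∈ Set.Icc 0 T := ⟨by linarith [hs.1], by linarith [hs.2]⟩
      have hint1 := hintJu s hsIcc (x₀ - q * (t₀ - s))
      have hJlow : ∀ y ∈ Set.Icc (y₀ - r) (y₀ + r), J 0 / 2 ≤ J (x₀ - q * (t₀ - s) - y) := by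
        intro y hy
        refine hδJ _ (abs_le.2 ⟨?_, ?_⟩)
        · nlinarith [hs.1, hs.2, hy.1, hy.2, mul_nonneg hq.le (sub_nonneg.2 hs.1.le)]
        · nlinarith [hs.1, hs.2, hy.1, hy.2, mul_nonneg hq.le (sub_nonneg.2 hs.1.le)]
      have hstep : (∫ y in Set.Icc (y₀ - r) (y₀ + r), J 0 / 2 * ε)
          ≤ ∫ y in Set.Icc (y₀ - r) (y₀ + r), J (x₀ - q * (t₀ - s) - y) * u s y := by
        refine setIntegral_mono_on (integrableOn_const measure_Icc_lt_top.ne)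
          (hint1.mono_set hsubIoo) measurableSet_Icc ?_
        intro y hy
        have h1 := hJlow y hy
        have h2 := hrect s ⟨hs.1.le, hs.2.le⟩ y hy
        nlinarith [hJnn (x₀ - q * (t₀ - s) - y)]
      have hconst : (∫ y in Set.Icc (y₀ - r) (y₀ + r), J 0 / 2 * ε)
          = J 0 / 2 * ε * (2 * r) := by
        rw [setIntegral_const, Real.volume_real_Icc_of_le (by linarith : y₀ - r ≤ y₀ + r), smul_eq_mul]
        ring
      have hmset : (∫ y in Set.Icc (y₀ - r) (y₀ + r), J (x₀ - q * (t₀ - s) - y) * u s y)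
          ≤ ∫ y in Set.Ioo l₁ l₂, J (x₀ - q * (t₀ - s) - y) * u s y := by
        refine setIntegral_mono_set hint1 ?_ hsubIoo.eventuallyLE
        refine (ae_restrict_iff' measurableSet_Ioo).2 (Filter.Eventually.of_forall ?_)
        intro y hy
        exact mul_nonneg (hJnn _) (main1 s hsIcc y (Set.Ioo_subset_Icc_self hy))
      linarith
    have hτr : τ + r < t₀ := by linarith
    have hstep1 := hM t₀ x₀ τ (τ + r) (J 0 / 2 * ε * (2 * r)) hτ.le (by linarith) (by linarith)
      (by positivity) hlτ (hio (τ + r) ⟨by linarith, hτr⟩).2.le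
      (fun s hs => hio s ⟨hs.1, lt_trans hs.2 hτr⟩) hphi1
    have hphi0 : ∀ s ∈ Set.Ioo (τ + r) t₀,
        (0:ℝ) ≤ ∫ y in Set.Ioo l₁ l₂, J (x₀ - q * (t₀ - s) - y) * u s y := by
      intro s hs
      have hsIcc : s ∈ Set.Icc 0 T := ⟨by linarith [hs.1], by linarith [hs.2]⟩
      exact setIntegral_nonneg measurableSet_Ioo
        (fun y hy => mul_nonneg (hJnn _) (main1 s hsIcc y (Set.Ioo_subset_Icc_self hy)))
    have hstep2 := hM t₀ x₀ (τ + r) t₀ 0 (by linarith) hτr hT' le_rfl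
      (hio (τ + r) ⟨by linarith, hτr⟩).1.le (by
        have h5 : x₀ - q * (t₀ - t₀) = x₀ := by ring
        rw [h5]; exact hxl)
      (fun s hs => hio s ⟨lt_trans (by linarith) hs.1, hs.2⟩) hphi0
    have hx₀eq : x₀ - q * (t₀ - t₀) = x₀ := by ring
    rw [hx₀eq] at hstep2
    have hu1 : 0 ≤ u τ (x₀ - q * (t₀ - τ)) := by
      refine main1 τ ⟨hτ.le, by linarith⟩ _ ⟨hlτ, ?_⟩
      nlinarith [mul_nonneg hq.le (sub_nonneg.2 hτt.le)]
    have hprodpos : 0 < Real.exp (Kc * t₀) * u t₀ x₀ := by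
      have he1 : 0 < Real.exp (Kc * τ) * u τ (x₀ - q * (t₀ - τ)) + d * (J 0 / 2 * ε * (2 * r)) * (τ + r - τ) := by
        have : 0 < d * (J 0 / 2 * ε * (2 * r)) * (τ + r - τ) := by
          have h6 : (0:ℝ) < J 0 / 2 * ε * (2 * r) := by positivity
          have h7 : (0:ℝ) < τ + r - τ := by linarith
          positivity
        nlinarith [Real.exp_pos (Kc * τ)]
      nlinarith
    nlinarith [Real.exp_pos (Kc * t₀), hprodpos,
      mul_nonpos_of_nonneg_of_nonpos (Real.exp_pos (Kc * t₀)).le (le_refl (0:ℝ))]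
  -- a seed point in the open interval where u(0, ·) > 0
  obtain ⟨xs, hxs, hxspos⟩ : ∃ xs ∈ Set.Ioo l₁ l₂, 0 < u 0 xs := by
    have hpos : 0 < u 0 xb := by
      rw [hinit xb hxbI]
      exact lt_of_le_of_ne (hu₀nn xb hxbI) (Ne.symm hxb0)
    have hcont := (hslice 0 ⟨le_refl 0, hT.le⟩) xb hxbI
    have hev : ∀ᶠ y in nhdsWithin xb (Set.Icc l₁ l₂), 0 < u 0 y :=
      hcont.eventually (eventually_gt_nhds hpos)
    have hev2 : ∀ᶠ y in nhdsWithin xb (Set.Ioo l₁ l₂), 0 < u 0 y :=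
      hev.filter_mono (nhdsWithin_mono _ Set.Ioo_subset_Icc_self)
    have hne2 : (nhdsWithin xb (Set.Ioo l₁ l₂)).NeBot := by
      rw [← mem_closure_iff_nhdsWithin_neBot, closure_Ioo (ne_of_lt hl)]
      exact hxbI
    obtain ⟨y, hy1, hy2⟩ := (hev2.and self_mem_nhdsWithin).exists
    exact ⟨y, hy2, hy1⟩
  -- a positivity radius around (0, xs)
  obtain ⟨ρ, hρpos, hρ⟩ : ∃ ρ > 0, ∀ p : ℝ × ℝ, dist p ((0:ℝ), xs) < ρ → p ∈ K → 0 < U p := by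
    have h0K : ((0:ℝ), xs) ∈ K :=
      Set.mk_mem_prod ⟨le_refl 0, hT.le⟩ (Set.Ioo_subset_Icc_self hxs)
    have hev : ∀ᶠ p in nhdsWithin ((0:ℝ), xs) K, 0 < U p := by
      refine (hUc _ h0K).eventually (eventually_gt_nhds ?_)
      show (0:ℝ) < u 0 xs
      exact hxspos
    obtain ⟨ρ, h1, h2⟩ := Metric.mem_nhdsWithin_iff.1 hev
    exact ⟨ρ, h1, fun p hdp hpK => h2 ⟨Metric.mem_ball.2 hdp, hpK⟩⟩
  -- the time step for the column induction
  set σ₀ : ℝ := min (ρ / 2) (min δ (xs - l₁)) / (2 * (q + 1)) with hσdef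
  have hmin3 : 0 < min (ρ / 2) (min δ (xs - l₁)) :=
    lt_min (by linarith) (lt_min hδpos (by linarith [hxs.1]))
  have hσpos : 0 < σ₀ := by
    rw [hσdef]; positivity
  have hσmul : σ₀ * (2 * (q + 1)) = min (ρ / 2) (min δ (xs - l₁)) := by
    rw [hσdef]; field_simp
  have hσρ : σ₀ ≤ ρ / 4 := by
    have h1 : min (ρ / 2) (min δ (xs - l₁)) ≤ ρ / 2 := min_le_left _ _
    nlinarith
  have hσδ : q * σ₀ < δ := by
    have h1 : min (ρ / 2) (min δ (xs - l₁)) ≤ δ := le_trans (min_le_right _ _) (min_le_left _ _)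
    nlinarith
  have hσl : q * σ₀ < xs - l₁ := by
    have h1 : min (ρ / 2) (min δ (xs - l₁)) ≤ xs - l₁ :=
      le_trans (min_le_right _ _) (min_le_right _ _)
    nlinarith
  -- column: u(t, xs) > 0 for all t ∈ (0, T]
  have hcoln : ∀ n : ℕ, ∀ t', 0 < t' → t' ≤ T → t' ≤ ρ / 2 + n * σ₀ → 0 < u t' xs := by
    intro n
    induction n with
    | zero =>
      intro t' ht' hT' hb
      simp only [Nat.cast_zero, zero_mul, add_zero] at hb
      have := hρ (t', xs) (by
          rw [Prod.dist_eq]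
          refine max_lt ?_ ?_
          · rw [Real.dist_eq, abs_of_nonneg (by linarith [ht'.le] : (0:ℝ) ≤ t' - 0)]
            linarith
          · rw [Real.dist_eq, sub_self, abs_zero]; linarith)
        (Set.mk_mem_prod ⟨ht'.le, hT'⟩ (Set.Ioo_subset_Icc_self hxs))
      exact this
    | succ n ih =>
      intro t' ht' hT' hb
      by_cases hcase : t' ≤ ρ / 2 + n * σ₀
      · exact ih t' ht' hT' hcase
      · push_neg at hcase
        have hnn : (0:ℝ) ≤ (n:ℝ) * σ₀ := by positivity
        have hτpos : 0 < t' - σ₀ := by nlinarith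
        have hqσnn : 0 ≤ q * σ₀ := mul_nonneg hq.le hσpos.le
        refine hL2 t' xs (t' - σ₀) xs hτpos (by linarith) hT' hxs.2.le ?_ ?_ hxs ?_ ?_
        · have h10 : xs - q * (t' - (t' - σ₀)) = xs - q * σ₀ := by ring
          rw [h10]; linarith
        · intro s hs
          have h11 : q * (t' - s) ≤ q * σ₀ :=
            mul_le_mul_of_nonneg_left (by linarith [hs.1]) hq.le
          have h12 : 0 < q * (t' - s) := mul_pos hq (by linarith [hs.2])
          exact ⟨by linarith, by linarith [hxs.2]⟩
        · have h9 : xs - q * (t' - (t' - σ₀)) - xs = -(q * σ₀) := by ring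
          rw [h9, abs_neg, abs_of_nonneg (by positivity)]
          exact hσδ
        · refine ih (t' - σ₀) hτpos (by linarith) ?_
          push_cast at hb
          linarith
  have hcol : ∀ t' ∈ Set.Ioc 0 T, 0 < u t' xs := by
    intro t' ht'
    obtain ⟨n, hn⟩ := exists_nat_ge ((t' - ρ / 2) / σ₀)
    refine hcoln n t' ht'.1 ht'.2 ?_
    have := (div_le_iff₀ hσpos).1 hn
    linarith
  -- spatial spreading induction
  have hsp : ∀ n : ℕ, ∀ t' ∈ Set.Ioc 0 T, ∀ x' ∈ Set.Ioc l₁ l₂,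
      |x' - xs| ≤ n * (δ / 2) → 0 < u t' x' := by
    intro n
    induction n with
    | zero =>
      intro t' ht' x' hx' hb
      simp only [Nat.cast_zero, zero_mul] at hb
      have : x' = xs := by
        have := abs_nonneg (x' - xs)
        have h0 : |x' - xs| = 0 := le_antisymm hb this
        have := abs_eq_zero.1 h0
        linarith
      rw [this]
      exact hcol t' ht'
    | succ n ih =>
      intro t' ht' x' hx' hb
      by_cases hcase : |x' - xs| ≤ n * (δ / 2)
      · exact ih t' ht' x' hx' hcase
      · push_neg at hcase
        -- time step σ
        set σ : ℝ := min (t' / 2) (min (δ / 2) (x' - l₁)) / (2 * (q + 1)) with hσ'def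
        have hmin4 : 0 < min (t' / 2) (min (δ / 2) (x' - l₁)) :=
          lt_min (by linarith [ht'.1]) (lt_min (by linarith) (by linarith [hx'.1]))
        have hσpos' : 0 < σ := by rw [hσ'def]; positivity
        have hσmul' : σ * (2 * (q + 1)) = min (t' / 2) (min (δ / 2) (x' - l₁)) := by
          rw [hσ'def]; field_simp
        have hσt : σ ≤ t' / 4 := by
          have h1 : min (t' / 2) (min (δ / 2) (x' - l₁)) ≤ t' / 2 := min_le_left _ _
          nlinarith
        have hqσδ : q * σ ≤ δ / 4 := by
          have h1 : min (t' / 2) (min (δ / 2) (x' - l₁)) ≤ δ / 2 :=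
            le_trans (min_le_right _ _) (min_le_left _ _)
          nlinarith
        have hqσl : q * σ < x' - l₁ := by
          have h1 : min (t' / 2) (min (δ / 2) (x' - l₁)) ≤ x' - l₁ :=
            le_trans (min_le_right _ _) (min_le_right _ _)
          nlinarith
        have hτpos : 0 < t' - σ := by linarith [ht'.1]
        have hτT : t' - σ ≤ T := by linarith [ht'.2]
        push_cast at hb
        rcases le_or_gt xs x' with hxx | hxx
        · -- x' to the right of xs
          have hxgt : (n:ℝ) * (δ / 2) < x' - xs := by
            rwa [abs_of_nonneg (by linarith)] at hcase
          have hxle : x' - xs ≤ (n + 1) * (δ / 2) := by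
            have := le_of_abs_le hb
            linarith
          obtain ⟨y₀, hy₀def⟩ : ∃ z : ℝ, z = xs + (n : ℝ) * (δ / 2) := ⟨_, rfl⟩
          have hy₀Ioo : y₀ ∈ Set.Ioo l₁ l₂ := by
            constructor
            · have : (0:ℝ) ≤ (n:ℝ) * (δ / 2) := by positivity
              nlinarith [hxs.1]
            · nlinarith [hx'.2]
          have hqσnn : 0 ≤ q * σ := mul_nonneg hq.le hσpos'.le
          have hcast : ((n : ℝ) + 1) * (δ / 2) = (n : ℝ) * (δ / 2) + δ / 2 := by ring
          refine hL2 t' x' (t' - σ) y₀ hτpos (by linarith) ht'.2 hx'.2 ?_ ?_ hy₀Ioo ?_ ?_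
          · have h10 : x' - q * (t' - (t' - σ)) = x' - q * σ := by ring
            rw [h10]; linarith
          · intro s hs
            have h11 : q * (t' - s) ≤ q * σ :=
              mul_le_mul_of_nonneg_left (by linarith [hs.1]) hq.le
            have h12 : 0 < q * (t' - s) := mul_pos hq (by linarith [hs.2])
            exact ⟨by linarith, by linarith [hx'.2]⟩
          · have h10 : x' - q * (t' - (t' - σ)) - y₀ = x' - y₀ - q * σ := by ring
            rw [h10, abs_lt]
            exact ⟨by linarith, by linarith⟩
          · refine ih (t' - σ) ⟨hτpos, hτT⟩ y₀ ⟨hy₀Ioo.1, hy₀Ioo.2.le⟩ ?_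
            have h9 : y₀ - xs = (n : ℝ) * (δ / 2) := by rw [hy₀def]; ring
            rw [h9, abs_of_nonneg (by positivity)]
        · -- x' to the left of xs
          have hxgt : (n:ℝ) * (δ / 2) < xs - x' := by
            rw [abs_sub_comm] at hcase
            rwa [abs_of_nonneg (by linarith)] at hcase
          have hxle : xs - x' ≤ (n + 1) * (δ / 2) := by
            rw [abs_sub_comm] at hb
            have := le_of_abs_le hb
            linarith
          obtain ⟨y₀, hy₀def⟩ : ∃ z : ℝ, z = xs - (n : ℝ) * (δ / 2) := ⟨_, rfl⟩
          have hy₀Ioo : y₀ ∈ Set.Ioo l₁ l₂ := by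
            constructor
            · nlinarith [hx'.1]
            · have : (0:ℝ) ≤ (n:ℝ) * (δ / 2) := by positivity
              nlinarith [hxs.2]
          have hqσnn : 0 ≤ q * σ := mul_nonneg hq.le hσpos'.le
          have hcast : ((n : ℝ) + 1) * (δ / 2) = (n : ℝ) * (δ / 2) + δ / 2 := by ring
          refine hL2 t' x' (t' - σ) y₀ hτpos (by linarith) ht'.2 hx'.2 ?_ ?_ hy₀Ioo ?_ ?_
          · have h10 : x' - q * (t' - (t' - σ)) = x' - q * σ := by ring
            rw [h10]; linarith
          · intro s hs
            have h11 : q * (t' - s) ≤ q * σ :=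
              mul_le_mul_of_nonneg_left (by linarith [hs.1]) hq.le
            have h12 : 0 < q * (t' - s) := mul_pos hq (by linarith [hs.2])
            exact ⟨by linarith, by linarith [hx'.2]⟩
          · have h10 : x' - q * (t' - (t' - σ)) - y₀ = x' - y₀ - q * σ := by ring
            rw [h10, abs_lt]
            exact ⟨by linarith, by linarith⟩
          · refine ih (t' - σ) ⟨hτpos, hτT⟩ y₀ ⟨hy₀Ioo.1, hy₀Ioo.2.le⟩ ?_
            have h9 : y₀ - xs = -((n : ℝ) * (δ / 2)) := by rw [hy₀def]; ring
            rw [h9, abs_neg, abs_of_nonneg (by positivity)]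
  obtain ⟨n, hn⟩ := exists_nat_ge (|x - xs| / (δ / 2))
  exact hsp n t ht x hx ((div_le_iff₀ (by linarith)).1 hn)
end

section
/- Assume conditions (J), (J1) and let f satisfy (F1) and (F2) on the interval of values [min over [0,T]×[l₁,l₂] of min{ū,u̲}, max over [0,T]×[l₁,l₂] of max{ū,u̲}]. Let T > 0 and let ū, u̲ ∈ C¹([0,T]×[l₁,l₂]) satisfy: ū_t ≥ d∫_Ω J(x−y)(ū(t,y) − ū(t,x))dy − q ū_x + f(t,x,ū) and u̲_t ≤ d∫_Ω J(x−y)(u̲(t,y) − u̲(t,x))dy − q u̲_x + f(t,x,u̲) on (0,T)×Ω; ū(t,l₁) ≥ 0 ≥ u̲(t,l₁) for t ∈ (0,T); and ū(0,x) ≥ u₀(x) ≥ u̲(0,x) on [l₁,l₂] for some admissible initial datum u₀. Then ū(t,x) ≥ u̲(t,x) for all (t,x) ∈ (0,T)×Ω. -/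
open MeasureTheory
open Set Filter Topology

/-- If `g` has a (one-sided) derivative `g'` at the right endpoint `a` of `[c,a]`
and `a` is a minimum of `g` on `[c,a]`, then `g' ≤ 0`. -/
lemma slope_min_left {g : ℝ → ℝ} {c a g' : ℝ} (hc : c < a)
    (hg : HasDerivWithinAt g g' (Set.Icc c a) a)
    (hmin : ∀ s ∈ Set.Icc c a, g a ≤ g s) : g' ≤ 0 := by
  have hslope := hasDerivWithinAt_iff_tendsto_slope.1 hg
  have hdiff : Set.Icc c a \ {a} = Set.Ico c a := Set.Icc_sdiff_right
  rw [hdiff] at hslope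
  have hne : (𝓝[Set.Ico c a] a).NeBot := by
    rw [← mem_closure_iff_nhdsWithin_neBot, closure_Ico hc.ne]
    exact Set.right_mem_Icc.2 hc.le
  refine le_of_tendsto hslope ?_
  filter_upwards [eventually_mem_nhdsWithin] with s hs
  have h1 : 0 ≤ g s - g a := sub_nonneg.2 (hmin s ⟨hs.1, hs.2.le⟩)
  have h2 : s - a ≤ 0 := sub_nonpos.2 hs.2.le
  rw [slope_def_field]
  exact div_nonpos_of_nonneg_of_nonpos h1 h2

lemma slice_fst {a b c e : ℝ} {F : ℝ × ℝ → ℝ}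
    (hF : DifferentiableOn ℝ F (Set.Icc a b ×ˢ Set.Icc c e))
    {t x : ℝ} (ht : t ∈ Set.Icc a b) (hx : x ∈ Set.Icc c e) :
    HasDerivWithinAt (fun s => F (s, x))
      (fderivWithin ℝ F (Set.Icc a b ×ˢ Set.Icc c e) (t, x) (1, 0)) (Set.Icc a b) t := by
  have hD := (hF (t, x) ⟨ht, hx⟩).hasFDerivWithinAt
  have hγ : HasDerivWithinAt (fun s => ((s, x) : ℝ × ℝ)) ((1 : ℝ), (0 : ℝ)) (Set.Icc a b) t :=
    ((hasDerivAt_id t).prodMk (hasDerivAt_const t x)).hasDerivWithinAt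
  exact hD.comp_hasDerivWithinAt t hγ (fun s hs => (⟨hs, hx⟩ : ((s, x) : ℝ × ℝ) ∈ Set.Icc a b ×ˢ Set.Icc c e))

lemma slice_snd {a b c e : ℝ} {F : ℝ × ℝ → ℝ}
    (hF : DifferentiableOn ℝ F (Set.Icc a b ×ˢ Set.Icc c e))
    {t x : ℝ} (ht : t ∈ Set.Icc a b) (hx : x ∈ Set.Icc c e) :
    HasDerivWithinAt (fun y => F (t, y))
      (fderivWithin ℝ F (Set.Icc a b ×ˢ Set.Icc c e) (t, x) (0, 1)) (Set.Icc c e) x := by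
  have hD := (hF (t, x) ⟨ht, hx⟩).hasFDerivWithinAt
  have hγ : HasDerivWithinAt (fun y => ((t, y) : ℝ × ℝ)) ((0 : ℝ), (1 : ℝ)) (Set.Icc c e) x :=
    ((hasDerivAt_const x t).prodMk (hasDerivAt_id x)).hasDerivWithinAt
  exact hD.comp_hasDerivWithinAt x hγ (fun y hy => ⟨ht, hy⟩)

/-- Extension of the differential inequality (valid in the open interval) to `Ioc l₁ l₂`,
with derivatives expressed via `fderivWithin` on the closed rectangle. -/
lemma extend_ineq {l₁ l₂ T t₀ d q C : ℝ} {J : ℝ → ℝ} {u : ℝ → ℝ → ℝ} {h : ℝ → ℝ}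
    (hl : l₁ < l₂) (hT : 0 < T) (ht₀ : t₀ ∈ Set.Ioo 0 T)
    (hJc : Continuous J) (hC : ∀ z, |J z| ≤ C)
    (hu : ContDiffOn ℝ 1 (fun p : ℝ × ℝ => u p.1 p.2) (Set.Icc 0 T ×ˢ Set.Icc l₁ l₂))
    (hhc : ContinuousOn h (Set.Icc l₁ l₂))
    (hineq : ∀ x ∈ Set.Ioo l₁ l₂,
      d * (∫ y in Set.Ioo l₁ l₂, J (x - y) * (u t₀ y - u t₀ x))
        - q * deriv (fun y => u t₀ y) x + h x ≤ deriv (fun s => u s x) t₀) :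
    ∀ x ∈ Set.Ioc l₁ l₂,
      d * (∫ y in Set.Ioo l₁ l₂, J (x - y) * (u t₀ y - u t₀ x))
        - q * fderivWithin ℝ (fun p : ℝ × ℝ => u p.1 p.2)
            (Set.Icc 0 T ×ˢ Set.Icc l₁ l₂) (t₀, x) (0, 1)
        + h x
        ≤ fderivWithin ℝ (fun p : ℝ × ℝ => u p.1 p.2)
            (Set.Icc 0 T ×ˢ Set.Icc l₁ l₂) (t₀, x) (1, 0) := by
  set S : Set (ℝ × ℝ) := Set.Icc 0 T ×ˢ Set.Icc l₁ l₂ with hSdef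
  have hUniq : UniqueDiffOn ℝ S := (uniqueDiffOn_Icc hT).prod (uniqueDiffOn_Icc hl)
  have hud : DifferentiableOn ℝ (fun p : ℝ × ℝ => u p.1 p.2) S := hu.differentiableOn one_ne_zero
  have ht₀I : t₀ ∈ Set.Icc 0 T := ⟨ht₀.1.le, ht₀.2.le⟩
  set g : ℝ → ℝ := fun y => u t₀ y with hgdef
  have hgc : ContinuousOn g (Set.Icc l₁ l₂) := by
    have : ContinuousOn (fun y : ℝ => ((t₀, y) : ℝ × ℝ)) (Set.Icc l₁ l₂) :=
      (continuous_const.prodMk continuous_id).continuousOn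
    exact hu.continuousOn.comp this (fun y hy => ⟨ht₀I, hy⟩)
  -- notation for the pieces
  set Dt : ℝ → ℝ := fun x => fderivWithin ℝ (fun p : ℝ × ℝ => u p.1 p.2) S (t₀, x) (1, 0)
  set Dx : ℝ → ℝ := fun x => fderivWithin ℝ (fun p : ℝ × ℝ => u p.1 p.2) S (t₀, x) (0, 1)
  set I : ℝ → ℝ := fun x => ∫ y in Set.Ioo l₁ l₂, J (x - y) * (g y - g x) with hIdef
  set T1 : ℝ → ℝ := fun x => ∫ y in Set.Ioo l₁ l₂, J (x - y) * g y with hT1def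
  set T2 : ℝ → ℝ := fun x => ∫ y in Set.Ioo l₁ l₂, J (x - y) with hT2def
  -- integrability facts
  have hJint : ∀ x : ℝ, IntegrableOn (fun y => J (x - y)) (Set.Ioo l₁ l₂) := by
    intro x
    exact ((hJc.comp (continuous_const.sub continuous_id)).continuousOn.integrableOn_Icc).mono_set
      Set.Ioo_subset_Icc_self
  have hJgint : ∀ x : ℝ, IntegrableOn (fun y => J (x - y) * g y) (Set.Ioo l₁ l₂) := by
    intro x
    exact (((hJc.comp (continuous_const.sub continuous_id)).continuousOn.mul
      hgc).integrableOn_Icc).mono_set Set.Ioo_subset_Icc_self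
  have hIsplit : ∀ x : ℝ, I x = T1 x - T2 x * g x := by
    intro x
    have h1 : (fun y => J (x - y) * (g y - g x)) =
        fun y => J (x - y) * g y - J (x - y) * g x := by
      funext y; ring
    rw [hIdef]
    simp only [h1]
    rw [integral_sub (hJgint x) ((hJint x).mul_const (g x)), integral_mul_const]
  -- continuity of T1 and T2
  have hT1c : Continuous T1 := by
    apply MeasureTheory.continuous_of_dominated (bound := fun y => C * |g y|)
    · intro x
      exact ((hJc.comp (continuous_const.sub continuous_id)).aestronglyMeasurable).mul
        ((hgc.mono Set.Ioo_subset_Icc_self).aestronglyMeasurable measurableSet_Ioo)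
    · intro x
      refine Filter.Eventually.of_forall (fun y => ?_)
      rw [Real.norm_eq_abs, abs_mul]
      exact mul_le_mul_of_nonneg_right (hC _) (abs_nonneg _)
    · exact (((hgc.abs).integrableOn_Icc).mono_set Set.Ioo_subset_Icc_self).const_mul C
    · refine Filter.Eventually.of_forall (fun y => ?_)
      exact (hJc.comp (continuous_id.sub continuous_const)).mul continuous_const
  have hT2c : Continuous T2 := by
    apply MeasureTheory.continuous_of_dominated (bound := fun _ => C)
    · intro x
      exact (hJc.comp (continuous_const.sub continuous_id)).aestronglyMeasurable
    · intro x
      exact Filter.Eventually.of_forall (fun y => by rw [Real.norm_eq_abs]; exact hC _)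
    · exact MeasureTheory.integrableOn_const measure_Ioo_lt_top.ne
    · exact Filter.Eventually.of_forall
        (fun y => hJc.comp (continuous_id.sub continuous_const))
  have hIc : ContinuousOn I (Set.Icc l₁ l₂) := by
    have : ContinuousOn (fun x => T1 x - T2 x * g x) (Set.Icc l₁ l₂) :=
      (hT1c.continuousOn).sub ((hT2c.continuousOn).mul hgc)
    exact this.congr (fun x _ => hIsplit x)
  -- continuity of the fderivWithin pieces
  have hfd : ContinuousOn (fun p => fderivWithin ℝ (fun p : ℝ × ℝ => u p.1 p.2) S p) S :=
    hu.continuousOn_fderivWithin hUniq le_rfl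
  have hmap : ∀ x ∈ Set.Icc l₁ l₂, ((t₀, x) : ℝ × ℝ) ∈ S := fun x hx => ⟨ht₀I, hx⟩
  have hcurve : ContinuousOn (fun x : ℝ => ((t₀, x) : ℝ × ℝ)) (Set.Icc l₁ l₂) :=
    (continuous_const.prodMk continuous_id).continuousOn
  have hfdc : ContinuousOn
      (fun x => fderivWithin ℝ (fun p : ℝ × ℝ => u p.1 p.2) S (t₀, x)) (Set.Icc l₁ l₂) :=
    hfd.comp hcurve hmap
  have hDtc : ContinuousOn Dt (Set.Icc l₁ l₂) :=
    ((ContinuousLinearMap.apply ℝ ℝ ((1 : ℝ), (0 : ℝ))).continuous).comp_continuousOn hfdc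
  have hDxc : ContinuousOn Dx (Set.Icc l₁ l₂) :=
    ((ContinuousLinearMap.apply ℝ ℝ ((0 : ℝ), (1 : ℝ))).continuous).comp_continuousOn hfdc
  -- the inequality on the open interval, in fderivWithin form
  have key : ∀ x ∈ Set.Ioo l₁ l₂, d * I x - q * Dx x + h x ≤ Dt x := by
    intro x hx
    have hxI : x ∈ Set.Icc l₁ l₂ := Set.Ioo_subset_Icc_self hx
    have h1 : HasDerivAt (fun s => u s x) (Dt x) t₀ :=
      (slice_fst hud ht₀I hxI).hasDerivAt (Icc_mem_nhds ht₀.1 ht₀.2)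
    have h2 : HasDerivAt (fun y => u t₀ y) (Dx x) x :=
      (slice_snd hud ht₀I hxI).hasDerivAt (Icc_mem_nhds hx.1 hx.2)
    have := hineq x hx
    rwa [h1.deriv, h2.deriv] at this
  -- conclude
  intro x hx
  rcases eq_or_lt_of_le hx.2 with heq | hlt
  · subst heq
    -- pass to the limit along Ioo l₁ x
    have hne : (𝓝[Set.Ioo l₁ x] x).NeBot := by
      rw [← mem_closure_iff_nhdsWithin_neBot, closure_Ioo hx.1.ne]
      exact Set.right_mem_Icc.2 hx.1.le
    have hxI : x ∈ Set.Icc l₁ x := Set.right_mem_Icc.2 hx.1.le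
    have hΦ : Filter.Tendsto (fun z => d * I z - q * Dx z + h z) (𝓝[Set.Ioo l₁ x] x)
        (𝓝 (d * I x - q * Dx x + h x)) := by
      have : ContinuousWithinAt (fun z => d * I z - q * Dx z + h z) (Set.Icc l₁ x) x :=
        (((continuousWithinAt_const).mul (hIc x hxI)).sub
          ((continuousWithinAt_const).mul (hDxc x hxI))).add (hhc x hxI)
      exact this.mono (fun z hz => ⟨hz.1.le, hz.2.le⟩)
    have hΨ : Filter.Tendsto Dt (𝓝[Set.Ioo l₁ x] x) (𝓝 (Dt x)) :=
      (hDtc x hxI).mono (fun z hz => ⟨hz.1.le, hz.2.le⟩)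
    refine le_of_tendsto_of_tendsto hΦ hΨ ?_
    filter_upwards [eventually_mem_nhdsWithin] with z hz
    exact key z hz
  · exact key x ⟨hx.1, hlt⟩

/-- **Comparison principle for the nonlocal Neumann advection problem.**
If `ū` is an upper solution and `u̲` a lower solution of
`u_t = d∫_Ω J(x−y)(u(t,y) − u(t,x))dy − q u_x + f(t,x,u)` with
`ū(t,l₁) ≥ 0 ≥ u̲(t,l₁)` and `ū(0,·) ≥ u₀ ≥ u̲(0,·)` for an admissible
initial datum `u₀`, then `ū ≥ u̲` on `(0,T)×Ω`. -/
theorem neumann_comparison_principle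
    (l₁ l₂ d q T : ℝ) (J : ℝ → ℝ) (f : ℝ → ℝ → ℝ → ℝ)
    (ubar ulow : ℝ → ℝ → ℝ) (u₀ : ℝ → ℝ)
    (hl : l₁ < l₂) (hd : 0 < d) (hq : 0 < q) (hT : 0 < T)
    -- condition (J)
    (hJc : Continuous J) (hJnn : ∀ x, 0 ≤ J x) (hJ0 : 0 < J 0)
    (hJint : MeasureTheory.Integrable J) (hJ1 : (∫ x, J x) = 1)
    -- condition (J1)
    (hJsymm : ∀ x, J (-x) = J x) (hJbdd : ∃ C, ∀ x, J x ≤ C)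
    -- condition (F1): continuity of f, f_t, f_x, f_u
    (hfc : Continuous fun p : ℝ × ℝ × ℝ => f p.1 p.2.1 p.2.2)
    (hftc : Continuous fun p : ℝ × ℝ × ℝ => deriv (fun s => f s p.2.1 p.2.2) p.1)
    (hfxc : Continuous fun p : ℝ × ℝ × ℝ => deriv (fun y => f p.1 y p.2.2) p.2.1)
    (hfuc : Continuous fun p : ℝ × ℝ × ℝ => deriv (fun v => f p.1 p.2.1 v) p.2.2)
    -- condition (F1): Lipschitz continuity of f and f_u in u on bounded intervals
    (hflip : ∀ b B : ℝ, ∃ K, ∀ t ∈ Set.Ici (0:ℝ), ∀ x ∈ Set.Icc l₁ l₂,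
      ∀ u₁ ∈ Set.Icc b B, ∀ u₂ ∈ Set.Icc b B,
        |f t x u₁ - f t x u₂| ≤ K * |u₁ - u₂| ∧
        |deriv (fun v => f t x v) u₁ - deriv (fun v => f t x v) u₂| ≤ K * |u₁ - u₂|)
    -- condition (F2)
    (hf0 : ∀ t ∈ Set.Ici (0:ℝ), ∀ x ∈ Set.Icc l₁ l₂, f t x 0 = 0)
    (hfN : ∃ N > 0, ∀ t ∈ Set.Ici (0:ℝ), ∀ x ∈ Set.Icc l₁ l₂, ∀ v > N, f t x v < 0)
    -- admissible initial datum
    (hu₀C1 : ContDiffOn ℝ 1 u₀ (Set.Icc l₁ l₂)) (hu₀l : u₀ l₁ = 0)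
    (hu₀nn : ∀ x ∈ Set.Icc l₁ l₂, 0 ≤ u₀ x)
    (hu₀ne : ∃ x ∈ Set.Icc l₁ l₂, u₀ x ≠ 0)
    -- ū, u̲ ∈ C¹([0,T]×[l₁,l₂])
    (hubar : ContDiffOn ℝ 1 (fun p : ℝ × ℝ => ubar p.1 p.2) (Set.Icc 0 T ×ˢ Set.Icc l₁ l₂))
    (hulow : ContDiffOn ℝ 1 (fun p : ℝ × ℝ => ulow p.1 p.2) (Set.Icc 0 T ×ˢ Set.Icc l₁ l₂))
    -- upper solution inequality
    (hup : ∀ t ∈ Set.Ioo 0 T, ∀ x ∈ Set.Ioo l₁ l₂,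
      deriv (fun s => ubar s x) t ≥
        d * (∫ y in Set.Ioo l₁ l₂, J (x - y) * (ubar t y - ubar t x))
          - q * deriv (fun y => ubar t y) x + f t x (ubar t x))
    -- lower solution inequality
    (hlow : ∀ t ∈ Set.Ioo 0 T, ∀ x ∈ Set.Ioo l₁ l₂,
      deriv (fun s => ulow s x) t ≤
        d * (∫ y in Set.Ioo l₁ l₂, J (x - y) * (ulow t y - ulow t x))
          - q * deriv (fun y => ulow t y) x + f t x (ulow t x))
    -- boundary conditions
    (hbd : ∀ t ∈ Set.Ioo 0 T, ulow t l₁ ≤ 0 ∧ 0 ≤ ubar t l₁)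
    -- initial ordering
    (hinit : ∀ x ∈ Set.Icc l₁ l₂, ulow 0 x ≤ u₀ x ∧ u₀ x ≤ ubar 0 x) :
    ∀ t ∈ Set.Ioo 0 T, ∀ x ∈ Set.Ioo l₁ l₂, ulow t x ≤ ubar t x := by
    -- global setup
  have hUniq : UniqueDiffOn ℝ (Set.Icc (0:ℝ) T ×ˢ Set.Icc l₁ l₂) :=
    (uniqueDiffOn_Icc hT).prod (uniqueDiffOn_Icc hl)
  obtain ⟨C0, hC0⟩ := hJbdd
  have hC : ∀ z, |J z| ≤ C0 := fun z => by rw [abs_of_nonneg (hJnn z)]; exact hC0 z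
  -- bounds on ubar, ulow
  obtain ⟨Cb, hCb⟩ := (isCompact_Icc.prod isCompact_Icc).exists_bound_of_continuousOn
    hubar.continuousOn
  obtain ⟨Cl, hCl⟩ := (isCompact_Icc.prod isCompact_Icc).exists_bound_of_continuousOn
    hulow.continuousOn
  set B : ℝ := max Cb Cl with hB
  have hmemB : ∀ t ∈ Set.Icc (0:ℝ) T, ∀ x ∈ Set.Icc l₁ l₂,
      ubar t x ∈ Set.Icc (-B) B ∧ ulow t x ∈ Set.Icc (-B) B := by
    intro t ht x hx
    have h1 := hCb (t, x) ⟨ht, hx⟩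
    have h2 := hCl (t, x) ⟨ht, hx⟩
    rw [Real.norm_eq_abs] at h1 h2
    constructor
    · have := abs_le.1 (le_trans h1 (le_max_left Cb Cl))
      exact ⟨this.1, this.2⟩
    · have := abs_le.1 (le_trans h2 (le_max_right Cb Cl))
      exact ⟨this.1, this.2⟩
  obtain ⟨K, hK⟩ := hflip (-B) B
  set lam : ℝ := K + 1 with hlam
  -- the main claim
  intro t₁ ht₁ x₁ hx₁
  by_contra hcon
  push_neg at hcon
  -- auxiliary time horizon
  set T' : ℝ := (t₁ + T) / 2 with hT'
  have hT'1 : t₁ < T' := by rw [hT']; linarith [ht₁.2]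
  have hT'2 : T' < T := by rw [hT']; linarith [ht₁.1]
  have hT'0 : 0 < T' := lt_trans ht₁.1 hT'1
  -- the weighted difference
  set R' : Set (ℝ × ℝ) := Set.Icc 0 T' ×ˢ Set.Icc l₁ l₂ with hR'
  set v : ℝ × ℝ → ℝ :=
    fun p => Real.exp (-lam * p.1) * (ubar p.1 p.2 - ulow p.1 p.2) with hv
  have hR'S : R' ⊆ Set.Icc (0:ℝ) T ×ˢ Set.Icc l₁ l₂ := by
    intro p hp
    exact ⟨⟨hp.1.1, le_trans hp.1.2 hT'2.le⟩, hp.2⟩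
  have hvc : ContinuousOn v R' := by
    rw [hv]
    exact ((Real.continuous_exp.comp (continuous_const.mul continuous_fst)).continuousOn).mul
      (((hubar.continuousOn).mono hR'S).sub ((hulow.continuousOn).mono hR'S))
  obtain ⟨⟨t₀, x₀⟩, hp₀R, hp₀min⟩ :=
    (isCompact_Icc.prod isCompact_Icc).exists_isMinOn
      ⟨(0, l₁), ⟨le_refl (0:ℝ), hT'0.le⟩, le_refl l₁, hl.le⟩ hvc
  have hmin' : ∀ p ∈ R', v (t₀, x₀) ≤ v p := fun p hp => hp₀min hp
  -- the minimum is negative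
  have hp1R : ((t₁, x₁) : ℝ × ℝ) ∈ R' :=
    ⟨⟨ht₁.1.le, hT'1.le⟩, Set.Ioo_subset_Icc_self hx₁⟩
  have hmin0 : v (t₀, x₀) < 0 := by
    refine lt_of_le_of_lt (hmin' (t₁, x₁) hp1R) ?_
    rw [hv]
    exact mul_neg_of_pos_of_neg (Real.exp_pos _) (by simpa using sub_neg.2 hcon)
  have ht₀T' : t₀ ∈ Set.Icc (0:ℝ) T' := hp₀R.1
  have hx₀I : x₀ ∈ Set.Icc l₁ l₂ := hp₀R.2
  -- t₀ > 0
  have ht₀pos : 0 < t₀ := by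
    rcases eq_or_lt_of_le ht₀T'.1 with h | h
    · exfalso
      have h0 : (0:ℝ) ≤ v (t₀, x₀) := by
        rw [hv, ← h]
        have := hinit x₀ hx₀I
        exact mul_nonneg (Real.exp_pos _).le (by simp only []; linarith [this.1, this.2])
      linarith
    · exact h
  have ht₀Ioo : t₀ ∈ Set.Ioo 0 T := ⟨ht₀pos, lt_of_le_of_lt ht₀T'.2 hT'2⟩
  -- x₀ > l₁
  have hx₀pos : l₁ < x₀ := by
    rcases eq_or_lt_of_le hx₀I.1 with h | h
    · exfalso
      have h0 : (0:ℝ) ≤ v (t₀, x₀) := by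
        rw [hv, ← h]
        have := hbd t₀ ht₀Ioo
        exact mul_nonneg (Real.exp_pos _).le (by simp only []; linarith [this.1, this.2])
      linarith
    · exact h
  have hx₀ : x₀ ∈ Set.Ioc l₁ l₂ := ⟨hx₀pos, hx₀I.2⟩
  have ht₀I : t₀ ∈ Set.Icc (0:ℝ) T := ⟨ht₀pos.le, ht₀Ioo.2.le⟩
  have hE0 : (0:ℝ) < Real.exp (-lam * t₀) := Real.exp_pos _
  set M : ℝ := ubar t₀ x₀ - ulow t₀ x₀ with hM
  have hMneg : M < 0 := by
    by_contra hMc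
    push_neg at hMc
    have : (0:ℝ) ≤ v (t₀, x₀) := by
      rw [hv]
      exact mul_nonneg hE0.le (by rw [← hM] at *; exact hMc)
    linarith
  -- spatial minimality of the difference at (t₀, x₀)
  have hWmin : ∀ y ∈ Set.Icc l₁ l₂, M ≤ ubar t₀ y - ulow t₀ y := by
    intro y hy
    have := hmin' (t₀, y) ⟨ht₀T', hy⟩
    rw [hv] at this
    simp only [] at this
    have := (mul_le_mul_iff_right₀ hE0).mp this
    linarith
  -- continuity of the slices
  have hgbarc : ContinuousOn (fun y => ubar t₀ y) (Set.Icc l₁ l₂) := by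
    have hcur : ContinuousOn (fun y : ℝ => ((t₀, y) : ℝ × ℝ)) (Set.Icc l₁ l₂) :=
      (continuous_const.prodMk continuous_id).continuousOn
    exact hubar.continuousOn.comp hcur (fun y hy => ⟨ht₀I, hy⟩)
  have hglowc : ContinuousOn (fun y => ulow t₀ y) (Set.Icc l₁ l₂) := by
    have hcur : ContinuousOn (fun y : ℝ => ((t₀, y) : ℝ × ℝ)) (Set.Icc l₁ l₂) :=
      (continuous_const.prodMk continuous_id).continuousOn
    exact hulow.continuousOn.comp hcur (fun y hy => ⟨ht₀I, hy⟩)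
  -- apply the extension lemma to ubar
  have hhc1 : ContinuousOn (fun x => f t₀ x (ubar t₀ x)) (Set.Icc l₁ l₂) := by
    have htrip : ContinuousOn (fun x : ℝ => ((t₀, x, ubar t₀ x) : ℝ × ℝ × ℝ))
        (Set.Icc l₁ l₂) :=
      continuousOn_const.prodMk (continuousOn_id.prodMk hgbarc)
    exact hfc.comp_continuousOn htrip
  have E1 := extend_ineq (u := ubar) (h := fun x => f t₀ x (ubar t₀ x)) (d := d) (q := q)
    hl hT ht₀Ioo hJc hC hubar hhc1
    (fun x hx => hup t₀ ht₀Ioo x hx) x₀ hx₀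
  -- apply the extension lemma to -ulow
  have hu2 : ContDiffOn ℝ 1 (fun p : ℝ × ℝ => -ulow p.1 p.2)
      (Set.Icc 0 T ×ˢ Set.Icc l₁ l₂) := hulow.neg
  have hhc2 : ContinuousOn (fun x => -(f t₀ x (ulow t₀ x))) (Set.Icc l₁ l₂) := by
    have htrip : ContinuousOn (fun x : ℝ => ((t₀, x, ulow t₀ x) : ℝ × ℝ × ℝ))
        (Set.Icc l₁ l₂) :=
      continuousOn_const.prodMk (continuousOn_id.prodMk hglowc)
    exact (hfc.comp_continuousOn htrip).neg
  have hineq2 : ∀ x ∈ Set.Ioo l₁ l₂,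
      d * (∫ y in Set.Ioo l₁ l₂, J (x - y) * (-ulow t₀ y - -ulow t₀ x))
        - q * deriv (fun y => -ulow t₀ y) x + -(f t₀ x (ulow t₀ x))
        ≤ deriv (fun s => -ulow s x) t₀ := by
    intro x hx
    have hlw := hlow t₀ ht₀Ioo x hx
    have hderiv1 : deriv (fun s => -ulow s x) t₀ = -deriv (fun s => ulow s x) t₀ :=
      deriv.neg
    have hderiv2 : deriv (fun y => -ulow t₀ y) x = -deriv (fun y => ulow t₀ y) x :=
      deriv.neg
    have hintneg : (∫ y in Set.Ioo l₁ l₂, J (x - y) * (-ulow t₀ y - -ulow t₀ x))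
        = -∫ y in Set.Ioo l₁ l₂, J (x - y) * (ulow t₀ y - ulow t₀ x) := by
      rw [← integral_neg]
      congr 1
      funext y
      ring
    rw [hderiv1, hderiv2, hintneg]
    linarith
  have E2 : d * (∫ y in Set.Ioo l₁ l₂, J (x₀ - y) * (-ulow t₀ y - -ulow t₀ x₀))
      - q * (fderivWithin ℝ (fun p : ℝ × ℝ => -ulow p.1 p.2)
          (Set.Icc 0 T ×ˢ Set.Icc l₁ l₂) (t₀, x₀)) (0, 1)
      + -(f t₀ x₀ (ulow t₀ x₀))
      ≤ (fderivWithin ℝ (fun p : ℝ × ℝ => -ulow p.1 p.2)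
          (Set.Icc 0 T ×ˢ Set.Icc l₁ l₂) (t₀, x₀)) (1, 0) :=
    extend_ineq (u := fun t x => -ulow t x) (h := fun x => -(f t₀ x (ulow t₀ x)))
      hl hT ht₀Ioo hJc hC hu2 hhc2 hineq2 x₀ hx₀
  -- abbreviations for the derivatives
  set Ab := fderivWithin ℝ (fun p : ℝ × ℝ => ubar p.1 p.2)
    (Set.Icc 0 T ×ˢ Set.Icc l₁ l₂) (t₀, x₀) with hAb
  set Al := fderivWithin ℝ (fun p : ℝ × ℝ => -ulow p.1 p.2)
    (Set.Icc 0 T ×ˢ Set.Icc l₁ l₂) (t₀, x₀) with hAl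
  have hdub : DifferentiableOn ℝ (fun p : ℝ × ℝ => ubar p.1 p.2)
      (Set.Icc 0 T ×ˢ Set.Icc l₁ l₂) := hubar.differentiableOn one_ne_zero
  have hdul : DifferentiableOn ℝ (fun p : ℝ × ℝ => -ulow p.1 p.2)
      (Set.Icc 0 T ×ˢ Set.Icc l₁ l₂) := hu2.differentiableOn one_ne_zero
  -- time derivative facts
  have htb : HasDerivAt (fun s => ubar s x₀) (Ab (1, 0)) t₀ :=
    (slice_fst hdub ht₀I hx₀I).hasDerivAt (Icc_mem_nhds ht₀Ioo.1 ht₀Ioo.2)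
  have htl : HasDerivAt (fun s => -ulow s x₀) (Al (1, 0)) t₀ :=
    (slice_fst hdul ht₀I hx₀I).hasDerivAt (Icc_mem_nhds ht₀Ioo.1 ht₀Ioo.2)
  have hWt : HasDerivAt (fun s => ubar s x₀ - ulow s x₀) (Ab (1, 0) + Al (1, 0)) t₀ := by
    have hfe : (fun s => ubar s x₀ - ulow s x₀) = (fun s => ubar s x₀ + -ulow s x₀) :=
      funext fun s => sub_eq_add_neg _ _
    rw [hfe]
    exact htb.add htl
  have hlin : HasDerivAt (fun s : ℝ => -lam * s) (-lam) t₀ := by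
    simpa using (hasDerivAt_id t₀).const_mul (-lam)
  have hexp : HasDerivAt (fun s => Real.exp (-lam * s)) (Real.exp (-lam * t₀) * -lam) t₀ :=
    hlin.exp
  have hphi : HasDerivAt (fun s => Real.exp (-lam * s) * (ubar s x₀ - ulow s x₀))
      (Real.exp (-lam * t₀) * -lam * (ubar t₀ x₀ - ulow t₀ x₀)
        + Real.exp (-lam * t₀) * (Ab (1, 0) + Al (1, 0))) t₀ := hexp.mul hWt
  have hphimin : ∀ s ∈ Set.Icc 0 t₀,
      Real.exp (-lam * t₀) * (ubar t₀ x₀ - ulow t₀ x₀)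
        ≤ Real.exp (-lam * s) * (ubar s x₀ - ulow s x₀) := by
    intro s hs
    have := hmin' (s, x₀) ⟨⟨hs.1, le_trans hs.2 ht₀T'.2⟩, hx₀I⟩
    rw [hv] at this
    simp only [] at this
    exact this
  have hTineq : Ab (1, 0) + Al (1, 0) ≤ lam * M := by
    have hd0 := slope_min_left ht₀pos hphi.hasDerivWithinAt hphimin
    have hr : Real.exp (-lam * t₀) * -lam * (ubar t₀ x₀ - ulow t₀ x₀)
        = -(Real.exp (-lam * t₀) * (lam * M)) := by rw [hM]; ring
    have h4 : Real.exp (-lam * t₀) * (Ab (1, 0) + Al (1, 0))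
        ≤ Real.exp (-lam * t₀) * (lam * M) := by linarith
    exact (mul_le_mul_iff_right₀ hE0).mp h4
  -- spatial derivative facts
  have hxb : HasDerivWithinAt (fun y => ubar t₀ y) (Ab (0, 1)) (Set.Icc l₁ l₂) x₀ :=
    slice_snd hdub ht₀I hx₀I
  have hxl : HasDerivWithinAt (fun y => -ulow t₀ y) (Al (0, 1)) (Set.Icc l₁ l₂) x₀ :=
    slice_snd hdul ht₀I hx₀I
  have hWx : HasDerivWithinAt (fun y => ubar t₀ y - ulow t₀ y) (Ab (0, 1) + Al (0, 1))
      (Set.Icc l₁ l₂) x₀ := by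
    have hfe : (fun y => ubar t₀ y - ulow t₀ y) = (fun y => ubar t₀ y + -ulow t₀ y) :=
      funext fun y => sub_eq_add_neg _ _
    rw [hfe]
    exact hxb.add hxl
  have hXineq : Ab (0, 1) + Al (0, 1) ≤ 0 := by
    refine slope_min_left hx₀pos (hWx.mono (Set.Icc_subset_Icc le_rfl hx₀.2)) ?_
    intro s hs
    have := hWmin s ⟨hs.1, le_trans hs.2 hx₀.2⟩
    rw [← hM]
    exact this
  -- nonnegativity of the combined nonlocal term
  have hi1 : IntegrableOn (fun y => J (x₀ - y) * (ubar t₀ y - ubar t₀ x₀))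
      (Set.Ioo l₁ l₂) volume :=
    (((hJc.comp (continuous_const.sub continuous_id)).continuousOn.mul
      (hgbarc.sub continuousOn_const)).integrableOn_Icc).mono_set Set.Ioo_subset_Icc_self
  have hi2 : IntegrableOn (fun y => J (x₀ - y) * (-ulow t₀ y - -ulow t₀ x₀))
      (Set.Ioo l₁ l₂) volume :=
    (((hJc.comp (continuous_const.sub continuous_id)).continuousOn.mul
      ((hglowc.neg).sub continuousOn_const)).integrableOn_Icc).mono_set
      Set.Ioo_subset_Icc_self
  have hIsum : 0 ≤ (∫ y in Set.Ioo l₁ l₂, J (x₀ - y) * (ubar t₀ y - ubar t₀ x₀))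
      + (∫ y in Set.Ioo l₁ l₂, J (x₀ - y) * (-ulow t₀ y - -ulow t₀ x₀)) := by
    rw [← integral_add hi1 hi2]
    refine setIntegral_nonneg measurableSet_Ioo (fun y hy => ?_)
    have hWy := hWmin y (Set.Ioo_subset_Icc_self hy)
    have hnn : (0:ℝ) ≤ J (x₀ - y) * ((ubar t₀ y - ulow t₀ y) - (ubar t₀ x₀ - ulow t₀ x₀)) := by
      refine mul_nonneg (hJnn (x₀ - y)) ?_
      rw [hM] at hWy
      linarith
    have heq : J (x₀ - y) * (ubar t₀ y - ubar t₀ x₀)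
        + J (x₀ - y) * (-ulow t₀ y - -ulow t₀ x₀)
        = J (x₀ - y) * ((ubar t₀ y - ulow t₀ y) - (ubar t₀ x₀ - ulow t₀ x₀)) := by ring
    rw [heq]
    exact hnn
  have hdnn : 0 ≤ d * ((∫ y in Set.Ioo l₁ l₂, J (x₀ - y) * (ubar t₀ y - ubar t₀ x₀))
      + (∫ y in Set.Ioo l₁ l₂, J (x₀ - y) * (-ulow t₀ y - -ulow t₀ x₀))) :=
    mul_nonneg hd.le hIsum
  have hqn : q * (Ab (0, 1) + Al (0, 1)) ≤ 0 := by
    have h0 := mul_nonneg hq.le (neg_nonneg.2 hXineq)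
    have hr2 : q * -(Ab (0, 1) + Al (0, 1)) = -(q * (Ab (0, 1) + Al (0, 1))) := by ring
    linarith
  -- Lipschitz estimate
  have hmem1 := (hmemB t₀ ht₀I x₀ hx₀I).1
  have hmem2 := (hmemB t₀ ht₀I x₀ hx₀I).2
  have hDf := (hK t₀ ht₀Ioo.1.le x₀ hx₀I _ hmem1 _ hmem2).1
  have h5 : K * M ≤ f t₀ x₀ (ubar t₀ x₀) - f t₀ x₀ (ulow t₀ x₀) := by
    rw [← hM] at hDf
    have habsM : |M| = -M := abs_of_neg hMneg
    have h6 := neg_abs_le (f t₀ x₀ (ubar t₀ x₀) - f t₀ x₀ (ulow t₀ x₀))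
    have h7 : K * |M| = -(K * M) := by rw [habsM]; ring
    linarith
  -- final contradiction
  have hlamM : lam * M = K * M + M := by rw [hlam]; ring
  linarith [E1, E2, hTineq, h5, hdnn, hqn, hlamM, hMneg]
end

section
/- Let T > 0, let c ∈ L∞((0,T)×Ω) and let u ∈ C¹([0,T]×[l₁,l₂]) satisfy u_t(t,x) ≥ d(∫_Ω J(x−y)u(t,y)dy − u(t,x)) − q u_x(t,x) + c(t,x)u(t,x) for all (t,x) ∈ (0,T)×Ω, u(t,l₁) ≥ 0 for all t ∈ (0,T), and u(0,x) = u₀(x) ≥ 0 on [l₁,l₂]. Then u(t,x) ≥ 0 on [0,T]×[l₁,l₂]; moreover, if u₀ ≢ 0 on [l₁,l₂], then u(t,x) > 0 for all (t,x) ∈ (0,T]×(l₁,l₂]. -/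
open MeasureTheory Set

section helpers
variable {l₁ l₂ T : ℝ} {J : ℝ → ℝ} {u : ℝ → ℝ → ℝ}

lemma slice_cont (hu : ContinuousOn (fun p : ℝ × ℝ => u p.1 p.2) (Icc 0 T ×ˢ Icc l₁ l₂))
    {t : ℝ} (ht : t ∈ Icc 0 T) : ContinuousOn (fun y => u t y) (Icc l₁ l₂) :=
  hu.comp ((continuous_const.prodMk continuous_id).continuousOn) (fun _ hy => ⟨ht, hy⟩)

lemma integrable_slice (hJc : Continuous J)
    (hu : ContinuousOn (fun p : ℝ × ℝ => u p.1 p.2) (Icc 0 T ×ˢ Icc l₁ l₂))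
    {t : ℝ} (ht : t ∈ Icc 0 T) (x : ℝ) :
    IntegrableOn (fun y => J (x - y) * u t y) (Ioo l₁ l₂) := by
  have h1 : ContinuousOn (fun y => J (x - y) * u t y) (Icc l₁ l₂) :=
    ((hJc.comp (continuous_const.sub continuous_id)).continuousOn).mul (slice_cont hu ht)
  exact h1.integrableOn_Icc.mono_set Ioo_subset_Icc_self

lemma intJ_nonneg (hJnn : ∀ x, 0 ≤ J x) (x : ℝ) :
    0 ≤ ∫ y in Ioo l₁ l₂, J (x - y) :=
  setIntegral_nonneg measurableSet_Ioo (fun y _ => hJnn (x - y))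

lemma intJ_le_one (hJnn : ∀ x, 0 ≤ J x) (hJint : Integrable J) (hJ1 : (∫ x, J x) = 1) (x : ℝ) :
    (∫ y in Ioo l₁ l₂, J (x - y)) ≤ 1 := by
  have hJx : Integrable (fun y => J (x - y)) := (integrable_comp_sub_left J x).mpr hJint
  calc (∫ y in Ioo l₁ l₂, J (x - y)) ≤ ∫ y, J (x - y) := by
        apply setIntegral_le_integral hJx
        filter_upwards with a using hJnn _
    _ = ∫ y, J y := integral_sub_left_eq_self J volume x
    _ = 1 := hJ1

lemma I_lower (hJc : Continuous J) (hJnn : ∀ x, 0 ≤ J x)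
    (hJint : Integrable J) (hJ1 : (∫ x, J x) = 1)
    (hu : ContinuousOn (fun p : ℝ × ℝ => u p.1 p.2) (Icc 0 T ×ˢ Icc l₁ l₂))
    {t : ℝ} (ht : t ∈ Icc 0 T) (x β : ℝ) (hβ : β ≤ 0)
    (hub : ∀ y ∈ Ioo l₁ l₂, β ≤ u t y) :
    β ≤ ∫ y in Ioo l₁ l₂, J (x - y) * u t y := by
  have hJx : Integrable (fun y => J (x - y)) := (integrable_comp_sub_left J x).mpr hJint
  have h1 : (∫ y in Ioo l₁ l₂, J (x - y) * β) ≤ ∫ y in Ioo l₁ l₂, J (x - y) * u t y :=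
    setIntegral_mono_on ((hJx.mul_const β).integrableOn)
      (integrable_slice hJc hu ht x) measurableSet_Ioo
      (fun y hy => mul_le_mul_of_nonneg_left (hub y hy) (hJnn _))
  have h2 : (∫ y in Ioo l₁ l₂, J (x - y) * β) = (∫ y in Ioo l₁ l₂, J (x - y)) * β :=
    integral_mul_const _ _
  nlinarith [intJ_le_one (l₁ := l₁) (l₂ := l₂) hJnn hJint hJ1 x,
    intJ_nonneg (l₁ := l₁) (l₂ := l₂) hJnn x]

lemma line_deriv (hu : ContDiffOn ℝ 1 (fun p : ℝ × ℝ => u p.1 p.2) (Icc 0 T ×ˢ Icc l₁ l₂))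
    (q b : ℝ) {s₀ : ℝ} (hs : s₀ ∈ Ioo 0 T) (hx : b + q * s₀ ∈ Ioo l₁ l₂) :
    HasDerivAt (fun s => u s (b + q * s))
      (deriv (fun s' => u s' (b + q * s₀)) s₀ + q * deriv (fun y => u s₀ y) (b + q * s₀)) s₀ := by
  set x₀ := b + q * s₀ with hx₀
  have hmem : ((s₀, x₀) : ℝ × ℝ) ∈ interior (Set.Icc 0 T ×ˢ Set.Icc l₁ l₂) := by
    rw [interior_prod_eq, interior_Icc, interior_Icc]; exact ⟨hs, hx⟩
  have hdiff : DifferentiableAt ℝ (fun p : ℝ × ℝ => u p.1 p.2) (s₀, x₀) :=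
    (hu.differentiableOn one_ne_zero).differentiableAt (mem_interior_iff_mem_nhds.mp hmem)
  have hF := hdiff.hasFDerivAt
  set L := fderiv ℝ (fun p : ℝ × ℝ => u p.1 p.2) (s₀, x₀) with hL
  have h1 : HasDerivAt (fun s => u s x₀) (L (1, 0)) s₀ := by
    have hγ : HasDerivAt (fun s : ℝ => ((s, x₀) : ℝ × ℝ)) (1, 0) s₀ :=
      (hasDerivAt_id s₀).prodMk (hasDerivAt_const _ _)
    simpa [Function.comp_def] using hF.comp_hasDerivAt s₀ hγ
  have h2 : HasDerivAt (fun y => u s₀ y) (L (0, 1)) x₀ := by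
    have hγ : HasDerivAt (fun y : ℝ => ((s₀, y) : ℝ × ℝ)) (0, 1) x₀ :=
      (hasDerivAt_const _ _).prodMk (hasDerivAt_id x₀)
    simpa [Function.comp_def] using hF.comp_hasDerivAt x₀ hγ
  have hγ : HasDerivAt (fun s : ℝ => ((s, b + q * s) : ℝ × ℝ)) (1, q) s₀ := by
    refine (hasDerivAt_id s₀).prodMk ?_
    simpa using ((hasDerivAt_id s₀).const_mul q).const_add b
  have hcomp := hF.comp_hasDerivAt s₀ hγ
  have hLval : L (1, q) = L (1, 0) + q * L (0, 1) := by
    have : ((1 : ℝ), q) = (1, 0) + q • ((0 : ℝ), (1 : ℝ)) := by simp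
    rw [this, map_add, ContinuousLinearMap.map_smul]; simp [mul_comm]
  rw [h1.deriv, h2.deriv]
  simpa [hLval, Function.comp_def] using hcomp

lemma exp_line_deriv (hu : ContDiffOn ℝ 1 (fun p : ℝ × ℝ => u p.1 p.2) (Icc 0 T ×ˢ Icc l₁ l₂))
    (K q b : ℝ) {s₀ : ℝ} (hs : s₀ ∈ Ioo 0 T) (hx : b + q * s₀ ∈ Ioo l₁ l₂) :
    HasDerivAt (fun s => Real.exp (K * s) * u s (b + q * s))
      (Real.exp (K * s₀) * (K * u s₀ (b + q * s₀) +
        (deriv (fun s' => u s' (b + q * s₀)) s₀ + q * deriv (fun y => u s₀ y) (b + q * s₀)))) s₀ := by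
  have h1 : HasDerivAt (fun s => Real.exp (K * s)) (K * Real.exp (K * s₀)) s₀ := by
    simpa [mul_comm, Function.comp_def] using (Real.hasDerivAt_exp (K * s₀)).comp s₀ ((hasDerivAt_id s₀).const_mul K)
  have h2 := line_deriv hu q b hs hx
  have h3 := h1.mul h2
  exact h3.congr_deriv (by ring)


lemma part1 (l₁ l₂ d q T : ℝ) (J : ℝ → ℝ) (c u : ℝ → ℝ → ℝ)
    (hl : l₁ < l₂) (hd : 0 < d) (hq : 0 < q) (hT : 0 < T)
    (hJc : Continuous J) (hJnn : ∀ x, 0 ≤ J x)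
    (hJint : Integrable J) (hJ1 : (∫ x, J x) = 1)
    (hc : ∃ C, ∀ t ∈ Ioo 0 T, ∀ x ∈ Ioo l₁ l₂, |c t x| ≤ C)
    (hu : ContDiffOn ℝ 1 (fun p : ℝ × ℝ => u p.1 p.2) (Icc 0 T ×ˢ Icc l₁ l₂))
    (hineq : ∀ t ∈ Set.Ioo 0 T, ∀ x ∈ Set.Ioo l₁ l₂,
      deriv (fun s => u s x) t ≥
        d * ((∫ y in Set.Ioo l₁ l₂, J (x - y) * u t y) - u t x)
          - q * deriv (fun y => u t y) x + c t x * u t x)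
    (hbd : ∀ t ∈ Ioo 0 T, 0 ≤ u t l₁)
    (hinit0 : ∀ x ∈ Icc l₁ l₂, 0 ≤ u 0 x) :
    ∀ t ∈ Icc 0 T, ∀ x ∈ Icc l₁ l₂, 0 ≤ u t x := by
  obtain ⟨C₀, hC₀⟩ := hc
  obtain ⟨C, hCdef⟩ : ∃ C', C' = max C₀ 0 := ⟨_, rfl⟩
  have hCnn : 0 ≤ C := hCdef ▸ le_max_right _ _
  have hC : ∀ t ∈ Ioo 0 T, ∀ x ∈ Ioo l₁ l₂, |c t x| ≤ C :=
    fun t ht x hx => (hC₀ t ht x hx).trans (hCdef ▸ le_max_left _ _)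
  obtain ⟨K, hKdef⟩ : ∃ K', K' = C + 1 := ⟨_, rfl⟩
  have hcont := hu.continuousOn
  -- boundary nonnegativity for all t ∈ [0,T]
  have hbd' : ∀ t ∈ Icc 0 T, 0 ≤ u t l₁ := by
    have hgc : ContinuousOn (fun t => u t l₁) (Icc 0 T) :=
      hcont.comp ((continuous_id.prodMk continuous_const).continuousOn)
        (fun s hs => ⟨hs, ⟨le_rfl, hl.le⟩⟩)
    intro t ht
    rcases ht.1.lt_or_eq with h0 | h0
    swap
    · exact h0 ▸ hinit0 l₁ ⟨le_rfl, hl.le⟩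
    rcases ht.2.lt_or_eq with hTt | hTt
    · exact hbd t ⟨h0, hTt⟩
    · subst hTt
      have hne : (nhdsWithin t (Ioo 0 t)).NeBot := by
        rw [← mem_closure_iff_nhdsWithin_neBot, closure_Ioo h0.ne]
        exact ⟨h0.le, le_rfl⟩
      have htend : Filter.Tendsto (fun s => u s l₁) (nhdsWithin t (Ioo 0 t)) (nhds (u t l₁)) :=
        (hgc t ht).mono_left (nhdsWithin_mono _ Ioo_subset_Icc_self)
      exact ge_of_tendsto htend
        (by filter_upwards [self_mem_nhdsWithin] with s hs using hbd s hs)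
  have main : ∀ ε : ℝ, 0 < ε → ∀ t ∈ Icc 0 T, ∀ x ∈ Icc l₁ l₂,
      0 < Real.exp (-K * t) * u t x + ε * Real.exp t := by
    intro ε hε
    by_contra hcon
    push_neg at hcon
    obtain ⟨t₁, ht₁, x₁, hx₁, hle⟩ := hcon
    have hzc : ContinuousOn (fun p : ℝ × ℝ => Real.exp (-K * p.1) * u p.1 p.2 + ε * Real.exp p.1)
        (Icc 0 T ×ˢ Icc l₁ l₂) := by
      apply ContinuousOn.add
      · exact ((Real.continuous_exp.comp (continuous_const.mul continuous_fst)).continuousOn).mul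
          hcont
      · exact (continuous_const.mul (Real.continuous_exp.comp continuous_fst)).continuousOn
    obtain ⟨⟨t₀, x₀⟩, hp₀R, hp₀min'⟩ := (isCompact_Icc.prod isCompact_Icc).exists_isMinOn
      (⟨(0, l₁), ⟨⟨le_rfl, hT.le⟩, ⟨le_rfl, hl.le⟩⟩⟩ : (Icc (0:ℝ) T ×ˢ Icc l₁ l₂).Nonempty) hzc
    rw [isMinOn_iff] at hp₀min'
    have ht₀ : t₀ ∈ Icc 0 T := hp₀R.1
    have hx₀ : x₀ ∈ Icc l₁ l₂ := hp₀R.2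
    obtain ⟨μ, hμval⟩ : ∃ μ', μ' = Real.exp (-K * t₀) * u t₀ x₀ + ε * Real.exp t₀ := ⟨_, rfl⟩
    have hmin : ∀ s ∈ Icc (0:ℝ) T, ∀ y ∈ Icc l₁ l₂,
        μ ≤ Real.exp (-K * s) * u s y + ε * Real.exp s := by
      intro s hs y hy
      rw [hμval]
      exact hp₀min' (s, y) ⟨hs, hy⟩
    have hμ : μ ≤ 0 := le_trans (hmin t₁ ht₁ x₁ hx₁) hle
    -- t₀ > 0
    have ht₀pos : 0 < t₀ := by
      rcases ht₀.1.lt_or_eq with h | h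
      · exact h
      · exfalso
        have h0 : μ = u 0 x₀ + ε := by rw [hμval, ← h]; simp
        have := hinit0 x₀ hx₀
        linarith
    -- x₀ > l₁
    have hx₀pos : l₁ < x₀ := by
      rcases hx₀.1.lt_or_eq with h | h
      · exact h
      · exfalso
        have h0 : μ = Real.exp (-K * t₀) * u t₀ l₁ + ε * Real.exp t₀ := by rw [hμval, ← h]
        have h1 := hbd' t₀ ht₀
        have h2 := mul_nonneg (Real.exp_pos (-K * t₀)).le h1
        have h3 := mul_pos hε (Real.exp_pos t₀)
        linarith
    -- the characteristic segment
    obtain ⟨b, hbdef⟩ : ∃ b', b' = x₀ - q * t₀ := ⟨_, rfl⟩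
    have hbx : b + q * t₀ = x₀ := by rw [hbdef]; ring
    obtain ⟨Φ, hΦdef⟩ : ∃ Φ' : ℝ → ℝ,
        Φ' = fun s => Real.exp (-K * s) * u s (b + q * s) + ε * Real.exp s := ⟨_, rfl⟩
    have hΦval : ∀ s, Φ s = Real.exp (-K * s) * u s (b + q * s) + ε * Real.exp s := by
      intro s; rw [hΦdef]
    have hΦt₀ : Φ t₀ = μ := by rw [hΦval, hbx, hμval]
    obtain ⟨a, hadef⟩ : ∃ a', a' = max (t₀ / 2) (t₀ - (x₀ - l₁) / (2 * q)) := ⟨_, rfl⟩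
    have ha_pos : 0 < a := by
      rw [hadef]; exact lt_of_lt_of_le (by linarith) (le_max_left _ _)
    have ha_lt : a < t₀ := by
      rw [hadef]
      apply max_lt (by linarith)
      have : 0 < (x₀ - l₁) / (2 * q) := div_pos (by linarith) (by linarith)
      linarith
    have ha_ge : t₀ - (x₀ - l₁) / (2 * q) ≤ a := hadef ▸ le_max_right _ _
    have hqx : q * ((x₀ - l₁) / (2 * q)) = (x₀ - l₁) / 2 := by field_simp
    have hmaps : ∀ s ∈ Icc a t₀, (s ∈ Icc 0 T ∧ b + q * s ∈ Icc l₁ l₂) := by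
      intro s hs
      have h1 : a ≤ s := hs.1
      have h2 : s ≤ t₀ := hs.2
      have h3 : t₀ - (x₀ - l₁) / (2 * q) ≤ s := le_trans ha_ge h1
      refine ⟨⟨le_trans ha_pos.le h1, le_trans h2 ht₀.2⟩, ?_, ?_⟩
      · have h4 : q * (t₀ - s) ≤ q * ((x₀ - l₁) / (2 * q)) :=
          mul_le_mul_of_nonneg_left (by linarith) hq.le
        rw [hqx] at h4
        have := hx₀.1
        linarith [hbdef]
      · have h5 := mul_nonneg hq.le (sub_nonneg.mpr h2)
        have := hx₀.2
        linarith [hbx]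
    have hΦcont : ContinuousOn Φ (Icc a t₀) := by
      rw [hΦdef]
      apply ContinuousOn.add
      · apply ContinuousOn.mul
        · exact (Real.continuous_exp.comp (continuous_const.mul continuous_id)).continuousOn
        · exact hcont.comp ((continuous_id.prodMk (continuous_const.add
            (continuous_const.mul continuous_id))).continuousOn)
            (fun s hs => ⟨(hmaps s hs).1, (hmaps s hs).2⟩)
      · exact (continuous_const.mul Real.continuous_exp).continuousOn
    obtain ⟨δ', hδ'def⟩ : ∃ x, x = ε / (d + 1) := ⟨_, rfl⟩
    have hδ'pos : 0 < δ' := by rw [hδ'def]; positivity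
    have he6 : (d + 1) * δ' = ε := by rw [hδ'def]; field_simp
    have he6' : δ' + d * δ' = ε := by linarith [he6, mul_comm d δ']
    have hdδ' : 0 < d * δ' := mul_pos hd hδ'pos
    have hδ'lt : δ' < ε := by linarith
    -- continuity: Φ < μ + δ' near t₀
    obtain ⟨η, hηpos, hη⟩ : ∃ η > 0, ∀ s ∈ Metric.ball t₀ η ∩ Icc a t₀, Φ s < μ + δ' := by
      have hcw : ContinuousWithinAt Φ (Icc a t₀) t₀ := hΦcont t₀ ⟨ha_lt.le, le_rfl⟩
      have hmem : {s | Φ s < μ + δ'} ∈ nhdsWithin t₀ (Icc a t₀) := by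
        apply hcw (Iio_mem_nhds _)
        rw [hΦt₀]; linarith
      rw [Metric.mem_nhdsWithin_iff] at hmem
      obtain ⟨η, hηpos, hsub⟩ := hmem
      exact ⟨η, hηpos, fun s hs => hsub hs⟩
    obtain ⟨lo, hlodef⟩ : ∃ x, x = max a (t₀ - η / 2) := ⟨_, rfl⟩
    have hlo_lt : lo < t₀ := by rw [hlodef]; exact max_lt ha_lt (by linarith)
    have hlo_ge : a ≤ lo := hlodef ▸ le_max_left _ _
    have hlo_ge2 : t₀ - η / 2 ≤ lo := hlodef ▸ le_max_right _ _
    have hΦsmall : ∀ s ∈ Icc lo t₀, Φ s ≤ μ + δ' := by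
      intro s hs
      apply le_of_lt
      apply hη
      refine ⟨?_, ⟨le_trans hlo_ge hs.1, hs.2⟩⟩
      rw [Metric.mem_ball, Real.dist_eq, abs_sub_lt_iff]
      constructor
      · linarith [hs.1, hs.2]
      · linarith [hs.1, hs.2]
    -- strict monotonicity of Φ on [lo, t₀]
    have hgrow : StrictMonoOn Φ (Icc lo t₀) := by
      apply strictMonoOn_of_deriv_pos (convex_Icc lo t₀)
        (hΦcont.mono (Icc_subset_Icc hlo_ge le_rfl))
      intro s hs
      rw [interior_Icc] at hs
      have hsIcc : s ∈ Icc lo t₀ := ⟨hs.1.le, hs.2.le⟩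
      have hsa : s ∈ Icc a t₀ := ⟨le_trans hlo_ge hs.1.le, hs.2.le⟩
      have hsT : s ∈ Ioo 0 T :=
        ⟨lt_of_lt_of_le ha_pos (hlo_ge.trans hs.1.le), lt_of_lt_of_le hs.2 ht₀.2⟩
      have hxs : b + q * s ∈ Ioo l₁ l₂ := by
        have h3 : t₀ - (x₀ - l₁) / (2 * q) ≤ s := le_trans ha_ge hsa.1
        constructor
        · have h4 : q * (t₀ - s) ≤ q * ((x₀ - l₁) / (2 * q)) :=
            mul_le_mul_of_nonneg_left (by linarith) hq.le
          rw [hqx] at h4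
          linarith [hbdef, hx₀pos]
        · have h5 : q * s < q * t₀ := by
            exact mul_lt_mul_of_pos_left hs.2 hq
          linarith [hbx, hx₀.2]
      -- derivative of Φ at s
      have hD := (exp_line_deriv hu (-K) q b hsT hxs).add
        ((Real.hasDerivAt_exp s).const_mul ε)
      rw [hΦdef, (show HasDerivAt (fun s => Real.exp (-K * s) * u s (b + q * s) + ε * Real.exp s) _ s from hD).deriv]
      have hi := hineq s hsT (b + q * s) hxs
      have hcs : |c s (b + q * s)| ≤ C := hC s hsT (b + q * s) hxs
      have hEneg := Real.exp_pos (-K * s)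
      have hEpos := Real.exp_pos (K * s)
      have hes := Real.exp_pos s
      have hes1 : 1 ≤ Real.exp s := Real.one_le_exp hsT.1.le
      have hEE : Real.exp (-K * s) * Real.exp (K * s) = 1 := by
        rw [← Real.exp_add]; ring_nf; exact Real.exp_zero
      have hA : ε ≤ ε * Real.exp s := by
        have := mul_le_mul_of_nonneg_left hes1 hε.le
        linarith
      have hΦs : Φ s ≤ μ + δ' := hΦsmall s hsIcc
      rw [hΦval] at hΦs
      have e5 : Real.exp (-K * s) * u s (b + q * s) ≤ μ + δ' - ε * Real.exp s := by linarith
      -- u s (b+q*s) is negative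
      have hχneg : u s (b + q * s) < 0 := by
        by_contra hh
        push_neg at hh
        have := mul_nonneg hEneg.le hh
        linarith
      -- lower bound on the integral
      have hβ : Real.exp (K * s) * (μ - ε * Real.exp s) ≤ 0 :=
        mul_nonpos_of_nonneg_of_nonpos hEpos.le (by linarith)
      have hub : ∀ y ∈ Ioo l₁ l₂, Real.exp (K * s) * (μ - ε * Real.exp s) ≤ u s y := by
        intro y hy
        have h6 := hmin s ⟨hsT.1.le, hsT.2.le⟩ y (Ioo_subset_Icc_self hy)
        have h7 : Real.exp (K * s) * (μ - ε * Real.exp s) ≤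
            Real.exp (K * s) * (Real.exp (-K * s) * u s y) :=
          mul_le_mul_of_nonneg_left (by linarith) hEpos.le
        have h8 : Real.exp (K * s) * (Real.exp (-K * s) * u s y) = u s y := by
          calc Real.exp (K * s) * (Real.exp (-K * s) * u s y)
              = (Real.exp (-K * s) * Real.exp (K * s)) * u s y := by ring
            _ = u s y := by rw [hEE]; ring
        linarith
      have hI : Real.exp (K * s) * (μ - ε * Real.exp s) ≤
          ∫ y in Ioo l₁ l₂, J ((b + q * s) - y) * u s y :=
        I_lower hJc hJnn hJint hJ1 hcont ⟨hsT.1.le, hsT.2.le⟩ _ _ hβ hub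
      -- assemble
      have hcle : c s (b + q * s) ≤ C := (abs_le.mp hcs).2
      have hcu : C * u s (b + q * s) ≤ c s (b + q * s) * u s (b + q * s) :=
        mul_le_mul_of_nonpos_right hcle hχneg.le
      have hdI : d * (Real.exp (K * s) * (μ - ε * Real.exp s)) ≤
          d * ∫ y in Ioo l₁ l₂, J ((b + q * s) - y) * u s y :=
        mul_le_mul_of_nonneg_left hI hd.le
      have e1 : deriv (fun s' => u s' (b + q * s)) s + q * deriv (fun y => u s y) (b + q * s) ≥
          d * (Real.exp (K * s) * (μ - ε * Real.exp s)) - d * u s (b + q * s)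
            + C * u s (b + q * s) := by
        have hexp1 : d * ((∫ y in Ioo l₁ l₂, J ((b + q * s) - y) * u s y) - u s (b + q * s)) =
            d * (∫ y in Ioo l₁ l₂, J ((b + q * s) - y) * u s y) - d * u s (b + q * s) := by ring
        linarith [hi, hcu, hdI, hexp1]
      have e2 : Real.exp (-K * s) * (-K * u s (b + q * s) +
            (deriv (fun s' => u s' (b + q * s)) s + q * deriv (fun y => u s y) (b + q * s))) ≥
          Real.exp (-K * s) * (-K * u s (b + q * s) +
            (d * (Real.exp (K * s) * (μ - ε * Real.exp s)) - d * u s (b + q * s)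
              + C * u s (b + q * s))) := by
        apply mul_le_mul_of_nonneg_left _ hEneg.le
        linarith
      have e3 : Real.exp (-K * s) * (-K * u s (b + q * s) +
            (d * (Real.exp (K * s) * (μ - ε * Real.exp s)) - d * u s (b + q * s)
              + C * u s (b + q * s))) =
          d * ((Real.exp (-K * s) * Real.exp (K * s)) * (μ - ε * Real.exp s))
            - (d + 1) * (Real.exp (-K * s) * u s (b + q * s)) := by
        rw [hKdef]; ring
      rw [hEE] at e3
      have e8 : (d + 1) * (Real.exp (-K * s) * u s (b + q * s)) ≤
          (d + 1) * (μ + δ' - ε * Real.exp s) :=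
        mul_le_mul_of_nonneg_left e5 (by linarith)
      have e9 : (d + 1) * (μ + δ' - ε * Real.exp s) =
          d * μ + d * δ' - d * (ε * Real.exp s) + μ + δ' - ε * Real.exp s := by ring
      have e10 : d * (1 * (μ - ε * Real.exp s)) = d * μ - d * (ε * Real.exp s) := by ring
      have hdμ : d * μ ≤ 0 := mul_nonpos_of_nonneg_of_nonpos hd.le hμ
      -- goal : 0 < exp(-K s) * (-K u + (ut + q ux)) + ε * exp s
      linarith [e2, e3, e8, e9, e10, hA, hμ, hdμ]
    have h1 : Φ lo < Φ t₀ := hgrow ⟨le_rfl, hlo_lt.le⟩ ⟨hlo_lt.le, le_rfl⟩ hlo_lt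
    have h2 : μ ≤ Φ lo := by
      have h7 := hmaps lo ⟨hlo_ge, hlo_lt.le⟩
      rw [hΦval]
      exact hmin lo h7.1 (b + q * lo) h7.2
    rw [hΦt₀] at h1
    linarith
  -- conclude
  intro t ht x hx
  by_contra hneg
  push_neg at hneg
  have hE1 := Real.exp_pos (-K * t)
  have hE2 := Real.exp_pos t
  have hεpos : 0 < -(Real.exp (-K * t) * u t x) / (2 * Real.exp t) := by
    apply div_pos _ (by linarith)
    have := mul_pos hE1 (neg_pos.mpr hneg)
    linarith
  have hm := main _ hεpos t ht x hx
  have hval : -(Real.exp (-K * t) * u t x) / (2 * Real.exp t) * Real.exp t =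
      -(Real.exp (-K * t) * u t x) / 2 := by
    field_simp
  rw [hval] at hm
  have hfin := mul_pos hE1 (neg_pos.mpr hneg)
  linarith

lemma transport (l₁ l₂ d q T : ℝ) (J : ℝ → ℝ) (c u : ℝ → ℝ → ℝ)
    (hl : l₁ < l₂) (hd : 0 < d) (hq : 0 < q) (hT : 0 < T)
    (hJnn : ∀ x, 0 ≤ J x)
    (C : ℝ) (hCnn : 0 ≤ C)
    (hC : ∀ t ∈ Ioo 0 T, ∀ x ∈ Ioo l₁ l₂, |c t x| ≤ C)
    (hu : ContDiffOn ℝ 1 (fun p : ℝ × ℝ => u p.1 p.2) (Icc 0 T ×ˢ Icc l₁ l₂))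
    (hineq : ∀ t ∈ Set.Ioo 0 T, ∀ x ∈ Set.Ioo l₁ l₂,
      deriv (fun s => u s x) t ≥
        d * ((∫ y in Set.Ioo l₁ l₂, J (x - y) * u t y) - u t x)
          - q * deriv (fun y => u t y) x + c t x * u t x)
    (hnn : ∀ t ∈ Icc 0 T, ∀ x ∈ Icc l₁ l₂, 0 ≤ u t x)
    (t₁ : ℝ) (ht₁ : 0 ≤ t₁) (s : ℝ) (hs : 0 ≤ s) (hsT : t₁ + s ≤ T)
    (y : ℝ) (hy : y ∈ Icc l₁ l₂) (hyl : y + q * s ≤ l₂) :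
    Real.exp (-(d + C) * s) * u t₁ y ≤ u (t₁ + s) (y + q * s) := by
  have hcont := hu.continuousOn
  rcases hs.lt_or_eq with hspos | hs0
  swap
  · rw [← hs0]; simp
  -- monotonicity of g(σ) = exp((d+C)σ) u(σ, B + qσ) on [t₁, t₁+s], B := y - q t₁
  have hmono : MonotoneOn (fun σ => Real.exp ((d + C) * σ) * u σ ((y - q * t₁) + q * σ))
      (Icc t₁ (t₁ + s)) := by
    have hmaps : ∀ σ ∈ Icc t₁ (t₁ + s), σ ∈ Icc 0 T ∧ (y - q * t₁) + q * σ ∈ Icc l₁ l₂ := by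
      intro σ hσ
      have h1 := hσ.1; have h2 := hσ.2
      have h3 : q * t₁ ≤ q * σ := mul_le_mul_of_nonneg_left h1 hq.le
      have h4 : q * σ ≤ q * (t₁ + s) := mul_le_mul_of_nonneg_left h2 hq.le
      refine ⟨⟨le_trans ht₁ h1, le_trans h2 hsT⟩, ⟨?_, ?_⟩⟩
      · have := hy.1; nlinarith
      · nlinarith
    have hgc : ContinuousOn (fun σ => Real.exp ((d + C) * σ) * u σ ((y - q * t₁) + q * σ))
        (Icc t₁ (t₁ + s)) := by
      apply ContinuousOn.mul
      · exact (Real.continuous_exp.comp (continuous_const.mul continuous_id)).continuousOn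
      · exact hcont.comp ((continuous_id.prodMk (continuous_const.add
          (continuous_const.mul continuous_id))).continuousOn)
          (fun σ hσ => ⟨(hmaps σ hσ).1, (hmaps σ hσ).2⟩)
    apply monotoneOn_of_deriv_nonneg (convex_Icc _ _) hgc
    · intro σ hσ
      rw [interior_Icc] at hσ
      have hσT : σ ∈ Ioo 0 T := ⟨lt_of_le_of_lt ht₁ hσ.1, lt_of_lt_of_le hσ.2 hsT⟩
      have hσx : (y - q * t₁) + q * σ ∈ Ioo l₁ l₂ := by
        have h3 : q * t₁ < q * σ := mul_lt_mul_of_pos_left hσ.1 hq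
        have h4 : q * σ < q * (t₁ + s) := mul_lt_mul_of_pos_left hσ.2 hq
        constructor
        · have := hy.1; nlinarith
        · nlinarith
      exact ((exp_line_deriv hu (d + C) q (y - q * t₁) hσT hσx).differentiableAt).differentiableWithinAt
    · intro σ hσ
      rw [interior_Icc] at hσ
      have hσT : σ ∈ Ioo 0 T := ⟨lt_of_le_of_lt ht₁ hσ.1, lt_of_lt_of_le hσ.2 hsT⟩
      have hσx : (y - q * t₁) + q * σ ∈ Ioo l₁ l₂ := by
        have h3 : q * t₁ < q * σ := mul_lt_mul_of_pos_left hσ.1 hq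
        have h4 : q * σ < q * (t₁ + s) := mul_lt_mul_of_pos_left hσ.2 hq
        constructor
        · have := hy.1; nlinarith
        · nlinarith
      rw [(exp_line_deriv hu (d + C) q (y - q * t₁) hσT hσx).deriv]
      have hi := hineq σ hσT _ hσx
      have hcs := hC σ hσT _ hσx
      have hunn : 0 ≤ u σ ((y - q * t₁) + q * σ) :=
        hnn σ ⟨hσT.1.le, hσT.2.le⟩ _ ⟨hσx.1.le, hσx.2.le⟩
      have hInn : 0 ≤ ∫ y' in Ioo l₁ l₂, J (((y - q * t₁) + q * σ) - y') * u σ y' :=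
        setIntegral_nonneg measurableSet_Ioo
          (fun y' hy' => mul_nonneg (hJnn _) (hnn σ ⟨hσT.1.le, hσT.2.le⟩ y'
            (Ioo_subset_Icc_self hy')))
      have hcge : -C ≤ c σ ((y - q * t₁) + q * σ) := (abs_le.mp hcs).1
      have hcu : -C * u σ ((y - q * t₁) + q * σ) ≤
          c σ ((y - q * t₁) + q * σ) * u σ ((y - q * t₁) + q * σ) :=
        mul_le_mul_of_nonneg_right hcge hunn
      have hdI : 0 ≤ d * ∫ y' in Ioo l₁ l₂, J (((y - q * t₁) + q * σ) - y') * u σ y' :=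
        mul_nonneg hd.le hInn
      apply mul_nonneg (Real.exp_pos _).le
      nlinarith [hi]
  -- evaluate at endpoints
  have hend := hmono (left_mem_Icc.mpr (by linarith)) (right_mem_Icc.mpr (by linarith))
    (by linarith : t₁ ≤ t₁ + s)
  simp only at hend
  have he1 : (y - q * t₁) + q * t₁ = y := by ring
  have he2 : (y - q * t₁) + q * (t₁ + s) = y + q * s := by ring
  rw [he1, he2] at hend
  -- multiply by exp(-(d+C)(t₁+s))
  have hE := Real.exp_pos (-(d + C) * (t₁ + s))
  have h7 := mul_le_mul_of_nonneg_left hend hE.le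
  have hEB : Real.exp (-(d + C) * (t₁ + s)) * Real.exp ((d + C) * (t₁ + s)) = 1 := by
    rw [← Real.exp_add]; ring_nf; exact Real.exp_zero
  have hEA : Real.exp (-(d + C) * (t₁ + s)) * Real.exp ((d + C) * t₁) =
      Real.exp (-(d + C) * s) := by
    rw [← Real.exp_add]; congr 1; ring
  calc Real.exp (-(d + C) * s) * u t₁ y
      = Real.exp (-(d + C) * (t₁ + s)) * (Real.exp ((d + C) * t₁) * u t₁ y) := by
        rw [← hEA]; ring
    _ ≤ Real.exp (-(d + C) * (t₁ + s)) * (Real.exp ((d + C) * (t₁ + s)) * u (t₁ + s) (y + q * s)) := h7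
    _ = u (t₁ + s) (y + q * s) := by rw [← mul_assoc, hEB, one_mul]

set_option maxHeartbeats 1000000 in
lemma step (l₁ l₂ d q T : ℝ) (J : ℝ → ℝ) (c u : ℝ → ℝ → ℝ)
    (hl : l₁ < l₂) (hd : 0 < d) (hq : 0 < q) (hT : 0 < T)
    (hJc : Continuous J) (hJnn : ∀ x, 0 ≤ J x) (hJ0 : 0 < J 0)
    (C : ℝ) (hCnn : 0 ≤ C)
    (hC : ∀ t ∈ Ioo 0 T, ∀ x ∈ Ioo l₁ l₂, |c t x| ≤ C)
    (hu : ContDiffOn ℝ 1 (fun p : ℝ × ℝ => u p.1 p.2) (Icc 0 T ×ˢ Icc l₁ l₂))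
    (hineq : ∀ t ∈ Set.Ioo 0 T, ∀ x ∈ Set.Ioo l₁ l₂,
      deriv (fun s => u s x) t ≥
        d * ((∫ y in Set.Ioo l₁ l₂, J (x - y) * u t y) - u t x)
          - q * deriv (fun y => u t y) x + c t x * u t x)
    (hnn : ∀ t ∈ Icc 0 T, ∀ x ∈ Icc l₁ l₂, 0 ≤ u t x)
    (δ : ℝ) (hδpos : 0 < δ) (hJδ : ∀ z : ℝ, |z| ≤ δ → J 0 / 2 ≤ J z)
    (ℓ : ℝ) (hℓpos : 0 < ℓ) (hℓδ : ℓ ≤ δ / 4)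
    (t₁ τ : ℝ) (ht₁ : 0 ≤ t₁) (hτpos : 0 < τ) (hτT : t₁ + τ ≤ T)
    (hqτ1 : q * τ ≤ ℓ / 2) (hqτ2 : q * τ ≤ δ / 8)
    (a : ℝ) (ha1 : l₁ < a) (ha2 : a + ℓ ≤ l₂)
    (hpos : ∀ y ∈ Icc a (a + ℓ), 0 < u t₁ y)
    (a' : ℝ) (ha'1 : l₁ < a') (ha'2 : a' + ℓ ≤ l₂) (hdist : |a' - a| ≤ δ / 4) :
    ∀ x₂ ∈ Icc a' (a' + ℓ), 0 < u (t₁ + τ) x₂ := by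
  have hcont := hu.continuousOn
  have hqτnn : 0 ≤ q * τ := (mul_pos hq hτpos).le
  -- minimum α of u t₁ on the cluster
  have ht₁T : t₁ ∈ Icc 0 T := ⟨ht₁, by linarith⟩
  have hsubI : Icc a (a + ℓ) ⊆ Icc l₁ l₂ := Icc_subset_Icc ha1.le (by linarith)
  obtain ⟨ym, hym, hymin⟩ := isCompact_Icc.exists_isMinOn (nonempty_Icc.mpr (by linarith))
    ((slice_cont hcont ht₁T).mono hsubI)
  rw [isMinOn_iff] at hymin
  have hα : 0 < u t₁ ym := hpos ym hym
  -- cluster positivity at later times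
  have hcluster : ∀ s ∈ Icc 0 τ, ∀ y' ∈ Icc (a + q * s) (min (a + ℓ + q * s) l₂),
      Real.exp (-(d + C) * s) * u t₁ ym ≤ u (t₁ + s) y' := by
    intro s hsIcc y' hy'
    have hy'1 := hy'.1
    have hy'2 : y' ≤ a + ℓ + q * s := le_trans hy'.2 (min_le_left _ _)
    have hy'3 : y' ≤ l₂ := le_trans hy'.2 (min_le_right _ _)
    have hsq : 0 ≤ q * s := mul_nonneg hq.le hsIcc.1
    have hymem : y' - q * s ∈ Icc a (a + ℓ) := ⟨by linarith, by linarith⟩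
    have hsτ' : s ≤ τ := hsIcc.2
    have htr := transport l₁ l₂ d q T J c u hl hd hq hT hJnn C hCnn hC hu hineq hnn
      t₁ ht₁ s hsIcc.1 (by linarith) (y' - q * s) (hsubI hymem) (by linarith)
    have he : y' - q * s + q * s = y' := by ring
    rw [he] at htr
    calc Real.exp (-(d + C) * s) * u t₁ ym
        ≤ Real.exp (-(d + C) * s) * u t₁ (y' - q * s) :=
          mul_le_mul_of_nonneg_left (hymin _ hymem) (Real.exp_pos _).le
      _ ≤ u (t₁ + s) y' := htr
  -- uniform positive lower bound on cluster values
  have hexpT : ∀ s ∈ Icc 0 τ, Real.exp (-(d + C) * T) ≤ Real.exp (-(d + C) * s) := by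
    intro s hsIcc
    apply Real.exp_le_exp.mpr
    have h1 : s ≤ T := by linarith [hsIcc.2]
    nlinarith [hsIcc.1]
  have hα'pos : 0 < Real.exp (-(d + C) * T) * u t₁ ym := mul_pos (Real.exp_pos _) hα
  -- θ : lower bound for the nonlocal term
  have hθpos : 0 < d * (J 0 / 2 * (Real.exp (-(d + C) * T) * u t₁ ym) * (ℓ / 2)) := by positivity
  intro x₂ hx₂
  have hx₂1 : a' ≤ x₂ := hx₂.1
  have hx₂2 : x₂ ≤ a' + ℓ := hx₂.2
  have hx₂l₁ : l₁ < x₂ := lt_of_lt_of_le ha'1 hx₂1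
  have hx₂l₂ : x₂ ≤ l₂ := by linarith
  have hdist' := abs_le.mp hdist
  -- starting time s* on the backward characteristic
  obtain ⟨sstar, hsdef⟩ : ∃ v, v = max 0 (τ - (x₂ - l₁) / q) := ⟨_, rfl⟩
  have hs0 : 0 ≤ sstar := hsdef ▸ le_max_left _ _
  have hsτ : sstar < τ := by
    rw [hsdef]
    apply max_lt hτpos
    have : 0 < (x₂ - l₁) / q := div_pos (by linarith) hq
    linarith
  have hstart : l₁ ≤ (x₂ - q * τ) + q * sstar := by
    rcases le_or_gt (τ - (x₂ - l₁) / q) 0 with hc1 | hc1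
    · rw [hsdef, max_eq_left hc1]
      rw [sub_nonpos, le_div_iff₀ hq] at hc1
      nlinarith
    · rw [hsdef, max_eq_right hc1.le]
      have : q * ((x₂ - l₁) / q) = x₂ - l₁ := by field_simp
      nlinarith
  -- the function h(σ) = exp((d+C)σ) u(σ, B + qσ) - dθσ is monotone on [t₁+s*, t₁+τ]
  obtain ⟨B, hBdef⟩ : ∃ v, v = x₂ - q * τ - q * t₁ := ⟨_, rfl⟩
  obtain ⟨θ, hθdef⟩ : ∃ v, v = d * (J 0 / 2 * (Real.exp (-(d + C) * T) * u t₁ ym) * (ℓ / 2)) :=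
    ⟨_, rfl⟩
  have hθpos' : 0 < θ := hθdef ▸ hθpos
  have hBs : B + q * (t₁ + sstar) = (x₂ - q * τ) + q * sstar := by rw [hBdef]; ring
  have hBτ : B + q * (t₁ + τ) = x₂ := by rw [hBdef]; ring
  have hmapsh : ∀ σ ∈ Icc (t₁ + sstar) (t₁ + τ), σ ∈ Icc 0 T ∧ B + q * σ ∈ Icc l₁ l₂ := by
    intro σ hσ
    have h1 := hσ.1; have h2 := hσ.2
    have h3 : q * (t₁ + sstar) ≤ q * σ := mul_le_mul_of_nonneg_left h1 hq.le
    have h4 : q * σ ≤ q * (t₁ + τ) := mul_le_mul_of_nonneg_left h2 hq.le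
    refine ⟨⟨by linarith, by linarith⟩, ⟨by linarith [hBs], by linarith [hBτ]⟩⟩
  have hintermem : ∀ σ ∈ Ioo (t₁ + sstar) (t₁ + τ), σ ∈ Ioo 0 T ∧ B + q * σ ∈ Ioo l₁ l₂ := by
    intro σ hσ
    have h1 := hσ.1; have h2 := hσ.2
    have h3 : q * (t₁ + sstar) < q * σ := mul_lt_mul_of_pos_left h1 hq
    have h4 : q * σ < q * (t₁ + τ) := mul_lt_mul_of_pos_left h2 hq
    refine ⟨⟨by linarith, by linarith⟩, ⟨by linarith [hBs], by linarith [hBτ, hx₂l₂]⟩⟩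
  -- the integral lower bound at interior points
  have hIbound : ∀ σ ∈ Ioo (t₁ + sstar) (t₁ + τ),
      θ / d ≤ ∫ y in Ioo l₁ l₂, J ((B + q * σ) - y) * u σ y := by
    intro σ hσ
    have hσT := (hintermem σ hσ).1
    have hσx := (hintermem σ hσ).2
    have hs : σ - t₁ ∈ Icc 0 τ := ⟨by linarith [hσ.1, hs0], by linarith [hσ.2]⟩
    have hqs : 0 ≤ q * (σ - t₁) := mul_nonneg hq.le hs.1
    have hqsτ : q * (σ - t₁) ≤ q * τ := mul_le_mul_of_nonneg_left (by linarith [hσ.2]) hq.le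
    -- the subinterval S
    have hSlower : l₁ < a + q * (σ - t₁) := by linarith
    have hSlen : ℓ / 2 + (a + q * (σ - t₁)) ≤ min (a + ℓ + q * (σ - t₁)) l₂ :=
      le_min (by linarith) (by linarith)
    have hSsub : Ioo (a + q * (σ - t₁)) (min (a + ℓ + q * (σ - t₁)) l₂) ⊆ Ioo l₁ l₂ := by
      intro y hy
      exact ⟨lt_trans hSlower hy.1, lt_of_lt_of_le hy.2 (min_le_right _ _)⟩
    have hint : IntegrableOn (fun y => J ((B + q * σ) - y) * u σ y) (Ioo l₁ l₂) :=
      integrable_slice hJc hcont ⟨hσT.1.le, hσT.2.le⟩ _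
    -- pointwise bound on S
    have hptwise : ∀ y ∈ Ioo (a + q * (σ - t₁)) (min (a + ℓ + q * (σ - t₁)) l₂),
        J 0 / 2 * (Real.exp (-(d + C) * T) * u t₁ ym) ≤ J ((B + q * σ) - y) * u σ y := by
      intro y hy
      have hy1 := hy.1
      have hy2 : y < a + ℓ + q * (σ - t₁) := lt_of_lt_of_le hy.2 (min_le_left _ _)
      have hyIcc : y ∈ Icc (a + q * (σ - t₁)) (min (a + ℓ + q * (σ - t₁)) l₂) :=
        ⟨hy1.le, hy.2.le⟩
      have hclu := hcluster (σ - t₁) hs y hyIcc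
      have he : t₁ + (σ - t₁) = σ := by ring
      rw [he] at hclu
      have huy := le_trans (mul_le_mul_of_nonneg_right (hexpT (σ - t₁) hs) hα.le) hclu
      have hJge : J 0 / 2 ≤ J ((B + q * σ) - y) := by
        apply hJδ
        have hBσ : B + q * σ = x₂ - q * τ + q * (σ - t₁) := by rw [hBdef]; ring
        rw [abs_le, hBσ]
        constructor
        · linarith [hdist'.1, hdist'.2, hqs, hqsτ, hqτ2, hℓδ, hx₂1, hx₂2, hy1, hy2]
        · linarith [hdist'.1, hdist'.2, hqs, hqsτ, hqτ2, hℓδ, hx₂1, hx₂2, hy1, hy2]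
      exact mul_le_mul hJge huy hα'pos.le (le_trans (by positivity) hJge)
    -- integrate
    have hconst : (∫ _y in Ioo (a + q * (σ - t₁)) (min (a + ℓ + q * (σ - t₁)) l₂),
        J 0 / 2 * (Real.exp (-(d + C) * T) * u t₁ ym)) =
        (min (a + ℓ + q * (σ - t₁)) l₂ - (a + q * (σ - t₁))) *
          (J 0 / 2 * (Real.exp (-(d + C) * T) * u t₁ ym)) := by
      rw [setIntegral_const, Real.volume_real_Ioo_of_le (by linarith [hSlen, hℓpos]), smul_eq_mul]
    have hmono1 : (∫ _y in Ioo (a + q * (σ - t₁)) (min (a + ℓ + q * (σ - t₁)) l₂),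
          J 0 / 2 * (Real.exp (-(d + C) * T) * u t₁ ym)) ≤
        ∫ y in Ioo (a + q * (σ - t₁)) (min (a + ℓ + q * (σ - t₁)) l₂),
          J ((B + q * σ) - y) * u σ y := by
      apply setIntegral_mono_on (integrableOn_const measure_Ioo_lt_top.ne)
        (hint.mono_set hSsub) measurableSet_Ioo
      exact hptwise
    have hmono2 : (∫ y in Ioo (a + q * (σ - t₁)) (min (a + ℓ + q * (σ - t₁)) l₂),
          J ((B + q * σ) - y) * u σ y) ≤
        ∫ y in Ioo l₁ l₂, J ((B + q * σ) - y) * u σ y := by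
      apply setIntegral_mono_set hint
      · filter_upwards [ae_restrict_mem measurableSet_Ioo] with y hy
        exact mul_nonneg (hJnn _) (hnn σ ⟨hσT.1.le, hσT.2.le⟩ y (Ioo_subset_Icc_self hy))
      · exact hSsub.eventuallyLE
    have hlenmul : θ / d ≤ (min (a + ℓ + q * (σ - t₁)) l₂ - (a + q * (σ - t₁))) *
        (J 0 / 2 * (Real.exp (-(d + C) * T) * u t₁ ym)) := by
      have h9 : θ / d = J 0 / 2 * (Real.exp (-(d + C) * T) * u t₁ ym) * (ℓ / 2) := by
        rw [hθdef, mul_div_cancel_left₀ _ hd.ne']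
      rw [h9]
      have h10 : ℓ / 2 ≤ min (a + ℓ + q * (σ - t₁)) l₂ - (a + q * (σ - t₁)) := by
        linarith [hSlen]
      have hPnn : 0 ≤ J 0 / 2 * (Real.exp (-(d + C) * T) * u t₁ ym) :=
        mul_nonneg (by linarith [hJ0]) (mul_nonneg (Real.exp_pos _).le hα.le)
      have h11 := mul_le_mul_of_nonneg_right h10 hPnn
      linarith [h11]
    linarith [hconst, hmono1, hmono2, hlenmul]
  -- monotonicity of h
  have hmonoh : MonotoneOn (fun σ => Real.exp ((d + C) * σ) * u σ (B + q * σ) - θ * σ)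
      (Icc (t₁ + sstar) (t₁ + τ)) := by
    have hgc : ContinuousOn (fun σ => Real.exp ((d + C) * σ) * u σ (B + q * σ) - θ * σ)
        (Icc (t₁ + sstar) (t₁ + τ)) := by
      apply ContinuousOn.sub
      · apply ContinuousOn.mul
        · exact (Real.continuous_exp.comp (continuous_const.mul continuous_id)).continuousOn
        · exact hcont.comp ((continuous_id.prodMk (continuous_const.add
            (continuous_const.mul continuous_id))).continuousOn)
            (fun σ hσ => ⟨(hmapsh σ hσ).1, (hmapsh σ hσ).2⟩)
      · exact (continuous_const.mul continuous_id).continuousOn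
    apply monotoneOn_of_deriv_nonneg (convex_Icc _ _) hgc
    · intro σ hσ
      rw [interior_Icc] at hσ
      have hlin : HasDerivAt (fun σ : ℝ => θ * σ) θ σ := by
        simpa using (hasDerivAt_id σ).const_mul θ
      exact (((exp_line_deriv hu (d + C) q B (hintermem σ hσ).1
        (hintermem σ hσ).2).sub hlin).differentiableAt).differentiableWithinAt
    · intro σ hσ
      rw [interior_Icc] at hσ
      have hlin : HasDerivAt (fun σ : ℝ => θ * σ) θ σ := by
        simpa using (hasDerivAt_id σ).const_mul θ
      have hD := (exp_line_deriv hu (d + C) q B (hintermem σ hσ).1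
        (hintermem σ hσ).2).sub hlin
      rw [(show HasDerivAt (fun σ => Real.exp ((d + C) * σ) * u σ (B + q * σ) - θ * σ) _ σ from hD).deriv]
      have hσT := (hintermem σ hσ).1
      have hσx := (hintermem σ hσ).2
      have hi := hineq σ hσT _ hσx
      have hcs := hC σ hσT _ hσx
      have hunn : 0 ≤ u σ (B + q * σ) := hnn σ ⟨hσT.1.le, hσT.2.le⟩ _ ⟨hσx.1.le, hσx.2.le⟩
      have hIb := hIbound σ hσ
      have hcge : -C ≤ c σ (B + q * σ) := (abs_le.mp hcs).1
      have hcu : -C * u σ (B + q * σ) ≤ c σ (B + q * σ) * u σ (B + q * σ) :=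
        mul_le_mul_of_nonneg_right hcge hunn
      have hsum : θ ≤ (d + C) * u σ (B + q * σ) + (deriv (fun s' => u s' (B + q * σ)) σ
          + q * deriv (fun y => u σ y) (B + q * σ)) := by
        have hdI : d * (θ / d) ≤ d * ∫ y in Ioo l₁ l₂, J ((B + q * σ) - y) * u σ y :=
          mul_le_mul_of_nonneg_left hIb hd.le
        have hdd : d * (θ / d) = θ := by field_simp
        nlinarith [hi]
      have hE1 : 1 ≤ Real.exp ((d + C) * σ) := by
        apply Real.one_le_exp
        have := hσT.1
        nlinarith [hσT.1.le]
      have := mul_le_mul hE1 hsum hθpos'.le (by linarith)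
      simp only [mul_one, one_mul] at this ⊢
      linarith
  -- conclude
  have hend := hmonoh (left_mem_Icc.mpr (by linarith)) (right_mem_Icc.mpr (by linarith))
    (by linarith : t₁ + sstar ≤ t₁ + τ)
  simp only at hend
  have hstartnn : 0 ≤ Real.exp ((d + C) * (t₁ + sstar)) * u (t₁ + sstar) (B + q * (t₁ + sstar)) := by
    apply mul_nonneg (Real.exp_pos _).le
    have hmm := hmapsh (t₁ + sstar) (left_mem_Icc.mpr (by linarith))
    exact hnn _ hmm.1 _ hmm.2
  rw [hBτ] at hend
  have hgap : 0 < θ * (t₁ + τ) - θ * (t₁ + sstar) := by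
    have := mul_lt_mul_of_pos_left hsτ hθpos'
    nlinarith
  have hfinal : 0 < Real.exp ((d + C) * (t₁ + τ)) * u (t₁ + τ) x₂ := by linarith
  by_contra hcon
  push_neg at hcon
  have := mul_nonpos_of_nonneg_of_nonpos (Real.exp_pos ((d + C) * (t₁ + τ))).le hcon
  linarith

set_option maxHeartbeats 1000000 in
/-- **Maximum principle for the nonlocal Dirichlet advection problem.**
If `u ∈ C¹([0,T]×[l₁,l₂])` satisfies
`u_t ≥ d(∫_Ω J(x−y)u(t,y)dy − u(t,x)) − q u_x + c(t,x)u` on `(0,T)×Ω`,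
`u(t,l₁) ≥ 0` and `u(0,·) = u₀ ≥ 0`, then `u ≥ 0` on `[0,T]×[l₁,l₂]`;
moreover `u > 0` on `(0,T]×(l₁,l₂]` if `u₀ ≢ 0`. -/
theorem dirichlet_maximum_principle
    (l₁ l₂ d q T : ℝ) (J : ℝ → ℝ) (c u : ℝ → ℝ → ℝ) (u₀ : ℝ → ℝ)
    (hl : l₁ < l₂) (hd : 0 < d) (hq : 0 < q) (hT : 0 < T)
    -- condition (J)
    (hJc : Continuous J) (hJnn : ∀ x, 0 ≤ J x) (hJ0 : 0 < J 0)
    (hJint : MeasureTheory.Integrable J) (hJ1 : (∫ x, J x) = 1)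
    -- condition (J1)
    (hJsymm : ∀ x, J (-x) = J x) (hJbdd : ∃ C, ∀ x, J x ≤ C)
    -- c ∈ L∞((0,T)×Ω)
    (hc : ∃ C, ∀ t ∈ Set.Ioo 0 T, ∀ x ∈ Set.Ioo l₁ l₂, |c t x| ≤ C)
    -- u ∈ C¹([0,T]×[l₁,l₂])
    (hu : ContDiffOn ℝ 1 (fun p : ℝ × ℝ => u p.1 p.2) (Set.Icc 0 T ×ˢ Set.Icc l₁ l₂))
    -- differential inequality
    (hineq : ∀ t ∈ Set.Ioo 0 T, ∀ x ∈ Set.Ioo l₁ l₂,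
      deriv (fun s => u s x) t ≥
        d * ((∫ y in Set.Ioo l₁ l₂, J (x - y) * u t y) - u t x)
          - q * deriv (fun y => u t y) x + c t x * u t x)
    -- boundary condition
    (hbd : ∀ t ∈ Set.Ioo 0 T, 0 ≤ u t l₁)
    -- initial condition
    (hinit : ∀ x ∈ Set.Icc l₁ l₂, u 0 x = u₀ x)
    (hu₀nn : ∀ x ∈ Set.Icc l₁ l₂, 0 ≤ u₀ x) :
    (∀ t ∈ Set.Icc 0 T, ∀ x ∈ Set.Icc l₁ l₂, 0 ≤ u t x) ∧
      ((∃ x ∈ Set.Icc l₁ l₂, u₀ x ≠ 0) →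
        ∀ t ∈ Set.Ioc 0 T, ∀ x ∈ Set.Ioc l₁ l₂, 0 < u t x) := by
  have hinit0 : ∀ x ∈ Set.Icc l₁ l₂, 0 ≤ u 0 x := fun x hxx => (hinit x hxx) ▸ hu₀nn x hxx
  have hnn := part1 l₁ l₂ d q T J c u hl hd hq hT hJc hJnn hJint hJ1 hc hu hineq hbd hinit0
  refine ⟨hnn, ?_⟩
  rintro ⟨xstar, hxstar, hne⟩ tbar htbar xbar hxbar
  have hcont := hu.continuousOn
  -- bound on c
  obtain ⟨C₀, hC₀⟩ := hc
  obtain ⟨C, hCdef⟩ : ∃ C', C' = max C₀ 0 := ⟨_, rfl⟩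
  have hCnn : 0 ≤ C := hCdef ▸ le_max_right _ _
  have hC : ∀ t ∈ Ioo 0 T, ∀ x ∈ Ioo l₁ l₂, |c t x| ≤ C :=
    fun t ht x hx => (hC₀ t ht x hx).trans (hCdef ▸ le_max_left _ _)
  -- δ : neighbourhood where J ≥ J 0 / 2
  obtain ⟨δ, hδpos, hJδ⟩ : ∃ δ > 0, ∀ z : ℝ, |z| ≤ δ → J 0 / 2 ≤ J z := by
    have hev : ∀ᶠ z in nhds (0:ℝ), J 0 / 2 < J z :=
      (hJc.tendsto 0).eventually (eventually_gt_nhds (by linarith))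
    rw [Metric.eventually_nhds_iff] at hev
    obtain ⟨ε, hεpos, hε⟩ := hev
    refine ⟨ε / 2, by linarith, fun z hz => ?_⟩
    have : dist z 0 < ε := by
      rw [Real.dist_eq, sub_zero]; linarith
    exact (hε this).le
  -- positivity of the initial datum at xstar
  have hstar : 0 < u 0 xstar := by
    rw [hinit xstar hxstar]
    exact lt_of_le_of_ne (hu₀nn xstar hxstar) (Ne.symm hne)
  -- initial interval of positivity
  obtain ⟨r, hrpos, hr⟩ : ∃ r > 0, ∀ y ∈ Metric.ball xstar r ∩ Icc l₁ l₂, 0 < u 0 y := by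
    have hcw : ContinuousWithinAt (fun y => u 0 y) (Icc l₁ l₂) xstar :=
      (slice_cont hcont ⟨le_rfl, hT.le⟩) xstar hxstar
    have hmem : {y | 0 < u 0 y} ∈ nhdsWithin xstar (Icc l₁ l₂) := hcw (Ioi_mem_nhds hstar)
    rw [Metric.mem_nhdsWithin_iff] at hmem
    obtain ⟨ε, hεpos, hsub⟩ := hmem
    exact ⟨ε, hεpos, fun y hy => hsub hy⟩
  obtain ⟨r', hr'def⟩ : ∃ v, v = min r (l₂ - l₁) := ⟨_, rfl⟩
  have hr'pos : 0 < r' := by rw [hr'def]; exact lt_min hrpos (by linarith)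
  have hr'r : r' ≤ r := hr'def ▸ min_le_left _ _
  have hr'l : r' ≤ l₂ - l₁ := hr'def ▸ min_le_right _ _
  obtain ⟨a₀, ha₀1, ha₀2, ha₀pos⟩ : ∃ a₀, l₁ < a₀ ∧ a₀ + r' / 8 ≤ l₂ ∧
      ∀ y ∈ Icc a₀ (a₀ + r' / 8), 0 < u 0 y := by
    rcases le_or_gt (xstar + r' / 4) l₂ with hcase | hcase
    · refine ⟨xstar + r' / 8, by linarith [hxstar.1], by linarith, fun y hy => ?_⟩
      apply hr
      constructor
      · rw [Metric.mem_ball, Real.dist_eq, abs_sub_lt_iff]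
        constructor <;> [linarith [hy.1, hy.2]; linarith [hy.1, hy.2]]
      · exact ⟨by linarith [hy.1, hxstar.1], by linarith [hy.2]⟩
    · have hx2 : l₁ + 3 * r' / 4 < xstar := by linarith
      refine ⟨xstar - r' / 4, by linarith, by linarith [hxstar.2], fun y hy => ?_⟩
      apply hr
      constructor
      · rw [Metric.mem_ball, Real.dist_eq, abs_sub_lt_iff]
        constructor <;> [linarith [hy.1, hy.2]; linarith [hy.1, hy.2]]
      · exact ⟨by linarith [hy.1], by linarith [hy.2, hxstar.2]⟩
  -- the common interval length
  obtain ⟨ℓ, hℓdef⟩ : ∃ v, v = min (r' / 8) (min (δ / 4) ((l₂ - l₁) / 4)) := ⟨_, rfl⟩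
  have hℓpos : 0 < ℓ := by
    rw [hℓdef]; exact lt_min (by linarith) (lt_min (by linarith) (by linarith))
  have hℓr : ℓ ≤ r' / 8 := hℓdef ▸ min_le_left _ _
  have hℓδ : ℓ ≤ δ / 4 := hℓdef ▸ le_trans (min_le_right _ _) (min_le_left _ _)
  have hℓl : ℓ ≤ (l₂ - l₁) / 4 := hℓdef ▸ le_trans (min_le_right _ _) (min_le_right _ _)
  have ha₀2' : a₀ + ℓ ≤ l₂ := by linarith
  have ha₀pos' : ∀ y ∈ Icc a₀ (a₀ + ℓ), 0 < u 0 y :=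
    fun y hy => ha₀pos y ⟨hy.1, by linarith [hy.2]⟩
  -- the final interval
  obtain ⟨aN, haNdef⟩ : ∃ v, v = max (xbar - ℓ) ((l₁ + xbar) / 2) := ⟨_, rfl⟩
  have haN1 : l₁ < aN := by
    rw [haNdef]
    exact lt_of_lt_of_le (by linarith [hxbar.1]) (le_max_right _ _)
  have haNx1 : aN ≤ xbar := by
    rw [haNdef]
    exact max_le (by linarith) (by linarith [hxbar.1])
  have haNx2 : xbar ≤ aN + ℓ := by
    rw [haNdef]
    have := le_max_left (xbar - ℓ) ((l₁ + xbar) / 2)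
    linarith
  have haN2 : aN + ℓ ≤ l₂ := by
    rw [haNdef]
    rcases max_cases (xbar - ℓ) ((l₁ + xbar) / 2) with ⟨heq, _⟩ | ⟨heq, _⟩ <;> rw [heq]
    · linarith [hxbar.2]
    · linarith [hxbar.2]
  -- choose the number of steps n
  obtain ⟨n, hn⟩ := exists_nat_gt (max (max (2 * q * tbar / ℓ) (8 * q * tbar / δ))
    (max (4 * |aN - a₀| / δ) 1))
  have hn1 : (1:ℝ) ≤ n := le_of_lt (lt_of_le_of_lt (le_trans (le_max_right _ _)
    (le_max_right _ _)) hn)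
  have hnpos : (0:ℝ) < n := by linarith
  have hnq1 : 2 * q * tbar / ℓ < n := lt_of_le_of_lt (le_trans (le_max_left _ _)
    (le_max_left _ _)) hn
  have hnq2 : 8 * q * tbar / δ < n := lt_of_le_of_lt (le_trans (le_max_right _ _)
    (le_max_left _ _)) hn
  have hnq3 : 4 * |aN - a₀| / δ < n := lt_of_le_of_lt (le_trans (le_max_left _ _)
    (le_max_right _ _)) hn
  obtain ⟨τ, hτdef⟩ : ∃ v, v = tbar / n := ⟨_, rfl⟩
  have hτpos : 0 < τ := by rw [hτdef]; exact div_pos htbar.1 hnpos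
  have hτtot : (n:ℝ) * τ = tbar := by rw [hτdef]; field_simp
  have hqτ1 : q * τ ≤ ℓ / 2 := by
    rw [hτdef]
    rw [div_lt_iff₀ hℓpos] at hnq1
    rw [mul_div_assoc', div_le_iff₀ hnpos]
    nlinarith
  have hqτ2 : q * τ ≤ δ / 8 := by
    rw [hτdef]
    rw [div_lt_iff₀ hδpos] at hnq2
    rw [mul_div_assoc', div_le_iff₀ hnpos]
    nlinarith
  have hstepd : |aN - a₀| / n ≤ δ / 4 := by
    rw [div_lt_iff₀ hδpos] at hnq3
    rw [div_le_iff₀ hnpos]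
    nlinarith
  -- the chain of intervals
  obtain ⟨A, hAdef⟩ : ∃ A : ℕ → ℝ, A = fun k : ℕ => a₀ + (k:ℝ) / (n:ℝ) * (aN - a₀) := ⟨_, rfl⟩
  have hA0 : A 0 = a₀ := by rw [hAdef]; simp
  have hAn : A n = aN := by
    rw [hAdef]
    simp only
    rw [div_self hnpos.ne']
    ring
  have hAbounds : ∀ k : ℕ, k ≤ n → l₁ < A k ∧ A k + ℓ ≤ l₂ := by
    intro k hk
    have hr1 : (0:ℝ) ≤ (k:ℝ) / n := div_nonneg (Nat.cast_nonneg k) hnpos.le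
    have hr2 : (k:ℝ) / n ≤ 1 := by
      rw [div_le_one hnpos]
      exact_mod_cast hk
    rw [hAdef]
    simp only
    rcases le_total a₀ aN with hord | hord
    · constructor
      · nlinarith
      · nlinarith
    · constructor
      · nlinarith
      · nlinarith
  have hAdist : ∀ k : ℕ, |A (k+1) - A k| ≤ δ / 4 := by
    intro k
    have he : A (k+1) - A k = (aN - a₀) / n := by
      rw [hAdef]
      simp only
      push_cast
      field_simp
      ring
    rw [he, abs_div, abs_of_pos hnpos]
    exact hstepd
  -- the induction
  have hchain : ∀ k : ℕ, k ≤ n → ∀ y ∈ Icc (A k) (A k + ℓ), 0 < u ((k:ℝ) * τ) y := by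
    intro k
    induction k with
    | zero =>
      intro _ y hy
      simpa [hA0] using ha₀pos' y (by rwa [hA0] at hy)
    | succ k ih =>
      intro hk1 y hy
      have hk : k ≤ n := le_trans (Nat.le_succ k) hk1
      have hkn : (k:ℝ) + 1 ≤ n := by exact_mod_cast hk1
      have ht₁nn : 0 ≤ (k:ℝ) * τ := mul_nonneg (Nat.cast_nonneg k) hτpos.le
      have hτT : (k:ℝ) * τ + τ ≤ T := by
        have h1 : ((k:ℝ) + 1) * τ ≤ (n:ℝ) * τ := mul_le_mul_of_nonneg_right hkn hτpos.le
        rw [hτtot] at h1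
        have := htbar.2
        nlinarith
      have hb1 := hAbounds k hk
      have hb2 := hAbounds (k+1) hk1
      have hstep := step l₁ l₂ d q T J c u hl hd hq hT hJc hJnn hJ0 C hCnn hC hu hineq hnn
        δ hδpos hJδ ℓ hℓpos hℓδ ((k:ℝ) * τ) τ ht₁nn hτpos hτT hqτ1 hqτ2
        (A k) hb1.1 hb1.2 (ih hk) (A (k+1)) hb2.1 hb2.2 (hAdist k)
      have he : (k:ℝ) * τ + τ = ((k+1 : ℕ):ℝ) * τ := by push_cast; ring
      rw [he] at hstep
      exact hstep y hy
  have hfin := hchain n le_rfl xbar (by rw [hAn]; exact ⟨haNx1, haNx2⟩)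
  rwa [hτtot] at hfin
end helpers
end

section
/- Assume conditions (J) and (J1), let q > 0 and let c ∈ L∞(Ω). Suppose u ∈ C¹([l₁,l₂]) satisfies u ≥ 0 on [l₁,l₂], u ≢ 0, u(l₁) ≥ 0, and d∫_Ω J(x−y)(u(y) − u(x))dy − q u'(x) + c(x)u(x) ≤ 0 for all x ∈ Ω. Then u(x) > 0 for all x ∈ (l₁,l₂]. -/
open MeasureTheory Set Topology Filter

lemma pos_setIntegral {a b : ℝ} {g : ℝ → ℝ}
    (hg : ContinuousOn g (Set.Icc a b)) (hnn : ∀ x ∈ Set.Ioo a b, 0 ≤ g x)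
    {z : ℝ} (hz : z ∈ Set.Ioo a b) (hgz : 0 < g z) :
    0 < ∫ x in Set.Ioo a b, g x := by
  have hgi : IntegrableOn g (Set.Ioo a b) :=
    (hg.integrableOn_Icc).mono_set Set.Ioo_subset_Icc_self
  have hae : 0 ≤ᵐ[volume.restrict (Set.Ioo a b)] g := by
    filter_upwards [ae_restrict_mem measurableSet_Ioo] with x hx using hnn x hx
  rw [MeasureTheory.setIntegral_pos_iff_support_of_nonneg_ae hae hgi]
  have hca : ContinuousAt g z := hg.continuousAt (Icc_mem_nhds hz.1 hz.2)
  have hev : ∀ᶠ x in 𝓝 z, 0 < g x := hca.eventually (lt_mem_nhds hgz)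
  have hmem : Function.support g ∩ Set.Ioo a b ∈ 𝓝 z := by
    filter_upwards [hev, Ioo_mem_nhds hz.1 hz.2] with x hx1 hx2
    exact ⟨ne_of_gt hx1, hx2⟩
  obtain ⟨ε, hε, hball⟩ := Metric.mem_nhds_iff.1 hmem
  calc (0 : ENNReal) < volume (Metric.ball z ε) := Metric.measure_ball_pos _ _ hε
    _ ≤ _ := measure_mono hball

/-- **Strong maximum principle for the stationary nonlocal Neumann advection
operator.** If `u ∈ C¹([l₁,l₂])` is nonnegative, not identically zero,
`u(l₁) ≥ 0`, and `d∫_Ω J(x−y)(u(y) − u(x))dy − q u'(x) + c(x)u(x) ≤ 0` on `Ω`,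
then `u > 0` on `(l₁,l₂]`. -/
theorem stationary_strong_maximum_principle
    (l₁ l₂ d q : ℝ) (J c u : ℝ → ℝ)
    (hl : l₁ < l₂) (hd : 0 < d) (hq : 0 < q)
    -- condition (J)
    (hJc : Continuous J) (hJnn : ∀ x, 0 ≤ J x) (hJ0 : 0 < J 0)
    (hJint : MeasureTheory.Integrable J) (hJ1 : (∫ x, J x) = 1)
    -- condition (J1)
    (hJsymm : ∀ x, J (-x) = J x) (hJbdd : ∃ C, ∀ x, J x ≤ C)
    -- c ∈ L∞(Ω)
    (hc : ∃ C, ∀ x ∈ Set.Ioo l₁ l₂, |c x| ≤ C)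
    -- u ∈ C¹([l₁,l₂]), u ≥ 0, u ≢ 0, u(l₁) ≥ 0
    (huC1 : ContDiffOn ℝ 1 u (Set.Icc l₁ l₂))
    (hunn : ∀ x ∈ Set.Icc l₁ l₂, 0 ≤ u x)
    (hune : ∃ x ∈ Set.Icc l₁ l₂, u x ≠ 0)
    (hul : 0 ≤ u l₁)
    -- differential inequality
    (hineq : ∀ x ∈ Set.Ioo l₁ l₂,
      d * (∫ y in Set.Ioo l₁ l₂, J (x - y) * (u y - u x)) - q * deriv u x
        + c x * u x ≤ 0) :
    ∀ x ∈ Set.Ioc l₁ l₂, 0 < u x := by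
  obtain ⟨Cc, hCc⟩ := hc
  obtain ⟨CJ, hCJ⟩ := hJbdd
  have huc : ContinuousOn u (Set.Icc l₁ l₂) := huC1.continuousOn
  -- continuity of the kernel-product function
  have hgc : ∀ x : ℝ, ContinuousOn (fun y => J (x - y) * u y) (Set.Icc l₁ l₂) := fun x =>
    ((hJc.comp (continuous_const.sub continuous_id)).continuousOn).mul huc
  -- δ with J > 0 on (-δ, δ)
  obtain ⟨δ, hδ, hball⟩ : ∃ δ > 0, ∀ t : ℝ, |t| < δ → 0 < J t := by
    have hev : ∀ᶠ t in 𝓝 (0:ℝ), 0 < J t := hJc.continuousAt.eventually (lt_mem_nhds hJ0)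
    obtain ⟨ε, hε, hb⟩ := Metric.mem_nhds_iff.1 hev
    exact ⟨ε, hε, fun t ht => hb (by simpa [Real.dist_eq] using ht)⟩
  -- Step A: interior zeros propagate
  have key : ∀ x₀ ∈ Set.Ioo l₁ l₂, u x₀ = 0 → ∀ z ∈ Set.Ioo l₁ l₂, |x₀ - z| < δ → u z = 0 := by
    intro x₀ hx₀ hu0 z hz hdist
    by_contra huz
    have huzpos : 0 < u z := lt_of_le_of_ne (hunn z (Ioo_subset_Icc_self hz)) (Ne.symm huz)
    have hmin : IsLocalMin u x₀ := by
      filter_upwards [Icc_mem_nhds hx₀.1 hx₀.2] with y hy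
      rw [hu0]; exact hunn y hy
    have hd0 : deriv u x₀ = 0 := hmin.deriv_eq_zero
    have h := hineq x₀ hx₀
    rw [hd0, hu0] at h
    simp only [sub_zero, mul_zero, sub_zero, add_zero] at h
    have hIpos : 0 < ∫ y in Set.Ioo l₁ l₂, J (x₀ - y) * u y :=
      pos_setIntegral (hgc x₀) (fun y hy => mul_nonneg (hJnn _) (hunn y (Ioo_subset_Icc_self hy)))
        hz (mul_pos (hball _ hdist) huzpos)
    nlinarith [mul_pos hd hIpos]
  -- Step B: u > 0 on the open interval
  have hpos : ∀ x ∈ Set.Ioo l₁ l₂, 0 < u x := by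
    by_contra hcon
    push_neg at hcon
    obtain ⟨x₀, hx₀, hx₀le⟩ := hcon
    have hx₀0 : u x₀ = 0 := le_antisymm hx₀le (hunn x₀ (Ioo_subset_Icc_self hx₀))
    set Z : Set ℝ := {x | x ∈ Set.Ioo l₁ l₂ ∧ u x = 0} with hZ
    set U : Set ℝ := Set.Ioo l₁ l₂ ∩ u ⁻¹' {0}ᶜ with hU
    set V : Set ℝ := ⋃ w ∈ Z, Metric.ball w δ with hV
    have hUopen : IsOpen U :=
      (huc.mono Ioo_subset_Icc_self).isOpen_inter_preimage isOpen_Ioo (isOpen_compl_singleton)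
    have hVopen : IsOpen V := isOpen_biUnion fun w _ => Metric.isOpen_ball
    have hVzero : ∀ x ∈ Set.Ioo l₁ l₂, x ∈ V → u x = 0 := by
      intro x hx hxV
      obtain ⟨w, hw, hxw⟩ := Set.mem_iUnion₂.1 hxV
      exact key w hw.1 hw.2 x hx (by rw [abs_sub_comm]; simpa [Real.dist_eq] using hxw)
    have hdisj : Disjoint U V := by
      rw [Set.disjoint_left]
      rintro x ⟨hx1, hx2⟩ hxV
      exact hx2 (hVzero x hx1 hxV)
    have hcover : Set.Ioo l₁ l₂ ⊆ U ∪ V := by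
      intro x hx
      by_cases hux : u x = 0
      · exact Or.inr (Set.mem_iUnion₂.2 ⟨x, ⟨hx, hux⟩, Metric.mem_ball_self hδ⟩)
      · exact Or.inl ⟨hx, hux⟩
    rcases (isPreconnected_Ioo).subset_or_subset hUopen hVopen hdisj hcover with hsub | hsub
    · exact (hsub hx₀ |>.2) hx₀0
    · -- u = 0 on Ioo, hence on Icc, contradicting hune
      have hzero : ∀ x ∈ Set.Ioo l₁ l₂, u x = 0 := fun x hx => hVzero x hx (hsub hx)
      obtain ⟨w, hw, hw0⟩ := hune
      rcases eq_or_lt_of_le hw.1 with h1 | h1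
      · -- w = l₁
        have hne : (𝓝[Set.Ioo l₁ l₂] l₁).NeBot := left_nhdsWithin_Ioo_neBot hl
        have ht1 : Filter.Tendsto u (𝓝[Set.Ioo l₁ l₂] l₁) (𝓝 (u l₁)) :=
          (huc l₁ (Set.left_mem_Icc.2 hl.le)).mono_left
            (nhdsWithin_mono _ Ioo_subset_Icc_self)
        have ht2 : Filter.Tendsto u (𝓝[Set.Ioo l₁ l₂] l₁) (𝓝 0) := by
          apply Filter.Tendsto.congr' _ tendsto_const_nhds
          filter_upwards [self_mem_nhdsWithin] with x hx using (hzero x hx).symm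
        exact hw0 (h1 ▸ tendsto_nhds_unique ht1 ht2)
      rcases eq_or_lt_of_le hw.2 with h2 | h2
      · -- w = l₂
        have hne : (𝓝[Set.Ioo l₁ l₂] l₂).NeBot := right_nhdsWithin_Ioo_neBot hl
        have ht1 : Filter.Tendsto u (𝓝[Set.Ioo l₁ l₂] l₂) (𝓝 (u l₂)) :=
          (huc l₂ (Set.right_mem_Icc.2 hl.le)).mono_left
            (nhdsWithin_mono _ Ioo_subset_Icc_self)
        have ht2 : Filter.Tendsto u (𝓝[Set.Ioo l₁ l₂] l₂) (𝓝 0) := by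
          apply Filter.Tendsto.congr' _ tendsto_const_nhds
          filter_upwards [self_mem_nhdsWithin] with x hx using (hzero x hx).symm
        exact hw0 (h2 ▸ tendsto_nhds_unique ht1 ht2)
      · exact hw0 (hzero w ⟨h1, h2⟩)
  -- Step C: u l₂ > 0
  have hl₂ : 0 < u l₂ := by
    by_contra hcon
    push_neg at hcon
    have hu20 : u l₂ = 0 := le_antisymm hcon (hunn l₂ (Set.right_mem_Icc.2 hl.le))
    set f := derivWithin u (Set.Icc l₁ l₂) with hfdef
    have hfc : ContinuousOn f (Set.Icc l₁ l₂) :=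
      huC1.continuousOn_derivWithin (uniqueDiffOn_Icc hl) le_rfl
    haveI hne : (𝓝[Set.Ioo l₁ l₂] l₂).NeBot := right_nhdsWithin_Ioo_neBot hl
    -- the one-sided derivative at l₂ is nonpositive
    have hf2 : f l₂ ≤ 0 := by
      have hder : HasDerivWithinAt u (f l₂) (Set.Icc l₁ l₂) l₂ :=
        ((huC1.differentiableOn one_ne_zero) l₂ (Set.right_mem_Icc.2 hl.le)).hasDerivWithinAt
      rw [hasDerivWithinAt_iff_tendsto_slope] at hder
      haveI hneb : (𝓝[Set.Icc l₁ l₂ \ {l₂}] l₂).NeBot :=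
        hne.mono (nhdsWithin_mono _ (fun x hx => ⟨Ioo_subset_Icc_self hx, ne_of_lt hx.2⟩))
      refine le_of_tendsto hder ?_
      filter_upwards [self_mem_nhdsWithin] with x hx
      obtain ⟨hx1, hx2⟩ := hx
      have hxlt : x < l₂ := lt_of_le_of_ne hx1.2 hx2
      rw [slope_def_field, hu20, sub_zero]
      exact div_nonpos_of_nonneg_of_nonpos (hunn x hx1) (by linarith)
    -- integrability facts
    have hI1int : ∀ x : ℝ, IntegrableOn (fun y => J (x - y) * u y) (Set.Ioo l₁ l₂) := fun x =>
      ((hgc x).integrableOn_Icc).mono_set Ioo_subset_Icc_self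
    have hJxint : ∀ x : ℝ, IntegrableOn (fun y => J (x - y)) (Set.Ioo l₁ l₂) := fun x =>
      (((hJc.comp (continuous_const.sub continuous_id)).continuousOn).integrableOn_Icc).mono_set
        Ioo_subset_Icc_self
    -- splitting the integral
    have hsplit : ∀ x : ℝ, (∫ y in Set.Ioo l₁ l₂, J (x - y) * (u y - u x))
        = (∫ y in Set.Ioo l₁ l₂, J (x - y) * u y)
          - u x * ∫ y in Set.Ioo l₁ l₂, J (x - y) := by
      intro x
      simp_rw [mul_sub]
      rw [integral_sub (hI1int x) ((hJxint x).mul_const (u x))]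
      rw [MeasureTheory.integral_mul_const, mul_comm]
    -- bounds on the kernel mass
    have hK0 : ∀ x : ℝ, 0 ≤ ∫ y in Set.Ioo l₁ l₂, J (x - y) := fun x =>
      setIntegral_nonneg measurableSet_Ioo (fun y _ => hJnn _)
    have hK1 : ∀ x : ℝ, (∫ y in Set.Ioo l₁ l₂, J (x - y)) ≤ 1 := by
      intro x
      have hint : Integrable (fun y => J (x - y)) := hJint.comp_sub_left x
      calc (∫ y in Set.Ioo l₁ l₂, J (x - y)) ≤ ∫ y, J (x - y) :=
            setIntegral_le_integral hint (Filter.Eventually.of_forall fun y => hJnn _)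
        _ = ∫ y, J y := integral_sub_left_eq_self J volume x
        _ = 1 := hJ1
    -- u tends to 0 at l₂
    have h2 : Filter.Tendsto u (𝓝[Set.Ioo l₁ l₂] l₂) (𝓝 0) := by
      have := (huc l₂ (Set.right_mem_Icc.2 hl.le)).mono_left
        (nhdsWithin_mono _ Ioo_subset_Icc_self)
      rwa [hu20] at this
    -- dominated convergence for the nonlocal term
    obtain ⟨M, hM⟩ := isCompact_Icc.exists_bound_of_continuousOn huc
    have hCJ0 : 0 ≤ CJ := le_trans (hJnn 0) (hCJ 0)
    have h1 : Filter.Tendsto (fun x => ∫ y in Set.Ioo l₁ l₂, J (x - y) * u y)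
        (𝓝[Set.Ioo l₁ l₂] l₂) (𝓝 (∫ y in Set.Ioo l₁ l₂, J (l₂ - y) * u y)) := by
      apply MeasureTheory.tendsto_integral_filter_of_dominated_convergence (fun _ => CJ * M)
      · exact Filter.Eventually.of_forall fun x =>
          (((hgc x).mono Ioo_subset_Icc_self).aestronglyMeasurable measurableSet_Ioo)
      · refine Filter.Eventually.of_forall fun x => ?_
        filter_upwards [ae_restrict_mem measurableSet_Ioo] with y hy
        rw [norm_mul]
        refine mul_le_mul ?_ (hM y (Ioo_subset_Icc_self hy)) (norm_nonneg _) hCJ0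
        rw [Real.norm_eq_abs, abs_of_nonneg (hJnn _)]
        exact hCJ _
      · exact integrableOn_const measure_Ioo_lt_top.ne
      · refine Filter.Eventually.of_forall fun y => ?_
        have hsub : Filter.Tendsto (fun x : ℝ => x - y) (𝓝[Set.Ioo l₁ l₂] l₂) (𝓝 (l₂ - y)) :=
          ((continuous_id.sub continuous_const).tendsto l₂).mono_left nhdsWithin_le_nhds
        exact ((hJc.tendsto _).comp hsub).mul_const _
    -- the advective kernel-mass term tends to 0
    have h3 : Filter.Tendsto (fun x => u x * ∫ y in Set.Ioo l₁ l₂, J (x - y))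
        (𝓝[Set.Ioo l₁ l₂] l₂) (𝓝 0) := by
      apply tendsto_of_tendsto_of_tendsto_of_le_of_le' tendsto_const_nhds h2
      · filter_upwards [self_mem_nhdsWithin] with x hx
        exact mul_nonneg (hunn x (Ioo_subset_Icc_self hx)) (hK0 x)
      · filter_upwards [self_mem_nhdsWithin] with x hx
        exact mul_le_of_le_one_right (hunn x (Ioo_subset_Icc_self hx)) (hK1 x)
    -- the zeroth order term tends to 0
    have h5 : Filter.Tendsto (fun x => c x * u x) (𝓝[Set.Ioo l₁ l₂] l₂) (𝓝 0) := by
      have hup : Filter.Tendsto (fun x => Cc * u x) (𝓝[Set.Ioo l₁ l₂] l₂) (𝓝 0) := by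
        simpa using h2.const_mul Cc
      have hlo : Filter.Tendsto (fun x => -(Cc * u x)) (𝓝[Set.Ioo l₁ l₂] l₂) (𝓝 0) := by
        simpa using hup.neg
      apply tendsto_of_tendsto_of_tendsto_of_le_of_le' hlo hup
      · filter_upwards [self_mem_nhdsWithin] with x hx
        have : |c x * u x| ≤ Cc * u x := by
          rw [abs_mul, abs_of_nonneg (hunn x (Ioo_subset_Icc_self hx))]
          exact mul_le_mul_of_nonneg_right (hCc x hx) (hunn x (Ioo_subset_Icc_self hx))
        linarith [(abs_le.1 this).1]
      · filter_upwards [self_mem_nhdsWithin] with x hx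
        have : |c x * u x| ≤ Cc * u x := by
          rw [abs_mul, abs_of_nonneg (hunn x (Ioo_subset_Icc_self hx))]
          exact mul_le_mul_of_nonneg_right (hCc x hx) (hunn x (Ioo_subset_Icc_self hx))
        linarith [(abs_le.1 this).2]
    -- the derivative term tends to q * f l₂
    have h4 : Filter.Tendsto f (𝓝[Set.Ioo l₁ l₂] l₂) (𝓝 (f l₂)) :=
      (hfc l₂ (Set.right_mem_Icc.2 hl.le)).mono_left (nhdsWithin_mono _ Ioo_subset_Icc_self)
    -- the rearranged inequality
    have hineq' : ∀ᶠ x in 𝓝[Set.Ioo l₁ l₂] l₂,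
        d * (∫ y in Set.Ioo l₁ l₂, J (x - y) * u y)
          ≤ q * f x - c x * u x + d * (u x * ∫ y in Set.Ioo l₁ l₂, J (x - y)) := by
      filter_upwards [self_mem_nhdsWithin] with x hx
      have h := hineq x hx
      rw [show deriv u x = f x from (derivWithin_of_mem_nhds (Icc_mem_nhds hx.1 hx.2)).symm] at h
      rw [hsplit x, mul_sub] at h
      linarith
    have hlim1 : Filter.Tendsto (fun x => d * ∫ y in Set.Ioo l₁ l₂, J (x - y) * u y)
        (𝓝[Set.Ioo l₁ l₂] l₂) (𝓝 (d * ∫ y in Set.Ioo l₁ l₂, J (l₂ - y) * u y)) :=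
      h1.const_mul d
    have hlim2 : Filter.Tendsto
        (fun x => q * f x - c x * u x + d * (u x * ∫ y in Set.Ioo l₁ l₂, J (x - y)))
        (𝓝[Set.Ioo l₁ l₂] l₂) (𝓝 (q * f l₂ - 0 + d * 0)) :=
      ((h4.const_mul q).sub h5).add (h3.const_mul d)
    have hfinal : d * (∫ y in Set.Ioo l₁ l₂, J (l₂ - y) * u y) ≤ q * f l₂ - 0 + d * 0 :=
      le_of_tendsto_of_tendsto hlim1 hlim2 hineq'
    -- but the nonlocal integral at l₂ is positive
    set z := max ((l₁ + l₂) / 2) (l₂ - δ / 2) with hzdef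
    have hzΩ : z ∈ Set.Ioo l₁ l₂ := by
      constructor
      · exact lt_max_of_lt_left (by linarith)
      · exact max_lt (by linarith) (by linarith)
    have hdz : |l₂ - z| < δ := by
      have h1' : l₂ - z ≤ δ / 2 := by
        have := le_max_right ((l₁ + l₂) / 2) (l₂ - δ / 2)
        simp only [hzdef] at *
        linarith
      rw [abs_of_nonneg (by linarith [hzΩ.2])]
      linarith
    have hIpos : 0 < ∫ y in Set.Ioo l₁ l₂, J (l₂ - y) * u y :=
      pos_setIntegral (hgc l₂)
        (fun y hy => mul_nonneg (hJnn _) (hunn y (Ioo_subset_Icc_self hy)))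
        hzΩ (mul_pos (hball _ hdz) (hpos z hzΩ))
    have := mul_nonpos_of_nonneg_of_nonpos hq.le hf2
    nlinarith [mul_pos hd hIpos]
  intro x hx
  rcases eq_or_lt_of_le hx.2 with h | h
  · exact h ▸ hl₂
  · exact hpos x ⟨hx.1, h⟩
end

section
/- Assume conditions (J) and (J1) and let h be a KPP nonlinearity. Then every nontrivial solution U of the Neumann stationary problem d∫_Ω J(x−y)(U(y) − U(x))dy − q U'(x) + U(x)h(x,U(x)) = 0 on Ω with U(l₁) = 0 satisfies U ∈ C¹([l₁,l₂]) and U(x) > 0 for every x ∈ (l₁,l₂]. -/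
open MeasureTheory


/-- Positivity of a set integral of a nonnegative continuous function that is
positive at an interior point. -/
lemma aux_setIntegral_pos {a b : ℝ} (g : ℝ → ℝ) (hab : a < b)
    (hgc : ContinuousOn g (Set.Icc a b)) (hgnn : ∀ y ∈ Set.Ioo a b, 0 ≤ g y)
    {z : ℝ} (hz : z ∈ Set.Ioo a b) (hgz : 0 < g z) :
    0 < ∫ y in Set.Ioo a b, g y := by
  have hint : IntegrableOn g (Set.Ioo a b) :=
    (hgc.integrableOn_compact isCompact_Icc).mono_set Set.Ioo_subset_Icc_self
  have hae : 0 ≤ᶠ[ae (volume.restrict (Set.Ioo a b))] g := by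
    filter_upwards [ae_restrict_mem measurableSet_Ioo] with y hy using hgnn y hy
  rw [MeasureTheory.setIntegral_pos_iff_support_of_nonneg_ae hae hint]
  have hopen : IsOpen (Set.Ioo a b ∩ g ⁻¹' Set.Ioi 0) :=
    (hgc.mono Set.Ioo_subset_Icc_self).isOpen_inter_preimage isOpen_Ioo isOpen_Ioi
  have hmem : z ∈ Set.Ioo a b ∩ g ⁻¹' Set.Ioi 0 := ⟨hz, hgz⟩
  obtain ⟨ε, hε, hball⟩ := Metric.isOpen_iff.1 hopen z hmem
  have hsub : Set.Ioo (z - ε) (z + ε) ⊆ Function.support g ∩ Set.Ioo a b := by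
    intro y hy
    have hyb : y ∈ Metric.ball z ε := by
      rw [Metric.mem_ball, Real.dist_eq, abs_sub_lt_iff]
      constructor <;> [linarith [hy.2]; linarith [hy.1]]
    obtain ⟨hyI, hyg⟩ := hball hyb
    exact ⟨ne_of_gt hyg, hyI⟩
  calc (0:ENNReal) < volume (Set.Ioo (z - ε) (z + ε)) := by
        rw [Real.volume_Ioo]
        exact ENNReal.ofReal_pos.2 (by linarith)
    _ ≤ volume (Function.support g ∩ Set.Ioo a b) := measure_mono hsub

/-- `U` is a nontrivial solution of the Neumann stationary problem
`d∫_Ω J(x−y)(U(y) − U(x))dy − q U'(x) + U(x)h(x,U(x)) = 0` on `Ω` with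
`U(l₁) = 0`: bounded, continuous, nonnegative on `[l₁,l₂]`, differentiable
on `Ω`, and not identically zero. -/
def NeumannStatSol (l₁ l₂ d q : ℝ) (J : ℝ → ℝ) (h : ℝ → ℝ → ℝ) (U : ℝ → ℝ) : Prop :=
  ContinuousOn U (Set.Icc l₁ l₂) ∧
  (∃ C, ∀ x ∈ Set.Icc l₁ l₂, |U x| ≤ C) ∧
  (∀ x ∈ Set.Icc l₁ l₂, 0 ≤ U x) ∧
  (∀ x ∈ Set.Ioo l₁ l₂, DifferentiableAt ℝ U x) ∧
  (∃ x ∈ Set.Icc l₁ l₂, U x ≠ 0) ∧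
  U l₁ = 0 ∧
  ∀ x ∈ Set.Ioo l₁ l₂,
    d * (∫ y in Set.Ioo l₁ l₂, J (x - y) * (U y - U x)) - q * deriv U x
      + U x * h x (U x) = 0

/-- **Regularity and positivity of nontrivial stationary solutions (Neumann
case).** Every nontrivial solution `U` of the Neumann stationary problem
satisfies `U ∈ C¹([l₁,l₂])` and `U > 0` on `(l₁,l₂]`. -/
theorem neumann_stationary_regularity_positivity
    (l₁ l₂ d q : ℝ) (J : ℝ → ℝ) (h : ℝ → ℝ → ℝ)
    (hl : l₁ < l₂) (hd : 0 < d) (hq : 0 < q)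
    -- condition (J)
    (hJc : Continuous J) (hJnn : ∀ x, 0 ≤ J x) (hJ0 : 0 < J 0)
    (hJint : MeasureTheory.Integrable J) (hJ1 : (∫ x, J x) = 1)
    -- condition (J1)
    (hJsymm : ∀ x, J (-x) = J x) (hJbdd : ∃ C, ∀ x, J x ≤ C)
    -- KPP nonlinearity
    (hhC1 : ContDiffOn ℝ 1 (fun p : ℝ × ℝ => h p.1 p.2) (Set.Icc l₁ l₂ ×ˢ Set.Ici 0))
    (hhdec : ∀ x ∈ Set.Icc l₁ l₂, StrictAntiOn (fun u => h x u) (Set.Ici 0))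
    (hhN : ∃ N > 0, ∀ x ∈ Set.Icc l₁ l₂, ∀ u > N, h x u < 0) :
    ∀ U, NeumannStatSol l₁ l₂ d q J h U →
      ContDiffOn ℝ 1 U (Set.Icc l₁ l₂) ∧ ∀ x ∈ Set.Ioc l₁ l₂, 0 < U x := by
  rintro U ⟨hUc, ⟨C, hC⟩, hUnn, hUdiff, hUne, hUl₁, heq⟩
  obtain ⟨CJ, hCJ⟩ := hJbdd
  have hC0 : 0 ≤ C := le_trans (abs_nonneg _) (hC l₁ ⟨le_refl _, hl.le⟩)
  have hCJ0 : 0 ≤ CJ := le_trans (hJnn 0) (hCJ 0)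
  have hl₁m : l₁ ∈ Set.Icc l₁ l₂ := ⟨le_refl _, hl.le⟩
  have hl₂m : l₂ ∈ Set.Icc l₁ l₂ := ⟨hl.le, le_refl _⟩
  -- the candidate derivative
  set V : ℝ → ℝ := fun x =>
    (d * (∫ y in Set.Ioo l₁ l₂, J (x - y) * (U y - U x)) + U x * h x (U x)) / q with hV
  -- continuity of the nonlocal term
  have hKcont : ContinuousOn
      (fun x => ∫ y in Set.Ioo l₁ l₂, J (x - y) * (U y - U x)) (Set.Icc l₁ l₂) := by
    intro x₀ hx₀
    apply MeasureTheory.continuousWithinAt_of_dominated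
      (bound := fun _ => CJ * (C + C))
    · apply Filter.Eventually.of_forall
      intro x
      apply ContinuousOn.aestronglyMeasurable _ measurableSet_Ioo
      exact ((hJc.comp (continuous_const.sub continuous_id)).continuousOn.mul
        ((hUc.sub continuousOn_const).mono Set.Ioo_subset_Icc_self))
    · filter_upwards [eventually_mem_nhdsWithin] with x hx
      filter_upwards [ae_restrict_mem measurableSet_Ioo] with y hy
      have h1 : |J (x - y)| ≤ CJ := by
        rw [abs_of_nonneg (hJnn _)]; exact hCJ _
      have h2 : |U y - U x| ≤ C + C :=
        (abs_sub _ _).trans (add_le_add (hC y (Set.Ioo_subset_Icc_self hy)) (hC x hx))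
      calc ‖J (x - y) * (U y - U x)‖ = |J (x - y)| * |U y - U x| := abs_mul _ _
        _ ≤ CJ * (C + C) := mul_le_mul h1 h2 (abs_nonneg _) hCJ0
    · exact (integrableOn_const measure_Ioo_lt_top.ne)
    · apply Filter.Eventually.of_forall
      intro y
      exact ((hJc.comp (continuous_id.sub continuous_const)).continuousAt.continuousWithinAt).mul
        ((continuousOn_const.sub hUc) x₀ hx₀)
  -- continuity of the reaction term
  have hhcont : ContinuousOn (fun x => h x (U x)) (Set.Icc l₁ l₂) := by
    have := hhC1.continuousOn.comp (continuousOn_id.prodMk hUc)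
      (fun x hx => Set.mk_mem_prod hx (hUnn x hx))
    exact this
  have hVcont : ContinuousOn V (Set.Icc l₁ l₂) := by
    rw [hV]
    exact (((continuousOn_const.mul hKcont).add (hUc.mul hhcont)).div_const q)
  -- the derivative equals V in the interior
  have hderiveq : ∀ x ∈ Set.Ioo l₁ l₂, deriv U x = V x := by
    intro x hx
    have h0 := heq x hx
    rw [hV]
    field_simp
    linarith
  have hUdiffIoo : DifferentiableOn ℝ U (Set.Ioo l₁ l₂) :=
    fun x hx => (hUdiff x hx).differentiableWithinAt
  -- tendsto of deriv at endpoints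
  have htd₁ : Filter.Tendsto (deriv U) (nhdsWithin l₁ (Set.Ioi l₁)) (nhds (V l₁)) := by
    have h1 : Filter.Tendsto V (nhdsWithin l₁ (Set.Ioo l₁ l₂)) (nhds (V l₁)) :=
      (hVcont l₁ hl₁m).mono_left (nhdsWithin_mono _ Set.Ioo_subset_Icc_self)
    rw [nhdsWithin_Ioo_eq_nhdsGT hl] at h1
    apply Filter.Tendsto.congr' _ h1
    filter_upwards [Ioo_mem_nhdsGT_of_mem (Set.left_mem_Ico.2 hl)] with x hx
    exact (hderiveq x hx).symm
  have htd₂ : Filter.Tendsto (deriv U) (nhdsWithin l₂ (Set.Iio l₂)) (nhds (V l₂)) := by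
    have h1 : Filter.Tendsto V (nhdsWithin l₂ (Set.Ioo l₁ l₂)) (nhds (V l₂)) :=
      (hVcont l₂ hl₂m).mono_left (nhdsWithin_mono _ Set.Ioo_subset_Icc_self)
    rw [nhdsWithin_Ioo_eq_nhdsLT hl] at h1
    apply Filter.Tendsto.congr' _ h1
    filter_upwards [Ioo_mem_nhdsLT_of_mem (Set.right_mem_Ioc.2 hl)] with x hx
    exact (hderiveq x hx).symm
  have hdl₁ : HasDerivWithinAt U (V l₁) (Set.Ici l₁) l₁ :=
    hasDerivWithinAt_Ici_of_tendsto_deriv hUdiffIoo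
      ((hUc l₁ hl₁m).mono Set.Ioo_subset_Icc_self)
      (Ioo_mem_nhdsGT_of_mem (Set.left_mem_Ico.2 hl)) htd₁
  have hdl₂ : HasDerivWithinAt U (V l₂) (Set.Iic l₂) l₂ :=
    hasDerivWithinAt_Iic_of_tendsto_deriv hUdiffIoo
      ((hUc l₂ hl₂m).mono Set.Ioo_subset_Icc_self)
      (Ioo_mem_nhdsLT_of_mem (Set.right_mem_Ioc.2 hl)) htd₂
  have hUdiffOn : DifferentiableOn ℝ U (Set.Icc l₁ l₂) := by
    intro x hx
    rcases eq_or_lt_of_le hx.1 with h1 | h1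
    · rw [← h1]
      exact (hdl₁.mono Set.Icc_subset_Ici_self).differentiableWithinAt
    rcases eq_or_lt_of_le hx.2 with h2 | h2
    · rw [h2]
      exact (hdl₂.mono Set.Icc_subset_Iic_self).differentiableWithinAt
    · exact (hUdiff x ⟨h1, h2⟩).differentiableWithinAt
  have hdW : ∀ x ∈ Set.Icc l₁ l₂, derivWithin U (Set.Icc l₁ l₂) x = V x := by
    intro x hx
    rcases eq_or_lt_of_le hx.1 with h1 | h1
    · rw [← h1]
      exact (hdl₁.mono Set.Icc_subset_Ici_self).derivWithin ((uniqueDiffOn_Icc hl) l₁ hl₁m)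
    rcases eq_or_lt_of_le hx.2 with h2 | h2
    · rw [h2]
      exact (hdl₂.mono Set.Icc_subset_Iic_self).derivWithin ((uniqueDiffOn_Icc hl) l₂ hl₂m)
    · rw [derivWithin_of_mem_nhds (Icc_mem_nhds h1 h2)]
      exact hderiveq x ⟨h1, h2⟩
  have hC1 : ContDiffOn ℝ 1 U (Set.Icc l₁ l₂) := by
    have h01 := (contDiffOn_succ_iff_derivWithin (n := 0) (f := U)
      (uniqueDiffOn_Icc hl)).2
      ⟨hUdiffOn, by simp, by rw [contDiffOn_zero]; exact hVcont.congr hdW⟩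
    simpa using h01
  -- positivity of J near 0
  obtain ⟨δ₀, hδ₀, hJpos⟩ : ∃ δ > 0, ∀ t : ℝ, |t| < δ → 0 < J t := by
    have hop : IsOpen {t : ℝ | 0 < J t} := isOpen_lt continuous_const hJc
    obtain ⟨δ, hδ, hball⟩ := Metric.isOpen_iff.1 hop 0 hJ0
    exact ⟨δ, hδ, fun t ht => hball (by simpa [Real.dist_eq] using ht)⟩
  -- local propagation of zeros
  have hloc : ∀ x₀ ∈ Set.Ioo l₁ l₂, U x₀ = 0 →
      ∀ z ∈ Set.Ioo l₁ l₂, |z - x₀| < δ₀ → U z = 0 := by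
    intro x₀ hx₀ hU0 z hz hdist
    by_contra hUz
    have hUzpos : 0 < U z :=
      lt_of_le_of_ne (hUnn z (Set.Ioo_subset_Icc_self hz)) (Ne.symm hUz)
    have hmin : IsLocalMin U x₀ := by
      filter_upwards [isOpen_Ioo.mem_nhds hx₀] with x hx
      rw [hU0]; exact hUnn x (Set.Ioo_subset_Icc_self hx)
    have hd0 : deriv U x₀ = 0 := hmin.deriv_eq_zero
    have heq0 := heq x₀ hx₀
    rw [hd0, hU0] at heq0
    simp only [sub_zero, mul_zero, zero_mul, add_zero] at heq0
    have hK0 : (∫ y in Set.Ioo l₁ l₂, J (x₀ - y) * U y) = 0 := by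
      rcases mul_eq_zero.1 heq0 with h' | h'
      · exact absurd h' hd.ne'
      · exact h'
    have hpos : 0 < ∫ y in Set.Ioo l₁ l₂, J (x₀ - y) * U y := by
      apply aux_setIntegral_pos _ hl
        ((hJc.comp (continuous_const.sub continuous_id)).continuousOn.mul hUc)
        (fun y hy => mul_nonneg (hJnn _) (hUnn y (Set.Ioo_subset_Icc_self hy))) hz
      exact mul_pos (hJpos _ (by show |x₀ - z| < δ₀; rwa [abs_sub_comm])) hUzpos
    linarith
  -- positivity in the interior
  have hIooPos : ∀ x ∈ Set.Ioo l₁ l₂, 0 < U x := by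
    by_contra hcon
    push_neg at hcon
    obtain ⟨x₀, hx₀, hx₀le⟩ := hcon
    have hx₀0 : U x₀ = 0 := le_antisymm hx₀le (hUnn x₀ (Set.Ioo_subset_Icc_self hx₀))
    set A : Set ℝ := {x | x ∈ Set.Ioo l₁ l₂ ∧ U x = 0} with hA
    have hAopen : IsOpen A := by
      rw [isOpen_iff_mem_nhds]
      rintro x ⟨hxI, hx0⟩
      have hmem : Set.Ioo l₁ l₂ ∩ Metric.ball x δ₀ ∈ nhds x :=
        Filter.inter_mem (isOpen_Ioo.mem_nhds hxI) (Metric.ball_mem_nhds x hδ₀)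
      refine Filter.mem_of_superset hmem ?_
      rintro w ⟨hwI, hwb⟩
      exact ⟨hwI, hloc x hxI hx0 w hwI (by simpa [Real.dist_eq] using hwb)⟩
    have hBopen : IsOpen (Set.Ioo l₁ l₂ ∩ U ⁻¹' {(0:ℝ)}ᶜ) :=
      (hUc.mono Set.Ioo_subset_Icc_self).isOpen_inter_preimage isOpen_Ioo
        isOpen_compl_singleton
    have hsub : Set.Ioo l₁ l₂ ⊆ A ∪ (Set.Ioo l₁ l₂ ∩ U ⁻¹' {(0:ℝ)}ᶜ) := by
      intro x hx
      by_cases h0 : U x = 0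
      · exact Or.inl ⟨hx, h0⟩
      · exact Or.inr ⟨hx, h0⟩
    have hne1 : (Set.Ioo l₁ l₂ ∩ A).Nonempty := ⟨x₀, hx₀, hx₀, hx₀0⟩
    have hUzero : ∀ x ∈ Set.Ioo l₁ l₂, U x = 0 := by
      intro x hx
      by_contra hx0
      have hne2 : (Set.Ioo l₁ l₂ ∩ (Set.Ioo l₁ l₂ ∩ U ⁻¹' {(0:ℝ)}ᶜ)).Nonempty :=
        ⟨x, hx, hx, hx0⟩
      obtain ⟨y, _, hyA, hyB⟩ := isPreconnected_Ioo _ _ hAopen hBopen hsub hne1 hne2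
      exact hyB.2 hyA.2
    obtain ⟨w, hw, hw0⟩ := hUne
    apply hw0
    rcases eq_or_lt_of_le hw.1 with h1 | h1
    · rw [← h1]; exact hUl₁
    rcases eq_or_lt_of_le hw.2 with h2 | h2
    · rw [h2]
      have t1 : Filter.Tendsto U (nhdsWithin l₂ (Set.Ioo l₁ l₂)) (nhds (U l₂)) :=
        (hUc l₂ hl₂m).mono_left (nhdsWithin_mono _ Set.Ioo_subset_Icc_self)
      have t2 : Filter.Tendsto U (nhdsWithin l₂ (Set.Ioo l₁ l₂)) (nhds 0) := by
        apply Filter.Tendsto.congr' _ tendsto_const_nhds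
        filter_upwards [self_mem_nhdsWithin] with z hz
        exact (hUzero z hz).symm
      rw [nhdsWithin_Ioo_eq_nhdsLT hl] at t1 t2
      exact tendsto_nhds_unique t1 t2
    · exact hUzero w ⟨h1, h2⟩
  -- positivity at the right endpoint
  have hl₂pos : 0 < U l₂ := by
    by_contra hcon
    have hU2 : U l₂ = 0 := le_antisymm (not_lt.1 hcon) (hUnn l₂ hl₂m)
    have hm : 0 < min δ₀ (l₂ - l₁) := lt_min hδ₀ (sub_pos.2 hl)
    set z := l₂ - min δ₀ (l₂ - l₁) / 2 with hz
    have hzI : z ∈ Set.Ioo l₁ l₂ := by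
      constructor
      · have := min_le_right δ₀ (l₂ - l₁); rw [hz]; linarith
      · rw [hz]; linarith
    have hJz : 0 < J (l₂ - z) := by
      apply hJpos
      have h1 : l₂ - z = min δ₀ (l₂ - l₁) / 2 := by rw [hz]; ring
      rw [h1, abs_of_pos (by linarith)]
      have := min_le_left δ₀ (l₂ - l₁); linarith
    have hKpos : 0 < ∫ y in Set.Ioo l₁ l₂, J (l₂ - y) * U y := by
      apply aux_setIntegral_pos _ hl
        ((hJc.comp (continuous_const.sub continuous_id)).continuousOn.mul hUc)
        (fun y hy => mul_nonneg (hJnn _) (hUnn y (Set.Ioo_subset_Icc_self hy))) hzI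
      exact mul_pos hJz (hIooPos z hzI)
    have hVl₂ : 0 < V l₂ := by
      rw [hV]
      simp only [hU2, sub_zero, zero_mul, add_zero]
      exact div_pos (mul_pos hd hKpos) hq
    have hle : V l₂ ≤ 0 := by
      have hslope := hasDerivWithinAt_iff_tendsto_slope.1 hdl₂
      rw [Set.Iic_diff_right] at hslope
      refine le_of_tendsto hslope ?_
      filter_upwards [Ioo_mem_nhdsLT_of_mem (Set.right_mem_Ioc.2 hl)] with x hx
      have hsl : slope U l₂ x = U x / (x - l₂) := by
        rw [slope_def_field, hU2, sub_zero]
      rw [hsl]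
      exact div_nonpos_of_nonneg_of_nonpos (hUnn x (Set.Ioo_subset_Icc_self hx))
        (by linarith [hx.2])
    linarith
  refine ⟨hC1, ?_⟩
  intro x hx
  rcases eq_or_lt_of_le hx.2 with h2 | h2
  · rw [h2]; exact hl₂pos
  · exact hIooPos x ⟨hx.1, h2⟩
end
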